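/- arXiv:2404.11460 — 6 statements merged into one kernel-verified Lean document; each statement's English description precedes it below -/
import Mathlib

section
/- Every trapezoid is n-self-affine for every integer n ≥ 2; that is, for every trapezoid T ⊆ ℝ² and every n ≥ 2 there exist invertible affine maps φ₁, …, φₙ : ℝ² → ℝ² such that the images φ₁(T), …, φₙ(T) form a dissection of T. -/
open Set

/-- A compact set `P ⊆ ℝ²` is `n`-self-affine if there are invertible affine maps
`φ₁, …, φₙ` such that `P = φ₁(P) ∪ ⋯ ∪ φₙ(P)` and the interiors of the `φᵢ(P)`
are pairwise disjoint. -/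
def IsSelfAffine (n : ℕ) (P : Set (ℝ × ℝ)) : Prop :=
  ∃ φ : Fin n → ((ℝ × ℝ) ≃ᵃ[ℝ] (ℝ × ℝ)),
    (⋃ i, φ i '' P) = P ∧
    Pairwise fun i j => Disjoint (interior (φ i '' P)) (interior (φ j '' P))

/-- A convex quadrangle is the convex hull of four points of `ℝ²`, none of which lies
in the convex hull of the other three. -/
def IsConvexQuadrangle (Q : Set (ℝ × ℝ)) : Prop :=
  ∃ a b c d : ℝ × ℝ,
    Q = convexHull ℝ {a, b, c, d} ∧
    a ∉ convexHull ℝ ({b, c, d} : Set (ℝ × ℝ)) ∧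
    b ∉ convexHull ℝ ({a, c, d} : Set (ℝ × ℝ)) ∧
    c ∉ convexHull ℝ ({a, b, d} : Set (ℝ × ℝ)) ∧
    d ∉ convexHull ℝ ({a, b, c} : Set (ℝ × ℝ))

/-- A trapezoid is a convex quadrangle having at least one pair of parallel opposite
sides.  The vertices `a, b, c, d` are in cyclic order (expressed by the crossing of the
diagonals `ac` and `bd`), so the sides are `ab`, `bc`, `cd`, `da`, and a pair of
opposite sides is parallel iff `c - d` is a multiple of `b - a` or `a - d` is a multiple
of `c - b`.  Parallelograms count as trapezoids. -/
def IsTrapezoid (Q : Set (ℝ × ℝ)) : Prop :=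
  ∃ a b c d : ℝ × ℝ,
    Q = convexHull ℝ {a, b, c, d} ∧
    a ∉ convexHull ℝ ({b, c, d} : Set (ℝ × ℝ)) ∧
    b ∉ convexHull ℝ ({a, c, d} : Set (ℝ × ℝ)) ∧
    c ∉ convexHull ℝ ({a, b, d} : Set (ℝ × ℝ)) ∧
    d ∉ convexHull ℝ ({a, b, c} : Set (ℝ × ℝ)) ∧
    (segment ℝ a c ∩ segment ℝ b d).Nonempty ∧
    ((∃ t : ℝ, c - d = t • (b - a)) ∨ (∃ t : ℝ, a - d = t • (c - b)))

/-! ### Auxiliary constructions -/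

noncomputable def linEquiv2 (A B C D : ℝ) (h : A*D - B*C ≠ 0) : (ℝ×ℝ) ≃ₗ[ℝ] (ℝ×ℝ) where
  toFun p := (A*p.1 + B*p.2, C*p.1 + D*p.2)
  invFun p := ((D*p.1 - B*p.2)/(A*D-B*C), (A*p.2 - C*p.1)/(A*D-B*C))
  map_add' p q := by simp [Prod.ext_iff]; constructor <;> ring
  map_smul' r p := by simp [Prod.ext_iff]; constructor <;> ring
  left_inv p := by
    simp only [Prod.ext_iff]
    constructor <;> (rw [div_eq_iff h]; ring)
  right_inv p := by
    simp only [Prod.ext_iff]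
    constructor <;> (rw [mul_div_assoc', mul_div_assoc', ← add_div, div_eq_iff h]; ring)

noncomputable def affEquiv2 (A B C D : ℝ) (h : A*D - B*C ≠ 0) (v : ℝ×ℝ) :
    (ℝ×ℝ) ≃ᵃ[ℝ] (ℝ×ℝ) :=
  (linEquiv2 A B C D h).toAffineEquiv.trans (AffineEquiv.constVAdd ℝ (ℝ×ℝ) v)

lemma affEquiv2_apply (A B C D : ℝ) (h : A*D - B*C ≠ 0) (v : ℝ×ℝ) (p : ℝ×ℝ) :
    affEquiv2 A B C D h v p = (A*p.1 + B*p.2 + v.1, C*p.1 + D*p.2 + v.2) := by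
  simp [affEquiv2, linEquiv2, AffineEquiv.trans_apply, Prod.ext_iff]
  constructor <;> ring

lemma interior_half_le (A B c : ℝ) (hA : A ≠ 0) :
    interior {p : ℝ × ℝ | A*p.1 + B*p.2 ≤ c} = {p : ℝ × ℝ | A*p.1 + B*p.2 < c} := by
  set f : (ℝ×ℝ) →L[ℝ] ℝ :=
    A • ContinuousLinearMap.fst ℝ ℝ ℝ + B • ContinuousLinearMap.snd ℝ ℝ ℝ with hf
  have hfa : ∀ p : ℝ×ℝ, f p = A*p.1 + B*p.2 := by
    intro p; simp [hf]
  have hsurj : Function.Surjective f := by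
    intro y; exact ⟨(y/A, 0), by rw [hfa]; field_simp; ring⟩
  have h1 : {p : ℝ×ℝ | A*p.1 + B*p.2 ≤ c} = f ⁻¹' Set.Iic c := by ext p; simp [hfa]
  have h2 : {p : ℝ×ℝ | A*p.1 + B*p.2 < c} = f ⁻¹' Set.Iio c := by ext p; simp [hfa]
  rw [h1, h2, ← (f.isOpenMap hsurj).preimage_interior_eq_interior_preimage f.continuous,
    interior_Iic]

lemma interior_half_ge (A B c : ℝ) (hA : A ≠ 0) :
    interior {p : ℝ × ℝ | c ≤ A*p.1 + B*p.2} = {p : ℝ × ℝ | c < A*p.1 + B*p.2} := by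
  have h1 : {p : ℝ×ℝ | c ≤ A*p.1 + B*p.2} = {p : ℝ×ℝ | (-A)*p.1 + (-B)*p.2 ≤ -c} := by
    ext p; simp only [mem_setOf_eq]; constructor <;> intro h <;> linarith
  have h2 : {p : ℝ×ℝ | c < A*p.1 + B*p.2} = {p : ℝ×ℝ | (-A)*p.1 + (-B)*p.2 < -c} := by
    ext p; simp only [mem_setOf_eq]; constructor <;> intro h <;> linarith
  rw [h1, h2, interior_half_le _ _ _ (neg_ne_zero.2 hA)]

/-! ### The standard trapezoid -/

def Sset (t : ℝ) : Set (ℝ×ℝ) := {p | 0 ≤ p.2 ∧ p.2 ≤ 1 ∧ 0 ≤ p.1 ∧ p.1 ≤ 1+(t-1)*p.2}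

lemma wpos {t y : ℝ} (ht : 0 < t) (hy0 : 0 ≤ y) (hy1 : y ≤ 1) : 0 < 1 + (t-1)*y := by
  rcases le_total t 1 with h|h
  · nlinarith [mul_nonneg (sub_nonneg.2 hy1) (sub_nonneg.2 h)]
  · nlinarith [mul_nonneg (sub_nonneg.2 h) hy0]

lemma hullS (t : ℝ) (ht : 0 < t) :
    convexHull ℝ {((0:ℝ),(0:ℝ)), (1,0), (t,1), (0,1)} = Sset t := by
  apply le_antisymm
  · apply convexHull_min
    · intro p hp
      simp only [mem_insert_iff, mem_singleton_iff] at hp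
      rcases hp with rfl|rfl|rfl|rfl
      · exact ⟨by norm_num, by norm_num, by norm_num, by norm_num⟩
      · exact ⟨by norm_num, by norm_num, by norm_num, by norm_num⟩
      · exact ⟨by norm_num, by norm_num, ht.le, by norm_num⟩
      · exact ⟨by norm_num, by norm_num, by norm_num, by norm_num; linarith⟩
    · intro p hp q hq α β hα hβ hαβ
      obtain ⟨hp1, hp2, hp3, hp4⟩ := hp
      obtain ⟨hq1, hq2, hq3, hq4⟩ := hq
      refine ⟨?_, ?_, ?_, ?_⟩ <;>
        simp only [Prod.fst_add, Prod.snd_add, Prod.smul_fst, Prod.smul_snd, smul_eq_mul]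
      · nlinarith
      · nlinarith
      · nlinarith
      · nlinarith [mul_le_mul_of_nonneg_left hp4 hα, mul_le_mul_of_nonneg_left hq4 hβ]
  · intro p hp
    obtain ⟨hy0, hy1, hx0, hx1⟩ := hp
    set w : ℝ := 1 + (t-1)*p.2 with hw
    have hwpos : 0 < w := wpos ht hy0 hy1
    set V : Set (ℝ×ℝ) := ({((0:ℝ),(0:ℝ)), (1,0), (t,1), (0,1)} : Set (ℝ×ℝ)) with hV
    set K : Set (ℝ×ℝ) := convexHull ℝ V with hK
    have hKc : Convex ℝ K := convex_convexHull ℝ _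
    have m1 : ((0:ℝ),(0:ℝ)) ∈ K := subset_convexHull ℝ _ (by simp [hV])
    have m2 : ((1:ℝ),(0:ℝ)) ∈ K := subset_convexHull ℝ _ (by simp [hV])
    have m3 : ((t:ℝ),(1:ℝ)) ∈ K := subset_convexHull ℝ _ (by simp [hV])
    have m4 : ((0:ℝ),(1:ℝ)) ∈ K := subset_convexHull ℝ _ (by simp [hV])
    have hA : ((0:ℝ), p.2) ∈ K := by
      apply hKc.segment_subset m1 m4
      exact ⟨1 - p.2, p.2, by linarith, hy0, by ring, by
        simp only [Prod.ext_iff, Prod.smul_fst, Prod.smul_snd, Prod.fst_add, Prod.snd_add,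
          smul_eq_mul]
        constructor <;> ring⟩
    have hB : (w, p.2) ∈ K := by
      apply hKc.segment_subset m2 m3
      exact ⟨1 - p.2, p.2, by linarith, hy0, by ring, by
        simp only [Prod.ext_iff, Prod.smul_fst, Prod.smul_snd, Prod.fst_add, Prod.snd_add,
          smul_eq_mul]
        constructor
        · rw [hw]; ring
        · ring⟩
    apply hKc.segment_subset hA hB
    refine ⟨1 - p.1/w, p.1/w, ?_, div_nonneg hx0 hwpos.le, by ring, ?_⟩
    · rw [sub_nonneg]; exact div_le_one_of_le₀ hx1 hwpos.le
    · simp only [Prod.ext_iff, Prod.smul_fst, Prod.smul_snd, Prod.fst_add, Prod.snd_add,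
        smul_eq_mul]
      constructor
      · field_simp; ring
      · ring

lemma std (t : ℝ) (ht : 0 < t) (n : ℕ) (hn : 2 ≤ n) : IsSelfAffine n (Sset t) := by
  have hn0 : (0:ℝ) < n := by
    have : 0 < n := by omega
    exact_mod_cast this
  have hnne : (n:ℝ) ≠ 0 := ne_of_gt hn0
  set φ : Fin n → ((ℝ×ℝ) ≃ᵃ[ℝ] (ℝ×ℝ)) := fun i =>
    affEquiv2 (1/n) (((i:ℕ):ℝ)*(t-1)/n) 0 1
      (by simp [hnne]) (((i:ℕ):ℝ)/n, 0) with hφ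
  have haff : ∀ (i : Fin n) (q : ℝ×ℝ),
      φ i q = ((q.1 + ((i:ℕ):ℝ)*(1+(t-1)*q.2))/n, q.2) := by
    intro i q
    rw [hφ]
    rw [affEquiv2_apply]
    refine Prod.ext ?_ ?_
    · show (1/n)*q.1 + (((i:ℕ):ℝ)*(t-1)/n)*q.2 + ((i:ℕ):ℝ)/n = _
      field_simp
      ring
    · show 0*q.1 + 1*q.2 + 0 = q.2
      ring
  have himg : ∀ (i : Fin n) (p : ℝ×ℝ), p ∈ ⇑(φ i) '' Sset t ↔
      (0 ≤ p.2 ∧ p.2 ≤ 1 ∧ ((i:ℕ):ℝ)*(1+(t-1)*p.2) ≤ n*p.1 ∧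
        (n:ℝ)*p.1 ≤ (((i:ℕ):ℝ)+1)*(1+(t-1)*p.2)) := by
    intro i p
    constructor
    · rintro ⟨q, ⟨h1, h2, h3, h4⟩, rfl⟩
      rw [haff]
      have hmul : (n:ℝ)*((q.1 + ((i:ℕ):ℝ)*(1+(t-1)*q.2))/n) = q.1 + ((i:ℕ):ℝ)*(1+(t-1)*q.2) := by
        field_simp
      refine ⟨h1, h2, ?_, ?_⟩
      · show ((i:ℕ):ℝ)*(1+(t-1)*q.2) ≤ (n:ℝ)*((q.1 + ((i:ℕ):ℝ)*(1+(t-1)*q.2))/n)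
        rw [hmul]; linarith
      · show (n:ℝ)*((q.1 + ((i:ℕ):ℝ)*(1+(t-1)*q.2))/n) ≤ _
        rw [hmul]; nlinarith
    · rintro ⟨h1, h2, h3, h4⟩
      refine ⟨((n:ℝ)*p.1 - ((i:ℕ):ℝ)*(1+(t-1)*p.2), p.2), ⟨h1, h2,
        (by show (0:ℝ) ≤ (n:ℝ)*p.1 - ((i:ℕ):ℝ)*(1+(t-1)*p.2); linarith),
        (by show (n:ℝ)*p.1 - ((i:ℕ):ℝ)*(1+(t-1)*p.2) ≤ 1+(t-1)*p.2; nlinarith)⟩, ?_⟩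
      rw [haff]
      refine Prod.ext ?_ rfl
      show ((n:ℝ)*p.1 - ((i:ℕ):ℝ)*(1+(t-1)*p.2) + ((i:ℕ):ℝ)*(1+(t-1)*p.2))/n = p.1
      field_simp; ring
  refine ⟨φ, ?_, ?_⟩
  · ext p
    simp only [mem_iUnion]
    constructor
    · rintro ⟨i, hi⟩
      rw [himg i p] at hi
      obtain ⟨h1, h2, h3, h4⟩ := hi
      have hw := wpos ht h1 h2
      have hi1 : ((i:ℕ):ℝ) + 1 ≤ n := by exact_mod_cast i.isLt
      have hx0 : 0 ≤ p.1 := by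
        have h0 : (0:ℝ) ≤ (n:ℝ)*p.1 :=
          le_trans (mul_nonneg (Nat.cast_nonneg _) hw.le) h3
        have := div_nonneg h0 hn0.le
        rwa [mul_div_cancel_left₀ _ hnne] at this
      refine ⟨h1, h2, hx0, ?_⟩
      have h5 : (((i:ℕ):ℝ)+1)*(1+(t-1)*p.2) ≤ (n:ℝ)*(1+(t-1)*p.2) :=
        mul_le_mul_of_nonneg_right hi1 hw.le
      have := le_trans h4 h5
      exact le_of_mul_le_mul_left this hn0
    · rintro ⟨h1, h2, h3, h4⟩
      have hw := wpos ht h1 h2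
      set w : ℝ := 1+(t-1)*p.2 with hwdef
      set r : ℝ := (n:ℝ)*p.1/w with hr
      have hr0 : 0 ≤ r := div_nonneg (mul_nonneg hn0.le h3) hw.le
      have hrn : r ≤ n := by
        rw [hr, div_le_iff₀ hw]
        nlinarith
      set k : ℕ := min (n-1) ⌊r⌋₊ with hk
      have hk1 : k ≤ n - 1 := min_le_left _ _
      have hkn : k < n := by omega
      refine ⟨⟨k, hkn⟩, ?_⟩
      rw [himg]
      have hcoe : (((⟨k, hkn⟩ : Fin n) : ℕ) : ℝ) = (k:ℝ) := rfl
      rw [hcoe]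
      have hlow : (k:ℝ) ≤ r := by
        calc (k:ℝ) ≤ (⌊r⌋₊ : ℝ) := by exact_mod_cast min_le_right _ _
        _ ≤ r := Nat.floor_le hr0
      have hup : r ≤ (k:ℝ) + 1 := by
        rcases le_total (⌊r⌋₊) (n-1) with h|h
        · have hke : k = ⌊r⌋₊ := min_eq_right h
          rw [hke]
          exact (Nat.lt_floor_add_one r).le
        · have hke : k = n - 1 := min_eq_left h
          rw [hke]
          have h1n : (((n-1:ℕ)):ℝ) = (n:ℝ) - 1 := by
            have : 1 ≤ n := by omega
            push_cast [this]
            ring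
          rw [h1n]; linarith
      refine ⟨h1, h2, ?_, ?_⟩
      · have h := (le_div_iff₀ hw).mp hlow
        rw [← hwdef]
        exact h
      · have h := (div_le_iff₀ hw).mp hup
        rw [← hwdef]
        exact h
  · have key : ∀ i j : Fin n, (i:ℕ) < (j:ℕ) →
        Disjoint (interior (⇑(φ i) '' Sset t)) (interior (⇑(φ j) '' Sset t)) := by
      intro i j hij
      rw [Set.disjoint_left]
      intro p hpi hpj
      have hpi' := interior_subset hpi
      rw [himg] at hpi'
      obtain ⟨h1, h2, _, _⟩ := hpi'
      have hw := wpos ht h1 h2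
      have hsub1 : ⇑(φ i) '' Sset t ⊆
          {q : ℝ×ℝ | (n:ℝ)*q.1 + (-((((i:ℕ):ℝ)+1)*(t-1)))*q.2 ≤ ((i:ℕ):ℝ)+1} := by
        intro q hq
        rw [himg] at hq
        obtain ⟨_, _, _, h4⟩ := hq
        simp only [mem_setOf_eq]
        nlinarith
      have hsub2 : ⇑(φ j) '' Sset t ⊆
          {q : ℝ×ℝ | ((j:ℕ):ℝ) ≤ (n:ℝ)*q.1 + (-(((j:ℕ):ℝ)*(t-1)))*q.2} := by
        intro q hq
        rw [himg] at hq
        obtain ⟨_, _, h3, _⟩ := hq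
        simp only [mem_setOf_eq]
        nlinarith
      have e1 := interior_mono hsub1 hpi
      rw [interior_half_le _ _ _ hnne] at e1
      have e2 := interior_mono hsub2 hpj
      rw [interior_half_ge _ _ _ hnne] at e2
      simp only [mem_setOf_eq] at e1 e2
      have hij' : ((i:ℕ):ℝ) + 1 ≤ ((j:ℕ):ℝ) := by exact_mod_cast hij
      nlinarith [mul_le_mul_of_nonneg_right hij' hw.le]
    intro i j hij
    have hne : (i:ℕ) ≠ (j:ℕ) := fun h => hij (Fin.val_injective h)
    rcases hne.lt_or_gt with h|h
    · exact key i j h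
    · exact (key j i h).symm

lemma transport {n : ℕ} (E : (ℝ×ℝ) ≃ᵃ[ℝ] (ℝ×ℝ)) {P : Set (ℝ×ℝ)}
    (h : IsSelfAffine n P) : IsSelfAffine n (⇑E '' P) := by
  obtain ⟨φ, hU, hD⟩ := h
  have hsym : ∀ X : Set (ℝ×ℝ), ⇑E.symm '' (⇑E '' X) = X := by
    intro X
    ext p
    constructor
    · rintro ⟨q, ⟨r, hr, rfl⟩, rfl⟩
      simpa [E.symm_apply_apply] using hr
    · intro hp
      exact ⟨E p, ⟨p, hp, rfl⟩, E.symm_apply_apply p⟩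
  let Eh : (ℝ×ℝ) ≃ₜ (ℝ×ℝ) :=
    { toEquiv := E.toEquiv
      continuous_toFun := E.toAffineMap.continuous_of_finiteDimensional
      continuous_invFun := E.symm.toAffineMap.continuous_of_finiteDimensional }
  have hEh : ⇑Eh = ⇑E := rfl
  have himg : ∀ i : Fin n, ⇑((E.symm.trans (φ i)).trans E) '' (⇑E '' P)
      = ⇑E '' (⇑(φ i) '' P) := by
    intro i
    rw [AffineEquiv.coe_trans, AffineEquiv.coe_trans, Set.image_comp, Set.image_comp, hsym]
  refine ⟨fun i => (E.symm.trans (φ i)).trans E, ?_, ?_⟩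
  · rw [iUnion_congr himg, ← Set.image_iUnion, hU]
  · intro i j hij
    rw [himg, himg, ← hEh, ← Homeomorph.image_interior, ← Homeomorph.image_interior]
    exact (Set.disjoint_image_iff Eh.injective).mpr (hD hij)

lemma seg_comp (α β : ℝ) {x y z : ℝ×ℝ} (h0 : 0 ≤ α) (h1 : 0 ≤ β) (hs : α + β = 1)
    (hx : α*x.1 + β*y.1 = z.1) (hy : α*x.2 + β*y.2 = z.2) : z ∈ segment ℝ x y := by
  refine ⟨α, β, h0, h1, hs, ?_⟩
  refine Prod.ext ?_ ?_
  · simpa using hx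
  · simpa using hy

lemma collin_contra (a b c d : ℝ×ℝ) (s : ℝ) (hv : d - a = s • (b - a))
    (ha : a ∉ convexHull ℝ ({b, c, d} : Set (ℝ×ℝ)))
    (hb : b ∉ convexHull ℝ ({a, c, d} : Set (ℝ×ℝ)))
    (hd : d ∉ convexHull ℝ ({a, b, c} : Set (ℝ×ℝ))) : False := by
  have h1 : d.1 - a.1 = s*(b.1 - a.1) := by
    have := congrArg Prod.fst hv
    simpa using this
  have h2 : d.2 - a.2 = s*(b.2 - a.2) := by
    have := congrArg Prod.snd hv
    simpa using this
  rcases le_total s 0 with hs|hs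
  · -- a ∈ segment b d
    have hne : (0:ℝ) < 1 - s := by linarith
    refine ha ((convex_convexHull ℝ _).segment_subset
      (subset_convexHull ℝ _ (by simp)) (subset_convexHull ℝ _ (by simp))
      (seg_comp (-s/(1-s)) (1/(1-s)) (x := b) (y := d) (z := a)
        (div_nonneg (by linarith) hne.le)
        (div_nonneg (by norm_num) hne.le) ?_ ?_ ?_))
    · field_simp
      ring
    · field_simp
      linear_combination h1
    · field_simp
      linear_combination h2
  · rcases le_total s 1 with hs1|hs1
    · -- d ∈ segment a b
      refine hd ((convex_convexHull ℝ _).segment_subset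
        (subset_convexHull ℝ _ (by simp)) (subset_convexHull ℝ _ (by simp))
        (seg_comp (1-s) s (x := a) (y := b) (z := d)
          (by linarith) hs (by ring) ?_ ?_))
      · linear_combination -h1
      · linear_combination -h2
    · -- b ∈ segment a d
      have hs0 : (0:ℝ) < s := by linarith
      refine hb ((convex_convexHull ℝ _).segment_subset
        (subset_convexHull ℝ _ (by simp)) (subset_convexHull ℝ _ (by simp))
        (seg_comp (1-1/s) (1/s) (x := a) (y := d) (z := b)
          (by rw [sub_nonneg, div_le_one hs0]; linarith)
          (by positivity) (by field_simp; ring) ?_ ?_))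
      · field_simp
        linear_combination h1
      · field_simp
        linear_combination h2

lemma set3_reorder (x y z : ℝ×ℝ) : ({x, y, z} : Set (ℝ×ℝ)) = {z, y, x} := by
  ext p; simp; tauto

lemma indep (a b c d : ℝ×ℝ)
    (ha : a ∉ convexHull ℝ ({b, c, d} : Set (ℝ×ℝ)))
    (hb : b ∉ convexHull ℝ ({a, c, d} : Set (ℝ×ℝ)))
    (hd : d ∉ convexHull ℝ ({a, b, c} : Set (ℝ×ℝ))) :
    (b.1-a.1)*(d.2-a.2) - (d.1-a.1)*(b.2-a.2) ≠ 0 := by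
  intro h0
  by_cases hu1 : b.1 - a.1 ≠ 0
  · refine collin_contra a b c d ((d.1-a.1)/(b.1-a.1)) ?_ ha hb hd
    refine Prod.ext ?_ ?_
    · simp only [Prod.fst_sub, Prod.smul_fst, smul_eq_mul]
      field_simp
    · simp only [Prod.snd_sub, Prod.smul_snd, smul_eq_mul]
      field_simp
      linear_combination h0
  · push_neg at hu1
    by_cases hu2 : b.2 - a.2 ≠ 0
    · refine collin_contra a b c d ((d.2-a.2)/(b.2-a.2)) ?_ ha hb hd
      refine Prod.ext ?_ ?_
      · simp only [Prod.fst_sub, Prod.smul_fst, smul_eq_mul]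
        field_simp
        linear_combination -h0
      · simp only [Prod.snd_sub, Prod.smul_snd, smul_eq_mul]
        field_simp
    · push_neg at hu2
      have hba : b = a := by
        refine Prod.ext ?_ ?_ <;> linarith [hu1, hu2]
      apply hb
      rw [hba]
      exact subset_convexHull ℝ _ (by simp)

lemma tpos (a b c d : ℝ×ℝ) (t : ℝ) (hpar : c - d = t • (b - a))
    (hdet : (b.1-a.1)*(d.2-a.2) - (d.1-a.1)*(b.2-a.2) ≠ 0)
    (hd : d ∉ convexHull ℝ ({a, b, c} : Set (ℝ×ℝ)))
    (hcross : (segment ℝ a c ∩ segment ℝ b d).Nonempty) : 0 < t := by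
  have hp1 : c.1 - d.1 = t*(b.1 - a.1) := by
    have := congrArg Prod.fst hpar; simpa using this
  have hp2 : c.2 - d.2 = t*(b.2 - a.2) := by
    have := congrArg Prod.snd hpar; simpa using this
  have htne : t ≠ 0 := by
    intro h
    apply hd
    have hcd : c = d := by
      refine Prod.ext ?_ ?_ <;> (rw [h] at hp1 hp2; simp at hp1 hp2; linarith)
    rw [← hcd]
    exact subset_convexHull ℝ _ (by simp)
  rcases lt_or_gt_of_ne htne with hneg|hpos
  · exfalso
    obtain ⟨p, ⟨α1, β1, hα1, hβ1, hs1, he1⟩, ⟨α2, β2, hα2, hβ2, hs2, he2⟩⟩ := hcross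
    have e11 : α1*a.1 + β1*c.1 = p.1 := by
      have := congrArg Prod.fst he1; simpa using this
    have e12 : α1*a.2 + β1*c.2 = p.2 := by
      have := congrArg Prod.snd he1; simpa using this
    have e21 : α2*b.1 + β2*d.1 = p.1 := by
      have := congrArg Prod.fst he2; simpa using this
    have e22 : α2*b.2 + β2*d.2 = p.2 := by
      have := congrArg Prod.snd he2; simpa using this
    set X : ℝ := β1*t - α2 with hX
    set Y : ℝ := β1 - β2 with hY
    have eq1 : X*(b.1-a.1) + Y*(d.1-a.1) = 0 := by
      linear_combination e11 - e21 - β1 * hp1 + a.1 * hs2 - a.1 * hs1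
    have eq2 : X*(b.2-a.2) + Y*(d.2-a.2) = 0 := by
      linear_combination e12 - e22 - β1 * hp2 + a.2 * hs2 - a.2 * hs1
    have hX0 : X = 0 := by
      have : X * ((b.1-a.1)*(d.2-a.2) - (d.1-a.1)*(b.2-a.2)) = 0 := by
        linear_combination (d.2-a.2) * eq1 - (d.1-a.1) * eq2
      exact (mul_eq_zero.mp this).resolve_right hdet
    have hY0 : Y = 0 := by
      have : Y * ((b.1-a.1)*(d.2-a.2) - (d.1-a.1)*(b.2-a.2)) = 0 := by
        linear_combination (b.1-a.1) * eq2 - (b.2-a.2) * eq1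
      exact (mul_eq_zero.mp this).resolve_right hdet
    -- β1*t = α2, β1 = β2, α1+β1 = 1, α2+β2 = 1, t < 0
    have hβt : β1 * t = α2 := by rw [hX] at hX0; linarith
    have hββ : β1 = β2 := by rw [hY] at hY0; linarith
    nlinarith [mul_nonneg hβ1 (neg_nonneg.2 hneg.le)]
  · exact hpos

lemma main_case1 (n : ℕ) (hn : 2 ≤ n) (a b c d : ℝ×ℝ)
    (ha : a ∉ convexHull ℝ ({b, c, d} : Set (ℝ×ℝ)))
    (hb : b ∉ convexHull ℝ ({a, c, d} : Set (ℝ×ℝ)))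
    (hd : d ∉ convexHull ℝ ({a, b, c} : Set (ℝ×ℝ)))
    (hcross : (segment ℝ a c ∩ segment ℝ b d).Nonempty)
    (t : ℝ) (hpar : c - d = t • (b - a)) :
    IsSelfAffine n (convexHull ℝ ({a, b, c, d} : Set (ℝ×ℝ))) := by
  have hdet := indep a b c d ha hb hd
  have ht := tpos a b c d t hpar hdet hd hcross
  have hp1 : c.1 - d.1 = t*(b.1 - a.1) := by
    have := congrArg Prod.fst hpar; simpa using this
  have hp2 : c.2 - d.2 = t*(b.2 - a.2) := by
    have := congrArg Prod.snd hpar; simpa using this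
  set E : (ℝ×ℝ) ≃ᵃ[ℝ] (ℝ×ℝ) :=
    affEquiv2 (b.1-a.1) (d.1-a.1) (b.2-a.2) (d.2-a.2) hdet a with hE
  have hEa : E ((0:ℝ),(0:ℝ)) = a := by
    rw [hE, affEquiv2_apply]
    refine Prod.ext ?_ ?_ <;> simp
  have hEb : E ((1:ℝ),(0:ℝ)) = b := by
    rw [hE, affEquiv2_apply]
    refine Prod.ext ?_ ?_ <;> simp <;> ring
  have hEc : E ((t:ℝ),(1:ℝ)) = c := by
    rw [hE, affEquiv2_apply]
    refine Prod.ext ?_ ?_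
    · show (b.1-a.1)*t + (d.1-a.1)*1 + a.1 = c.1
      linear_combination -hp1
    · show (b.2-a.2)*t + (d.2-a.2)*1 + a.2 = c.2
      linear_combination -hp2
  have hEd : E ((0:ℝ),(1:ℝ)) = d := by
    rw [hE, affEquiv2_apply]
    refine Prod.ext ?_ ?_ <;> simp <;> ring
  have hT : convexHull ℝ ({a, b, c, d} : Set (ℝ×ℝ)) = ⇑E '' Sset t := by
    rw [← hullS t ht, show ⇑E = ⇑E.toAffineMap from rfl, AffineMap.image_convexHull]
    congr 1
    rw [Set.image_insert_eq, Set.image_insert_eq, Set.image_insert_eq, Set.image_singleton]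
    rw [show ⇑E.toAffineMap = ⇑E from rfl, hEa, hEb, hEc, hEd]
  rw [hT]
  exact transport E (std t ht n hn)

/-- Every trapezoid is `n`-self-affine for every integer `n ≥ 2`. -/
theorem trapezoid_self_affine (T : Set (ℝ × ℝ)) (hT : IsTrapezoid T)
    (n : ℕ) (hn : 2 ≤ n) : IsSelfAffine n T := by
  obtain ⟨a, b, c, d, hQ, ha, hb, hc, hd, hcross, hpar⟩ := hT
  rcases hpar with ⟨t, hp⟩ | ⟨t, hp⟩
  · rw [hQ]
    exact main_case1 n hn a b c d ha hb hd hcross t hp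
  · rw [hQ, show ({a, b, c, d} : Set (ℝ×ℝ)) = {b, c, d, a} from by ext p; simp; tauto]
    apply main_case1 n hn b c d a
    · rwa [show ({c, d, a} : Set (ℝ×ℝ)) = {a, c, d} from by ext p; simp; tauto]
    · rwa [show ({b, d, a} : Set (ℝ×ℝ)) = {a, b, d} from by ext p; simp; tauto]
    · exact ha
    · obtain ⟨p, h1, h2⟩ := hcross
      exact ⟨p, h2, (segment_symm ℝ a c) ▸ h1⟩
    · show d - a = (-t) • (c - b)
      rw [neg_smul, ← hp, neg_sub]
end

section
/- For all real numbers α₁, β₁, α₂, β₂ with 0 < α₁ < β₁ < 1 and 0 < α₂ < β₂ < 1, the quadrangle Q(α₁α₂, β₁β₂) admits a dissection into two pieces, one affinely equivalent to Q(α₁, β₁) and the other affinely equivalent to Q(α₂, β₂). -/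
open Set

/-- For `0 < α < β < 1`, `Qab α β` is the convex quadrangle `Q(α,β)` with vertices
`a = (0,0)`, `b = (1−α,0)`, `c = (1−β, 1−(1−β)/(1−α))`, `d = (0, 1−α(1−β)/((1−α)β))`. -/
noncomputable def Qab (α β : ℝ) : Set (ℝ × ℝ) :=
  convexHull ℝ {((0 : ℝ), (0 : ℝ)), (1 - α, 0), (1 - β, 1 - (1 - β) / (1 - α)),
    (0, 1 - α * (1 - β) / ((1 - α) * β))}

/-- For `0 < γ < 1`, `Tg γ` is the trapezoid `T(γ)` with vertices
`(0,0)`, `(1,0)`, `(γ,1)`, `(0,1)`. -/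
noncomputable def Tg (γ : ℝ) : Set (ℝ × ℝ) :=
  convexHull ℝ {((0 : ℝ), (0 : ℝ)), (1, 0), (γ, 1), (0, 1)}

/-- `B` is the image of `A` under an invertible affine map of the plane,
i.e. `A` and `B` are affinely equivalent. -/
def AffineCopy (A B : Set (ℝ × ℝ)) : Prop :=
  ∃ φ : (ℝ × ℝ) ≃ᵃ[ℝ] (ℝ × ℝ), φ '' A = B


set_option linter.unnecessarySeqFocus false


/-- linear map (x,y) ↦ (p x + q y, r y) -/
noncomputable def tri (p q r : ℝ) : (ℝ × ℝ) →ₗ[ℝ] (ℝ × ℝ) :=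
  LinearMap.prod (p • LinearMap.fst ℝ ℝ ℝ + q • LinearMap.snd ℝ ℝ ℝ)
    (r • LinearMap.snd ℝ ℝ ℝ)

lemma tri_apply (p q r x y : ℝ) : tri p q r (x, y) = (p*x + q*y, r*y) := by
  simp [tri, smul_eq_mul]

noncomputable def triEquiv (p q r : ℝ) (hp : p ≠ 0) (hr : r ≠ 0) : (ℝ × ℝ) ≃ₗ[ℝ] (ℝ × ℝ) :=
  LinearEquiv.ofLinear (tri p q r) (tri p⁻¹ (-q/(p*r)) r⁻¹)
    (by
      apply LinearMap.ext
      rintro ⟨x, y⟩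
      simp only [LinearMap.comp_apply, tri_apply, LinearMap.id_apply]
      refine Prod.ext ?_ ?_ <;> simp <;> field_simp <;> ring)
    (by
      apply LinearMap.ext
      rintro ⟨x, y⟩
      simp only [LinearMap.comp_apply, tri_apply, LinearMap.id_apply]
      refine Prod.ext ?_ ?_ <;> simp <;> field_simp <;> ring)

noncomputable def triAff (t : ℝ × ℝ) (p q r : ℝ) (hp : p ≠ 0) (hr : r ≠ 0) :
    (ℝ × ℝ) ≃ᵃ[ℝ] (ℝ × ℝ) :=
  (triEquiv p q r hp hr).toAffineEquiv.trans (AffineEquiv.constVAdd ℝ (ℝ × ℝ) t)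

lemma triAff_apply (t : ℝ × ℝ) (p q r : ℝ) (hp : p ≠ 0) (hr : r ≠ 0) (x y : ℝ) :
    triAff t p q r hp hr (x, y) = (t.1 + (p*x + q*y), t.2 + r*y) := by
  simp [triAff, triEquiv, tri_apply, AffineEquiv.constVAdd_apply, Prod.ext_iff]



private lemma combo_le {r s x y c : ℝ} (hr : 0 ≤ r) (hs : 0 ≤ s) (hrs : r + s = 1)
    (hx : x ≤ c) (hy : y ≤ c) : r*x + s*y ≤ c := by
  have h1 : r*x ≤ r*c := mul_le_mul_of_nonneg_left hx hr
  have h2 : s*y ≤ s*c := mul_le_mul_of_nonneg_left hy hs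
  have h3 : r*c + s*c = c := by linear_combination c * hrs
  linarith

private lemma combo_lt {r s x y c : ℝ} (hr : 0 ≤ r) (hs : 0 ≤ s) (hrs : r + s = 1)
    (hx : x < c) (hy : y < c) : r*x + s*y < c := by
  rcases eq_or_lt_of_le hr with h | h
  · have hs1 : s = 1 := by linarith
    rw [← h, hs1]; linarith
  · have h1 : r*x < r*c := mul_lt_mul_of_pos_left hx h
    have h2 : s*y ≤ s*c := mul_le_mul_of_nonneg_left hy.le hs
    have h3 : r*c + s*c = c := by linear_combination c * hrs
    linarith

private lemma combo_gt {r s x y c : ℝ} (hr : 0 ≤ r) (hs : 0 ≤ s) (hrs : r + s = 1)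
    (hx : c < x) (hy : c < y) : c < r*x + s*y := by
  have := combo_lt hr hs hrs (neg_lt_neg hx) (neg_lt_neg hy)
  nlinarith [this]

set_option maxHeartbeats 1000000 in
private lemma split_lemma (a b c d u v : ℝ × ℝ) (L M N : (ℝ × ℝ) → ℝ) (lc nc : ℝ)
    (haffL : ∀ (p q : ℝ × ℝ) (r s : ℝ), r + s = 1 → L (r • p + s • q) = r * L p + s * L q)
    (haffM : ∀ (p q : ℝ × ℝ) (r s : ℝ), r + s = 1 → M (r • p + s • q) = r * M p + s * M q)
    (haffN : ∀ (p q : ℝ × ℝ) (r s : ℝ), r + s = 1 → N (r • p + s • q) = r * N p + s * N q)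
    (hinj : ∀ p q : ℝ × ℝ, L p = L q → M p = M q → p = q)
    (hu : u ∈ segment ℝ a b) (hv : v ∈ segment ℝ d c)
    (hLa : L a < lc) (hLb : lc < L b) (hLc : lc < L c) (hLd : L d < lc)
    (hLu : L u = lc) (hLv : L v = lc)
    (hMa : 0 ≤ M a) (hMb : 0 ≤ M b) (hMc : 0 ≤ M c) (hMd : 0 ≤ M d)
    (hMu : M u = 0) (hMv : 0 < M v)
    (hNa : N a ≤ nc) (hNb : N b ≤ nc) (hNc : N c ≤ nc) (hNd : N d ≤ nc)
    (hNu : N u < nc) (hNv : N v = nc) :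
    convexHull ℝ ({a, b, c, d} : Set (ℝ × ℝ)) =
      convexHull ℝ ({a, u, v, d} : Set (ℝ × ℝ)) ∪ convexHull ℝ ({u, b, c, v} : Set (ℝ × ℝ)) := by
  have haIn : a ∈ convexHull ℝ ({a, b, c, d} : Set (ℝ × ℝ)) := subset_convexHull _ _ (by simp)
  have hbIn : b ∈ convexHull ℝ ({a, b, c, d} : Set (ℝ × ℝ)) := subset_convexHull _ _ (by simp)
  have hcIn : c ∈ convexHull ℝ ({a, b, c, d} : Set (ℝ × ℝ)) := subset_convexHull _ _ (by simp)
  have hdIn : d ∈ convexHull ℝ ({a, b, c, d} : Set (ℝ × ℝ)) := subset_convexHull _ _ (by simp)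
  have hQconv := convex_convexHull ℝ ({a, b, c, d} : Set (ℝ × ℝ))
  have hP1conv := convex_convexHull ℝ ({a, u, v, d} : Set (ℝ × ℝ))
  have hP2conv := convex_convexHull ℝ ({u, b, c, v} : Set (ℝ × ℝ))
  have huIn : u ∈ convexHull ℝ ({a, b, c, d} : Set (ℝ × ℝ)) :=
    hQconv.segment_subset haIn hbIn hu
  have haP1 : a ∈ convexHull ℝ ({a, u, v, d} : Set (ℝ × ℝ)) := subset_convexHull _ _ (by simp)
  have huP1 : u ∈ convexHull ℝ ({a, u, v, d} : Set (ℝ × ℝ)) := subset_convexHull _ _ (by simp)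
  have hvP1 : v ∈ convexHull ℝ ({a, u, v, d} : Set (ℝ × ℝ)) := subset_convexHull _ _ (by simp)
  have hdP1 : d ∈ convexHull ℝ ({a, u, v, d} : Set (ℝ × ℝ)) := subset_convexHull _ _ (by simp)
  have huP2 : u ∈ convexHull ℝ ({u, b, c, v} : Set (ℝ × ℝ)) := subset_convexHull _ _ (by simp)
  have hbP2 : b ∈ convexHull ℝ ({u, b, c, v} : Set (ℝ × ℝ)) := subset_convexHull _ _ (by simp)
  have hcP2 : c ∈ convexHull ℝ ({u, b, c, v} : Set (ℝ × ℝ)) := subset_convexHull _ _ (by simp)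
  have hvP2 : v ∈ convexHull ℝ ({u, b, c, v} : Set (ℝ × ℝ)) := subset_convexHull _ _ (by simp)
  have hvIn : v ∈ convexHull ℝ ({a, b, c, d} : Set (ℝ × ℝ)) :=
    hQconv.segment_subset hdIn hcIn hv
  apply Set.Subset.antisymm
  · intro x hx
    have hsplit : ({a, b, c, d} : Set (ℝ × ℝ)) = {a, d} ∪ {b, c} := by
      ext p
      simp only [Set.mem_insert_iff, Set.mem_singleton_iff, Set.mem_union]
      tauto
    rw [hsplit, convexHull_union (Set.insert_nonempty _ _) (Set.insert_nonempty _ _),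
      mem_convexJoin] at hx
    obtain ⟨y, hy, z, hz, hxyz⟩ := hx
    rw [convexHull_pair] at hy hz
    obtain ⟨r1, s1, hr1, hs1, hrs1, hy_eq⟩ := hy
    obtain ⟨r2, s2, hr2, hs2, hrs2, hz_eq⟩ := hz
    obtain ⟨r, s, hr, hs, hrs, hx_eq⟩ := hxyz
    have hLy : L y < lc := by
      rw [← hy_eq, haffL a d r1 s1 hrs1]; exact combo_lt hr1 hs1 hrs1 hLa hLd
    have hLz : lc < L z := by
      rw [← hz_eq, haffL b c r2 s2 hrs2]; exact combo_gt hr2 hs2 hrs2 hLb hLc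
    have hMy : 0 ≤ M y := by
      rw [← hy_eq, haffM a d r1 s1 hrs1]
      exact add_nonneg (mul_nonneg hr1 hMa) (mul_nonneg hs1 hMd)
    have hMz : 0 ≤ M z := by
      rw [← hz_eq, haffM b c r2 s2 hrs2]
      exact add_nonneg (mul_nonneg hr2 hMb) (mul_nonneg hs2 hMc)
    have hNy : N y ≤ nc := by
      rw [← hy_eq, haffN a d r1 s1 hrs1]; exact combo_le hr1 hs1 hrs1 hNa hNd
    have hNz : N z ≤ nc := by
      rw [← hz_eq, haffN b c r2 s2 hrs2]; exact combo_le hr2 hs2 hrs2 hNb hNc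
    have hden : 0 < L z - L y := by linarith
    have hdne : L z - L y ≠ 0 := ne_of_gt hden
    obtain ⟨τ, hτ⟩ : ∃ τ : ℝ, τ = (lc - L y) / (L z - L y) := ⟨_, rfl⟩
    have hτ0 : 0 < τ := by rw [hτ]; exact div_pos (by linarith) hden
    have hτ1 : τ < 1 := by rw [hτ, div_lt_one hden]; linarith
    have hkey : L y + τ * (L z - L y) = lc := by
      rw [hτ]; field_simp; ring
    obtain ⟨w, hwdef⟩ : ∃ w : ℝ × ℝ, w = (1 - τ) • y + τ • z := ⟨_, rfl⟩
    have hLw : L w = lc := by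
      rw [hwdef, haffL y z _ _ (by ring)]; linear_combination hkey
    have hMw : 0 ≤ M w := by
      rw [hwdef, haffM y z _ _ (by ring)]
      exact add_nonneg (mul_nonneg (by linarith) hMy) (mul_nonneg hτ0.le hMz)
    have hNw : N w ≤ nc := by
      rw [hwdef, haffN y z _ _ (by ring)]
      exact combo_le (by linarith) hτ0.le (by ring) hNy hNz
    obtain ⟨θ, hθ⟩ : ∃ θ : ℝ, θ = M w / M v := ⟨_, rfl⟩
    have hθ0 : 0 ≤ θ := by rw [hθ]; exact div_nonneg hMw hMv.le
    have hθMv : θ * M v = M w := by rw [hθ]; field_simp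
    have hwuv : w = (1 - θ) • u + θ • v := by
      apply hinj
      · rw [haffL u v _ _ (by ring), hLu, hLv, hLw]; ring
      · rw [haffM u v _ _ (by ring), hMu]; linarith [hθMv]
    have hθ1 : θ ≤ 1 := by
      have hNw' : N w = (1 - θ) * N u + θ * nc := by
        rw [hwuv, haffN u v _ _ (by ring), hNv]
      by_contra hcon
      push_neg at hcon
      nlinarith [mul_pos (by linarith : (0:ℝ) < θ - 1) (by linarith : (0:ℝ) < nc - N u)]
    have hwseg : w ∈ segment ℝ u v := ⟨1 - θ, θ, by linarith, hθ0, by ring, hwuv.symm⟩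
    have hyP1 : y ∈ convexHull ℝ ({a, u, v, d} : Set (ℝ × ℝ)) :=
      hP1conv.segment_subset haP1 hdP1 ⟨r1, s1, hr1, hs1, hrs1, hy_eq⟩
    have hwP1 : w ∈ convexHull ℝ ({a, u, v, d} : Set (ℝ × ℝ)) :=
      hP1conv.segment_subset huP1 hvP1 hwseg
    have hzP2 : z ∈ convexHull ℝ ({u, b, c, v} : Set (ℝ × ℝ)) :=
      hP2conv.segment_subset hbP2 hcP2 ⟨r2, s2, hr2, hs2, hrs2, hz_eq⟩
    have hwP2 : w ∈ convexHull ℝ ({u, b, c, v} : Set (ℝ × ℝ)) :=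
      hP2conv.segment_subset huP2 hvP2 hwseg
    have hLx : L x = r * L y + s * L z := by rw [← hx_eq, haffL y z r s hrs]
    have hr' : r = 1 - s := by linarith
    rcases le_or_gt (L x) lc with hside | hside
    · left
      have hsτ : s ≤ τ := by
        rw [hr'] at hLx
        have h1 : s * (L z - L y) ≤ τ * (L z - L y) := by linarith [hLx, hside, hkey]
        exact le_of_mul_le_mul_right (by linarith [h1]) hden
      have hμ0 : 0 ≤ s / τ := div_nonneg hs hτ0.le
      have hμ1 : s / τ ≤ 1 := (div_le_one hτ0).mpr hsτ
      have hxyw : x ∈ segment ℝ y w := by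
        refine ⟨1 - s / τ, s / τ, by linarith, hμ0, by ring, ?_⟩
        rw [hwdef, ← hx_eq, hr']
        have hτne : τ ≠ 0 := hτ0.ne'
        match_scalars <;> field_simp <;> ring
      exact hP1conv.segment_subset hyP1 hwP1 hxyw
    · right
      have hsτ : τ ≤ s := by
        rw [hr'] at hLx
        have h1 : τ * (L z - L y) ≤ s * (L z - L y) := by linarith [hLx, hside, hkey]
        exact le_of_mul_le_mul_right (by linarith [h1]) hden
      have h1τ : (0:ℝ) < 1 - τ := by linarith
      have hxwz : x ∈ segment ℝ w z := by
        refine ⟨(1 - s) / (1 - τ), (s - τ) / (1 - τ), div_nonneg (by linarith) h1τ.le,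
          div_nonneg (by linarith) h1τ.le, ?_, ?_⟩
        · rw [← add_div, div_eq_one_iff_eq h1τ.ne']; ring
        · rw [hwdef, ← hx_eq, hr']
          have hτne : (1:ℝ) - τ ≠ 0 := h1τ.ne'
          match_scalars <;> field_simp <;> ring
      exact hP2conv.segment_subset hwP2 hzP2 hxwz
  · apply Set.union_subset
    · apply convexHull_min _ hQconv
      intro p hp
      simp only [Set.mem_insert_iff, Set.mem_singleton_iff] at hp
      rcases hp with rfl | rfl | rfl | rfl
      exacts [haIn, huIn, hvIn, hdIn]
    · apply convexHull_min _ hQconv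
      intro p hp
      simp only [Set.mem_insert_iff, Set.mem_singleton_iff] at hp
      rcases hp with rfl | rfl | rfl | rfl
      exacts [huIn, hbIn, hcIn, hvIn]


private lemma Qab_eq {α β : ℝ} (hα : 0 < α) (hαβ : α < β) (hβ : β < 1) :
    Qab α β = convexHull ℝ {((0:ℝ), (0:ℝ)), (1 - α, 0),
      (1 - β, (β - α) / (1 - α)), (0, (β - α) / ((1 - α) * β))} := by
  have h1 : (1:ℝ) - α ≠ 0 := by intro h; nlinarith
  have h2 : β ≠ 0 := ne_of_gt (lt_trans hα hαβ)
  have e1 : (1 : ℝ) - (1 - β) / (1 - α) = (β - α) / (1 - α) := by field_simp; ring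
  have e2 : (1 : ℝ) - α * (1 - β) / ((1 - α) * β) = (β - α) / ((1 - α) * β) := by
    field_simp
    ring
  unfold Qab
  rw [e1, e2]

set_option maxHeartbeats 1000000 in
/-- The quadrangle `Q(α₁α₂, β₁β₂)` admits a dissection into two pieces, one affinely
equivalent to `Q(α₁,β₁)` and the other affinely equivalent to `Q(α₂,β₂)`. -/
theorem Qab_dot_Qab (α₁ β₁ α₂ β₂ : ℝ)
    (hα₁ : 0 < α₁) (hαβ₁ : α₁ < β₁) (hβ₁ : β₁ < 1)
    (hα₂ : 0 < α₂) (hαβ₂ : α₂ < β₂) (hβ₂ : β₂ < 1) :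
    ∃ P₁ P₂ : Set (ℝ × ℝ),
      P₁ ∪ P₂ = Qab (α₁ * α₂) (β₁ * β₂) ∧
      Disjoint (interior P₁) (interior P₂) ∧
      AffineCopy (Qab α₁ β₁) P₁ ∧ AffineCopy (Qab α₂ β₂) P₂ := by
  have hβ₁0 : 0 < β₁ := lt_trans hα₁ hαβ₁
  have hβ₂0 : 0 < β₂ := lt_trans hα₂ hαβ₂
  have h1α₁ : 0 < 1 - α₁ := by linarith
  have h1α₂ : 0 < 1 - α₂ := by linarith
  have h1β₁ : 0 < 1 - β₁ := by linarith
  have h1β₂ : 0 < 1 - β₂ := by linarith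
  have hba₁ : 0 < β₁ - α₁ := by linarith
  have hba₂ : 0 < β₂ - α₂ := by linarith
  have hA : 0 < α₁ * α₂ := mul_pos hα₁ hα₂
  have hB : 0 < β₁ * β₂ := mul_pos hβ₁0 hβ₂0
  have hAB : α₁ * α₂ < β₁ * β₂ := by nlinarith
  have hB1 : β₁ * β₂ < 1 := by nlinarith
  have h1A : 0 < 1 - α₁ * α₂ := by nlinarith
  have h1B : 0 < 1 - β₁ * β₂ := by linarith
  have hBA : 0 < β₁ * β₂ - α₁ * α₂ := by linarith
  have hAα : α₁ * α₂ < α₁ := by nlinarith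
  have hBβ : β₁ * β₂ < β₁ := by nlinarith
  -- nonzero denominators
  have ne1A : (1 : ℝ) - α₁ * α₂ ≠ 0 := ne_of_gt h1A
  have ne1B : (1 : ℝ) - β₁ * β₂ ≠ 0 := ne_of_gt h1B
  have neB : β₁ * β₂ ≠ 0 := ne_of_gt hB
  have neβ₁ : β₁ ≠ 0 := ne_of_gt hβ₁0
  have neβ₂ : β₂ ≠ 0 := ne_of_gt hβ₂0
  have ne1α₁ : (1 : ℝ) - α₁ ≠ 0 := ne_of_gt h1α₁
  have ne1α₂ : (1 : ℝ) - α₂ ≠ 0 := ne_of_gt h1α₂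
  have neba₁ : β₁ - α₁ ≠ 0 := ne_of_gt hba₁
  have neba₂ : β₂ - α₂ ≠ 0 := ne_of_gt hba₂
  have neBA : β₁ * β₂ - α₁ * α₂ ≠ 0 := ne_of_gt hBA
  -- affinity of the functionals
  have haffL : ∀ (p q : ℝ × ℝ) (r s : ℝ), r + s = 1 →
      (fun p : ℝ × ℝ => (β₁ * β₂ - α₁ * α₂) * p.1 + (β₁ - α₁) * (1 - α₁ * α₂) * β₂ * p.2) (r • p + s • q) = r * (fun p : ℝ × ℝ => (β₁ * β₂ - α₁ * α₂) * p.1 + (β₁ - α₁) * (1 - α₁ * α₂) * β₂ * p.2) p + s * (fun p : ℝ × ℝ => (β₁ * β₂ - α₁ * α₂) * p.1 + (β₁ - α₁) * (1 - α₁ * α₂) * β₂ * p.2) q := by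
    intro p q r s _
    simp only [Prod.fst_add, Prod.snd_add, Prod.smul_fst, Prod.smul_snd, smul_eq_mul]
    ring
  have haffM : ∀ (p q : ℝ × ℝ) (r s : ℝ), r + s = 1 →
      (fun p : ℝ × ℝ => p.2) (r • p + s • q) = r * (fun p : ℝ × ℝ => p.2) p + s * (fun p : ℝ × ℝ => p.2) q := by
    intro p q r s _
    simp only [Prod.snd_add, Prod.smul_snd, smul_eq_mul]
  have haffN : ∀ (p q : ℝ × ℝ) (r s : ℝ), r + s = 1 →
      (fun p : ℝ × ℝ => (1 - β₁ * β₂) * ((β₁ * β₂ - α₁ * α₂) * p.1 + (1 - α₁ * α₂) * (β₁ * β₂) * p.2)) (r • p + s • q) = r * (fun p : ℝ × ℝ => (1 - β₁ * β₂) * ((β₁ * β₂ - α₁ * α₂) * p.1 + (1 - α₁ * α₂) * (β₁ * β₂) * p.2)) p + s * (fun p : ℝ × ℝ => (1 - β₁ * β₂) * ((β₁ * β₂ - α₁ * α₂) * p.1 + (1 - α₁ * α₂) * (β₁ * β₂) * p.2)) q := by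
    intro p q r s _
    simp only [Prod.fst_add, Prod.snd_add, Prod.smul_fst, Prod.smul_snd, smul_eq_mul]
    ring
  have hinj : ∀ p q : ℝ × ℝ, (fun p : ℝ × ℝ => (β₁ * β₂ - α₁ * α₂) * p.1 + (β₁ - α₁) * (1 - α₁ * α₂) * β₂ * p.2) p = (fun p : ℝ × ℝ => (β₁ * β₂ - α₁ * α₂) * p.1 + (β₁ - α₁) * (1 - α₁ * α₂) * β₂ * p.2) q → (fun p : ℝ × ℝ => p.2) p = (fun p : ℝ × ℝ => p.2) q → p = q := by
    intro p q h1 h2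
    simp only at h1 h2
    rw [h2] at h1
    have h3 : (β₁ * β₂ - α₁ * α₂) * p.1 = (β₁ * β₂ - α₁ * α₂) * q.1 := by linarith
    have h4 : p.1 = q.1 := mul_left_cancel₀ neBA h3
    exact Prod.ext_iff.mpr ⟨h4, h2⟩
  -- u on segment [a,b]
  have hu : ((1 - α₁ : ℝ), (0 : ℝ)) ∈ segment ℝ ((0 : ℝ), (0 : ℝ)) ((1 - α₁ * α₂ : ℝ), (0 : ℝ)) := by
    refine ⟨1 - (1 - α₁) / (1 - α₁ * α₂), (1 - α₁) / (1 - α₁ * α₂), ?_, by positivity,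
      by ring, ?_⟩
    · have h5 : (1 - α₁) / (1 - α₁ * α₂) ≤ 1 := by
        rw [div_le_one h1A]; linarith
      linarith
    · simp only [Prod.smul_mk, Prod.mk_add_mk, smul_eq_mul]
      rw [Prod.mk.injEq]
      constructor
      · field_simp; ring
      · ring
  -- v on segment [d,c]
  have hv : ((1 - β₁ : ℝ), (β₁ * β₂ - α₁ * α₂) / ((1 - α₁ * α₂) * β₂)) ∈ segment ℝ ((0 : ℝ), (β₁ * β₂ - α₁ * α₂) / ((1 - α₁ * α₂) * (β₁ * β₂))) ((1 - β₁ * β₂ : ℝ), (β₁ * β₂ - α₁ * α₂) / (1 - α₁ * α₂)) := by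
    refine ⟨1 - (1 - β₁) / (1 - β₁ * β₂), (1 - β₁) / (1 - β₁ * β₂), ?_, by positivity,
      by ring, ?_⟩
    · have h5 : (1 - β₁) / (1 - β₁ * β₂) ≤ 1 := by
        rw [div_le_one h1B]; linarith
      linarith
    · simp only [Prod.smul_mk, Prod.mk_add_mk, smul_eq_mul]
      rw [Prod.mk.injEq]
      constructor
      · field_simp; ring
      · field_simp
        ring
  -- values of L
  have hLa : (fun p : ℝ × ℝ => (β₁ * β₂ - α₁ * α₂) * p.1 + (β₁ - α₁) * (1 - α₁ * α₂) * β₂ * p.2) ((0 : ℝ), (0 : ℝ)) < ((β₁ * β₂ - α₁ * α₂) * (1 - α₁)) := by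
    simp only
    nlinarith [mul_pos hBA h1α₁]
  have hLb : ((β₁ * β₂ - α₁ * α₂) * (1 - α₁)) < (fun p : ℝ × ℝ => (β₁ * β₂ - α₁ * α₂) * p.1 + (β₁ - α₁) * (1 - α₁ * α₂) * β₂ * p.2) ((1 - α₁ * α₂ : ℝ), (0 : ℝ)) := by
    simp only
    nlinarith [mul_pos hBA (mul_pos hα₁ h1α₂)]
  have hLc : ((β₁ * β₂ - α₁ * α₂) * (1 - α₁)) < (fun p : ℝ × ℝ => (β₁ * β₂ - α₁ * α₂) * p.1 + (β₁ - α₁) * (1 - α₁ * α₂) * β₂ * p.2) ((1 - β₁ * β₂ : ℝ), (β₁ * β₂ - α₁ * α₂) / (1 - α₁ * α₂)) := by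
    simp only
    have e : (β₁ * β₂ - α₁ * α₂) * (1 - β₁ * β₂) + (β₁ - α₁) * (1 - α₁ * α₂) * β₂ *
        ((β₁ * β₂ - α₁ * α₂) / (1 - α₁ * α₂)) =
        (β₁ * β₂ - α₁ * α₂) * (1 - α₁) + (β₁ * β₂ - α₁ * α₂) * α₁ * (1 - β₂) := by
      field_simp
      ring
    rw [e]
    nlinarith [mul_pos (mul_pos hBA hα₁) h1β₂]
  have hLd : (fun p : ℝ × ℝ => (β₁ * β₂ - α₁ * α₂) * p.1 + (β₁ - α₁) * (1 - α₁ * α₂) * β₂ * p.2) ((0 : ℝ), (β₁ * β₂ - α₁ * α₂) / ((1 - α₁ * α₂) * (β₁ * β₂))) < ((β₁ * β₂ - α₁ * α₂) * (1 - α₁)) := by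
    simp only
    have e : (β₁ * β₂ - α₁ * α₂) * 0 + (β₁ - α₁) * (1 - α₁ * α₂) * β₂ *
        ((β₁ * β₂ - α₁ * α₂) / ((1 - α₁ * α₂) * (β₁ * β₂))) =
        (β₁ * β₂ - α₁ * α₂) * (1 - α₁) - (β₁ * β₂ - α₁ * α₂) * α₁ * (1 - β₁) / β₁ := by
      field_simp
      ring
    rw [e]
    have h5 : 0 < (β₁ * β₂ - α₁ * α₂) * α₁ * (1 - β₁) / β₁ :=
      div_pos (mul_pos (mul_pos hBA hα₁) h1β₁) hβ₁0
    linarith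
  have hLu : (fun p : ℝ × ℝ => (β₁ * β₂ - α₁ * α₂) * p.1 + (β₁ - α₁) * (1 - α₁ * α₂) * β₂ * p.2) ((1 - α₁ : ℝ), (0 : ℝ)) = ((β₁ * β₂ - α₁ * α₂) * (1 - α₁)) := by
    simp only
    ring
  have hLv : (fun p : ℝ × ℝ => (β₁ * β₂ - α₁ * α₂) * p.1 + (β₁ - α₁) * (1 - α₁ * α₂) * β₂ * p.2) ((1 - β₁ : ℝ), (β₁ * β₂ - α₁ * α₂) / ((1 - α₁ * α₂) * β₂)) = ((β₁ * β₂ - α₁ * α₂) * (1 - α₁)) := by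
    simp only
    field_simp
    ring
  -- values of M
  have hMa : (0:ℝ) ≤ (fun p : ℝ × ℝ => p.2) ((0 : ℝ), (0 : ℝ)) := le_refl 0
  have hMb : (0:ℝ) ≤ (fun p : ℝ × ℝ => p.2) ((1 - α₁ * α₂ : ℝ), (0 : ℝ)) := le_refl 0
  have hMc : (0:ℝ) ≤ (fun p : ℝ × ℝ => p.2) ((1 - β₁ * β₂ : ℝ), (β₁ * β₂ - α₁ * α₂) / (1 - α₁ * α₂)) := by
    simp only
    positivity
  have hMd : (0:ℝ) ≤ (fun p : ℝ × ℝ => p.2) ((0 : ℝ), (β₁ * β₂ - α₁ * α₂) / ((1 - α₁ * α₂) * (β₁ * β₂))) := by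
    simp only
    positivity
  have hMu : (fun p : ℝ × ℝ => p.2) ((1 - α₁ : ℝ), (0 : ℝ)) = 0 := rfl
  have hMv : (0:ℝ) < (fun p : ℝ × ℝ => p.2) ((1 - β₁ : ℝ), (β₁ * β₂ - α₁ * α₂) / ((1 - α₁ * α₂) * β₂)) := by
    simp only
    exact div_pos hBA (mul_pos h1A hβ₂0)
  -- values of N
  have hNa : (fun p : ℝ × ℝ => (1 - β₁ * β₂) * ((β₁ * β₂ - α₁ * α₂) * p.1 + (1 - α₁ * α₂) * (β₁ * β₂) * p.2)) ((0 : ℝ), (0 : ℝ)) ≤ ((1 - β₁ * β₂) * (β₁ * β₂ - α₁ * α₂)) := by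
    simp only
    nlinarith [mul_pos h1B hBA]
  have hNb : (fun p : ℝ × ℝ => (1 - β₁ * β₂) * ((β₁ * β₂ - α₁ * α₂) * p.1 + (1 - α₁ * α₂) * (β₁ * β₂) * p.2)) ((1 - α₁ * α₂ : ℝ), (0 : ℝ)) ≤ ((1 - β₁ * β₂) * (β₁ * β₂ - α₁ * α₂)) := by
    simp only
    nlinarith [mul_pos (mul_pos h1B hBA) hA]
  have hNc : (fun p : ℝ × ℝ => (1 - β₁ * β₂) * ((β₁ * β₂ - α₁ * α₂) * p.1 + (1 - α₁ * α₂) * (β₁ * β₂) * p.2)) ((1 - β₁ * β₂ : ℝ), (β₁ * β₂ - α₁ * α₂) / (1 - α₁ * α₂)) ≤ ((1 - β₁ * β₂) * (β₁ * β₂ - α₁ * α₂)) := by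
    simp only
    apply le_of_eq
    field_simp
    ring
  have hNd : (fun p : ℝ × ℝ => (1 - β₁ * β₂) * ((β₁ * β₂ - α₁ * α₂) * p.1 + (1 - α₁ * α₂) * (β₁ * β₂) * p.2)) ((0 : ℝ), (β₁ * β₂ - α₁ * α₂) / ((1 - α₁ * α₂) * (β₁ * β₂))) ≤ ((1 - β₁ * β₂) * (β₁ * β₂ - α₁ * α₂)) := by
    simp only
    apply le_of_eq
    field_simp; ring
  have hNu : (fun p : ℝ × ℝ => (1 - β₁ * β₂) * ((β₁ * β₂ - α₁ * α₂) * p.1 + (1 - α₁ * α₂) * (β₁ * β₂) * p.2)) ((1 - α₁ : ℝ), (0 : ℝ)) < ((1 - β₁ * β₂) * (β₁ * β₂ - α₁ * α₂)) := by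
    simp only
    nlinarith [mul_pos (mul_pos h1B hBA) hα₁]
  have hNv : (fun p : ℝ × ℝ => (1 - β₁ * β₂) * ((β₁ * β₂ - α₁ * α₂) * p.1 + (1 - α₁ * α₂) * (β₁ * β₂) * p.2)) ((1 - β₁ : ℝ), (β₁ * β₂ - α₁ * α₂) / ((1 - α₁ * α₂) * β₂)) = ((1 - β₁ * β₂) * (β₁ * β₂ - α₁ * α₂)) := by
    simp only
    field_simp
    ring
  have hUnion := split_lemma ((0 : ℝ), (0 : ℝ)) ((1 - α₁ * α₂ : ℝ), (0 : ℝ)) ((1 - β₁ * β₂ : ℝ), (β₁ * β₂ - α₁ * α₂) / (1 - α₁ * α₂)) ((0 : ℝ), (β₁ * β₂ - α₁ * α₂) / ((1 - α₁ * α₂) * (β₁ * β₂))) ((1 - α₁ : ℝ), (0 : ℝ)) ((1 - β₁ : ℝ), (β₁ * β₂ - α₁ * α₂) / ((1 - α₁ * α₂) * β₂)) (fun p : ℝ × ℝ => (β₁ * β₂ - α₁ * α₂) * p.1 + (β₁ - α₁) * (1 - α₁ * α₂) * β₂ * p.2) (fun p : ℝ × ℝ => p.2) (fun p : ℝ ×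 ℝ => (1 - β₁ * β₂) * ((β₁ * β₂ - α₁ * α₂) * p.1 + (1 - α₁ * α₂) * (β₁ * β₂) * p.2)) ((β₁ * β₂ - α₁ * α₂) * (1 - α₁)) ((1 - β₁ * β₂) * (β₁ * β₂ - α₁ * α₂))
    haffL haffM haffN hinj hu hv hLa hLb hLc hLd hLu hLv hMa hMb hMc hMd hMu hMv
    hNa hNb hNc hNd hNu hNv
  refine ⟨convexHull ℝ ({((0 : ℝ), (0 : ℝ)), ((1 - α₁ : ℝ), (0 : ℝ)), ((1 - β₁ : ℝ), (β₁ * β₂ - α₁ * α₂) / ((1 - α₁ * α₂) * β₂)), ((0 : ℝ), (β₁ * β₂ - α₁ * α₂) / ((1 - α₁ * α₂) * (β₁ * β₂)))} : Set (ℝ × ℝ)), convexHull ℝ ({((1 - α₁ : ℝ), (0 : ℝ)), ((1 - α₁ * α₂ : ℝ), (0 : ℝ)), ((1 - β₁ * β₂ : ℝ), (β₁ * β₂ - α₁ * α₂) / (1 - α₁ * α₂)), ((1 - β₁ : ℝ), (β₁ * β₂ - α₁ * α₂) / ((1 - α₁ * α₂) * β₂))} : Set (ℝ × ℝ)), ?_,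 ?_, ?_, ?_⟩
  · rw [Qab_eq hA hAB hB1]
    exact hUnion.symm
  · -- disjoint interiors
    have hlin : IsLinearMap ℝ (fun p : ℝ × ℝ => (β₁ * β₂ - α₁ * α₂) * p.1 + (β₁ - α₁) * (1 - α₁ * α₂) * β₂ * p.2) := by
      constructor
      · intro p q
        simp only [Prod.fst_add, Prod.snd_add]
        ring
      · intro cᵣ p
        simp only [Prod.smul_fst, Prod.smul_snd, smul_eq_mul]
        ring
    have hP1sub : convexHull ℝ ({((0 : ℝ), (0 : ℝ)), ((1 - α₁ : ℝ), (0 : ℝ)), ((1 - β₁ : ℝ), (β₁ * β₂ - α₁ * α₂) / ((1 - α₁ * α₂) * β₂)), ((0 : ℝ), (β₁ * β₂ - α₁ * α₂) / ((1 - α₁ * α₂) * (β₁ * β₂)))} : Set (ℝ × ℝ)) ⊆ {p : ℝ × ℝ | (fun p : ℝ × ℝ => (β₁ * β₂ - α₁ * α₂) * p.1 + (β₁ - α₁) * (1 - α₁ * α₂) * β₂ * p.2) p ≤ ((β₁ * β₂ - α₁ * α₂) * (1 - α₁))} := by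
      apply convexHull_min _ (convex_halfSpace_le hlin _)
      intro p hp
      simp only [Set.mem_insert_iff, Set.mem_singleton_iff] at hp
      rcases hp with rfl | rfl | rfl | rfl
      exacts [le_of_lt hLa, le_of_eq hLu, le_of_eq hLv, le_of_lt hLd]
    have hP2sub : convexHull ℝ ({((1 - α₁ : ℝ), (0 : ℝ)), ((1 - α₁ * α₂ : ℝ), (0 : ℝ)), ((1 - β₁ * β₂ : ℝ), (β₁ * β₂ - α₁ * α₂) / (1 - α₁ * α₂)), ((1 - β₁ : ℝ), (β₁ * β₂ - α₁ * α₂) / ((1 - α₁ * α₂) * β₂))} : Set (ℝ × ℝ)) ⊆ {p : ℝ × ℝ | ((β₁ * β₂ - α₁ * α₂) * (1 - α₁)) ≤ (fun p : ℝ × ℝ => (β₁ * β₂ - α₁ * α₂) * p.1 + (β₁ - α₁) * (1 - α₁ * α₂) * β₂ * p.2) p} := by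
      apply convexHull_min _ (convex_halfSpace_ge hlin _)
      intro p hp
      simp only [Set.mem_insert_iff, Set.mem_singleton_iff] at hp
      rcases hp with rfl | rfl | rfl | rfl
      exacts [le_of_eq hLu.symm, le_of_lt hLb, le_of_lt hLc, le_of_eq hLv.symm]
    rw [Set.disjoint_left]
    intro p hp1 hp2
    obtain ⟨ε₁, hε₁, hb₁⟩ := Metric.isOpen_iff.mp isOpen_interior p hp1
    obtain ⟨ε₂, hε₂, hb₂⟩ := Metric.isOpen_iff.mp isOpen_interior p hp2
    have hm₁ : ((p.1 + ε₁ / 2, p.2) : ℝ × ℝ) ∈ Metric.ball p ε₁ := by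
      rw [Metric.mem_ball]
      have hd : dist ((p.1 + ε₁ / 2, p.2) : ℝ × ℝ) p = ε₁ / 2 := by
        rw [Prod.dist_eq]
        show max (dist (p.1 + ε₁ / 2) p.1) (dist p.2 p.2) = ε₁ / 2
        rw [Real.dist_eq, add_sub_cancel_left, abs_of_pos (by linarith), dist_self]
        exact max_eq_left (by linarith)
      rw [hd]; linarith
    have hm₂ : ((p.1 - ε₂ / 2, p.2) : ℝ × ℝ) ∈ Metric.ball p ε₂ := by
      rw [Metric.mem_ball]
      have hd : dist ((p.1 - ε₂ / 2, p.2) : ℝ × ℝ) p = ε₂ / 2 := by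
        rw [Prod.dist_eq]
        show max (dist (p.1 - ε₂ / 2) p.1) (dist p.2 p.2) = ε₂ / 2
        rw [Real.dist_eq, show p.1 - ε₂ / 2 - p.1 = -(ε₂ / 2) by ring, abs_neg,
          abs_of_pos (by linarith), dist_self]
        exact max_eq_left (by linarith)
      rw [hd]; linarith
    have hq1 : (β₁ * β₂ - α₁ * α₂) * (p.1 + ε₁ / 2) + (β₁ - α₁) * (1 - α₁ * α₂) * β₂ * p.2 ≤ ((β₁ * β₂ - α₁ * α₂) * (1 - α₁)) :=
      hP1sub (interior_subset (hb₁ hm₁))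
    have hq2 : ((β₁ * β₂ - α₁ * α₂) * (1 - α₁)) ≤ (β₁ * β₂ - α₁ * α₂) * (p.1 - ε₂ / 2) + (β₁ - α₁) * (1 - α₁ * α₂) * β₂ * p.2 :=
      hP2sub (interior_subset (hb₂ hm₂))
    nlinarith [mul_pos hBA hε₁, mul_pos hBA hε₂]
  · -- affine copy of Q(α₁,β₁)
    have hk : (0:ℝ) < ((β₁ * β₂ - α₁ * α₂) / ((1 - α₁ * α₂) * (β₁ * β₂))) /
        ((β₁ - α₁) / ((1 - α₁) * β₁)) :=
      div_pos (div_pos hBA (mul_pos h1A hB)) (div_pos hba₁ (mul_pos h1α₁ hβ₁0))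
    refine ⟨triAff ((0:ℝ), (0:ℝ)) 1 0 _ one_ne_zero (ne_of_gt hk), ?_⟩
    have e1 : triAff ((0:ℝ), (0:ℝ)) 1 0 _ one_ne_zero (ne_of_gt hk) ((0:ℝ), (0:ℝ)) = ((0 : ℝ), (0 : ℝ)) := by
      rw [triAff_apply]
      norm_num
    have e2 : triAff ((0:ℝ), (0:ℝ)) 1 0 _ one_ne_zero (ne_of_gt hk) ((1 - α₁ : ℝ), (0:ℝ)) = ((1 - α₁ : ℝ), (0 : ℝ)) := by
      rw [triAff_apply]
      norm_num
    have e3 : triAff ((0:ℝ), (0:ℝ)) 1 0 _ one_ne_zero (ne_of_gt hk)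
        ((1 - β₁ : ℝ), (β₁ - α₁) / (1 - α₁)) = ((1 - β₁ : ℝ), (β₁ * β₂ - α₁ * α₂) / ((1 - α₁ * α₂) * β₂)) := by
      rw [triAff_apply]
      rw [Prod.mk.injEq]
      constructor
      · norm_num
      · show (0:ℝ) + _ = _
        rw [zero_add]
        field_simp
    have e4 : triAff ((0:ℝ), (0:ℝ)) 1 0 _ one_ne_zero (ne_of_gt hk)
        ((0:ℝ), (β₁ - α₁) / ((1 - α₁) * β₁)) = ((0 : ℝ), (β₁ * β₂ - α₁ * α₂) / ((1 - α₁ * α₂) * (β₁ * β₂))) := by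
      rw [triAff_apply]
      rw [Prod.mk.injEq]
      constructor
      · norm_num
      · show (0:ℝ) + _ = _
        rw [zero_add]
        field_simp
    rw [Qab_eq hα₁ hαβ₁ hβ₁, ← AffineEquiv.coe_toAffineMap, AffineMap.image_convexHull,
      Set.image_insert_eq, Set.image_insert_eq, Set.image_insert_eq, Set.image_singleton]
    simp only [AffineEquiv.coe_toAffineMap]
    rw [e1, e2, e3, e4]
  · -- affine copy of Q(α₂,β₂)
    have hn : (0:ℝ) < (β₁ * β₂ - α₁ * α₂) * (1 - α₂) / ((1 - α₁ * α₂) * (β₂ - α₂)) :=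
      div_pos (mul_pos hBA h1α₂) (mul_pos h1A hba₂)
    refine ⟨triAff ((1 - α₁ : ℝ), (0:ℝ)) α₁ (β₂ * (α₁ - β₁) * (1 - α₂) / (β₂ - α₂)) _
      (ne_of_gt hα₁) (ne_of_gt hn), ?_⟩
    have e1 : triAff ((1 - α₁ : ℝ), (0:ℝ)) α₁ (β₂ * (α₁ - β₁) * (1 - α₂) / (β₂ - α₂)) _
        (ne_of_gt hα₁) (ne_of_gt hn) ((0:ℝ), (0:ℝ)) = ((1 - α₁ : ℝ), (0 : ℝ)) := by
      rw [triAff_apply]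
      norm_num
    have e2 : triAff ((1 - α₁ : ℝ), (0:ℝ)) α₁ (β₂ * (α₁ - β₁) * (1 - α₂) / (β₂ - α₂)) _
        (ne_of_gt hα₁) (ne_of_gt hn) ((1 - α₂ : ℝ), (0:ℝ)) = ((1 - α₁ * α₂ : ℝ), (0 : ℝ)) := by
      rw [triAff_apply]
      rw [Prod.mk.injEq]
      constructor
      · show (1 - α₁ : ℝ) + _ = _
        ring
      · norm_num
    have e3 : triAff ((1 - α₁ : ℝ), (0:ℝ)) α₁ (β₂ * (α₁ - β₁) * (1 - α₂) / (β₂ - α₂)) _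
        (ne_of_gt hα₁) (ne_of_gt hn) ((1 - β₂ : ℝ), (β₂ - α₂) / (1 - α₂)) = ((1 - β₁ * β₂ : ℝ), (β₁ * β₂ - α₁ * α₂) / (1 - α₁ * α₂)) := by
      rw [triAff_apply]
      rw [Prod.mk.injEq]
      constructor
      · show (1 - α₁ : ℝ) + _ = _
        field_simp
        ring
      · show (0:ℝ) + _ = _
        rw [zero_add]
        field_simp
    have e4 : triAff ((1 - α₁ : ℝ), (0:ℝ)) α₁ (β₂ * (α₁ - β₁) * (1 - α₂) / (β₂ - α₂)) _
        (ne_of_gt hα₁) (ne_of_gt hn) ((0:ℝ), (β₂ - α₂) / ((1 - α₂) * β₂)) = ((1 - β₁ : ℝ), (β₁ * β₂ - α₁ * α₂) / ((1 - α₁ * α₂) * β₂)) := by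
      rw [triAff_apply]
      rw [Prod.mk.injEq]
      constructor
      · show (1 - α₁ : ℝ) + _ = _
        field_simp
        ring
      · show (0:ℝ) + _ = _
        rw [zero_add]
        field_simp
    rw [Qab_eq hα₂ hαβ₂ hβ₂, ← AffineEquiv.coe_toAffineMap, AffineMap.image_convexHull,
      Set.image_insert_eq, Set.image_insert_eq, Set.image_insert_eq, Set.image_singleton]
    simp only [AffineEquiv.coe_toAffineMap]
    rw [e1, e2, e3, e4]
end

section
/- For all real numbers α, β with 0 < α < β < 1, the trapezoid T(αβ) admits a dissection into two pieces, each affinely equivalent to Q(α, β). -/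
open Set

set_option maxHeartbeats 1000000

private def lin2 (a b c d : ℝ) : (ℝ × ℝ) →ₗ[ℝ] (ℝ × ℝ) where
  toFun p := (a * p.1 + b * p.2, c * p.1 + d * p.2)
  map_add' p q := by simp [Prod.ext_iff]; constructor <;> ring
  map_smul' r p := by simp [Prod.ext_iff, smul_eq_mul]; constructor <;> ring

private noncomputable def aff2 (a b c d e f : ℝ) (h : a * d - b * c ≠ 0) :
    (ℝ × ℝ) ≃ᵃ[ℝ] (ℝ × ℝ) :=
  ((LinearEquiv.ofLinear (lin2 a b c d)
      (lin2 (d / (a*d - b*c)) (-b / (a*d - b*c)) (-c / (a*d - b*c)) (a / (a*d - b*c)))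
      (by have h1' : -(c*b)+a*d ≠ 0 := by intro h'; apply h; linarith
          have h2' : d*a - b*c ≠ 0 := by intro h'; apply h; linarith
          ext p <;> simp [lin2] <;> field_simp <;> ring <;> rw [← neg_mul, ← add_mul, mul_inv_cancel₀ h1'])
      (by have h1' : -(c*b)+a*d ≠ 0 := by intro h'; apply h; linarith
          have h2' : d*a - b*c ≠ 0 := by intro h'; apply h; linarith
          ext p <;> simp [lin2] <;> field_simp <;> ring <;> rw [← neg_mul, ← add_mul, mul_inv_cancel₀ h1'])).toAffineEquiv).trans
    (AffineEquiv.constVAdd ℝ (ℝ × ℝ) (e, f))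

private lemma aff2_apply (a b c d e f : ℝ) (h : a * d - b * c ≠ 0) (p : ℝ × ℝ) :
    aff2 a b c d e f h p = (a * p.1 + b * p.2 + e, c * p.1 + d * p.2 + f) := by
  simp [aff2, lin2, Prod.ext_iff, vadd_eq_add]
  constructor <;> ring

private lemma seg_split {x y : ℝ × ℝ} {c c₀ : ℝ} (hc0 : 0 ≤ c) (hc1 : c ≤ 1)
    (h00 : 0 ≤ c₀) (_h01 : c₀ ≤ 1) :
    (1 - c) • x + c • y ∈
      segment ℝ x ((1 - c₀) • x + c₀ • y) ∪ segment ℝ ((1 - c₀) • x + c₀ • y) y := by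
  rcases le_or_gt c c₀ with h | h
  · left
    rcases eq_or_lt_of_le h00 with h0 | h0
    · have hcz : c = 0 := le_antisymm (h.trans h0.symm.le) hc0
      subst hcz
      simp only [sub_zero, one_smul, zero_smul, add_zero]
      exact left_mem_segment ℝ x _
    · have hne : c₀ ≠ 0 := ne_of_gt h0
      rw [segment_eq_image]
      refine ⟨c / c₀, ⟨div_nonneg hc0 h0.le, (div_le_one h0).2 h⟩, ?_⟩
      match_scalars <;> (field_simp; try ring)
  · right
    have h1 : c₀ < 1 := h.trans_le hc1
    rw [segment_eq_image]
    refine ⟨(c - c₀) / (1 - c₀), ⟨div_nonneg (by linarith) (by linarith),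
      (div_le_one (by linarith)).2 (by linarith)⟩, ?_⟩
    have hne : (1:ℝ) - c₀ ≠ 0 := by linarith
    match_scalars <;> (field_simp; try ring)

private def cutf (α s t : ℝ) (p : ℝ × ℝ) : ℝ := (t - s) * p.1 - α * p.2 + α * s

private lemma cutf_comb (α s t c : ℝ) (u v : ℝ × ℝ) :
    cutf α s t ((1 - c) • u + c • v) = (1 - c) * cutf α s t u + c * cutf α s t v := by
  simp only [cutf, Prod.fst_add, Prod.snd_add, Prod.smul_fst, Prod.smul_snd, smul_eq_mul]
  ring

private lemma convex_cutf_ge (α s t : ℝ) : Convex ℝ {p : ℝ × ℝ | 0 ≤ cutf α s t p} := by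
  intro p hp q hq u v hu hv huv
  have h : cutf α s t (u • p + v • q) = u * cutf α s t p + v * cutf α s t q := by
    simp only [cutf, Prod.fst_add, Prod.snd_add, Prod.smul_fst, Prod.smul_snd, smul_eq_mul]
    linear_combination (-(α * s)) * huv
  simp only [mem_setOf_eq] at hp hq ⊢
  rw [h]
  exact add_nonneg (mul_nonneg hu hp) (mul_nonneg hv hq)

private lemma convex_cutf_le (α s t : ℝ) : Convex ℝ {p : ℝ × ℝ | cutf α s t p ≤ 0} := by
  intro p hp q hq u v hu hv huv
  have h : cutf α s t (u • p + v • q) = u * cutf α s t p + v * cutf α s t q := by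
    simp only [cutf, Prod.fst_add, Prod.snd_add, Prod.smul_fst, Prod.smul_snd, smul_eq_mul]
    linear_combination (-(α * s)) * huv
  simp only [mem_setOf_eq] at hp hq ⊢
  rw [h]
  exact add_nonpos (mul_nonpos_of_nonneg_of_nonpos hu hp) (mul_nonpos_of_nonneg_of_nonpos hv hq)

/-- The trapezoid `T(αβ)` admits a dissection into two pieces, each affinely
equivalent to `Q(α,β)`. -/
theorem Tg_into_two_Qab (α β : ℝ) (hα : 0 < α) (hαβ : α < β) (hβ : β < 1) :
    ∃ P₁ P₂ : Set (ℝ × ℝ),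
      P₁ ∪ P₂ = Tg (α * β) ∧
      Disjoint (interior P₁) (interior P₂) ∧
      AffineCopy (Qab α β) P₁ ∧ AffineCopy (Qab α β) P₂ := by
  have hb0 : 0 < β := hα.trans hαβ
  have h1a : 0 < 1 - α := by linarith
  have h1b : 0 < 1 - β := by linarith
  have hba : 0 < β - α := by linarith
  have h1g : 0 < 1 - α * β := by nlinarith
  have hga : α * β < α := by nlinarith
  set s : ℝ := (1 - β) / (1 - α * β) with hsdef
  set t : ℝ := (1 - α) / (1 - α * β) with htdef
  have hs0 : 0 < s := div_pos h1b h1g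
  have hst : s < t := by rw [hsdef, htdef, div_lt_div_iff₀ h1g h1g]; nlinarith
  have ht1 : t < 1 := by rw [htdef, div_lt_one h1g]; linarith
  have hs1 : s < 1 := hst.trans ht1
  have ht0 : 0 < t := hs0.trans hst
  have hsd : s * (1 - α * β) = 1 - β := div_mul_cancel₀ _ (ne_of_gt h1g)
  have htd : t * (1 - α * β) = 1 - α := div_mul_cancel₀ _ (ne_of_gt h1g)
  set A : ℝ × ℝ := (0, 0) with hA
  set B : ℝ × ℝ := (1, 0) with hB
  set C : ℝ × ℝ := (α * β, 1) with hC
  set D : ℝ × ℝ := (0, 1) with hD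
  set S : ℝ × ℝ := (0, s) with hS
  set R : ℝ × ℝ := (α, t) with hR
  -- shared facts
  have k1 : (t - s) * (1 - α * β) = β - α := by linear_combination htd - hsd
  have hTg : Tg (α * β) = convexHull ℝ {A, B, C, D} := by rw [Tg, hA, hB, hC, hD]
  have hsub : ∀ {w₁ w₂ : ℝ × ℝ} {V : Set (ℝ × ℝ)}, w₁ ∈ V → w₂ ∈ V →
      segment ℝ w₁ w₂ ⊆ convexHull ℝ V := by
    intro w₁ w₂ V h1 h2
    rw [← convexHull_pair]
    refine convexHull_mono ?_
    intro w hw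
    rcases hw with h | h
    · rw [h]; exact h1
    · rw [mem_singleton_iff] at h; rw [h]; exact h2
  -- membership helpers for points on the boundary edges
  have memAS : ∀ a' : ℝ, 0 ≤ a' → a' ≤ s → ((0 : ℝ), a') ∈ segment ℝ A S := by
    intro a' h0 h1
    rw [segment_eq_image]
    refine ⟨a' / s, ⟨div_nonneg h0 hs0.le, (div_le_one hs0).2 h1⟩, ?_⟩
    rw [hA, hS]
    simp only [Prod.smul_mk, Prod.mk_add_mk, smul_eq_mul, Prod.mk.injEq]
    constructor
    · ring
    · field_simp; ring
  have memSD : ∀ a' : ℝ, s ≤ a' → a' ≤ 1 → ((0 : ℝ), a') ∈ segment ℝ S D := by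
    intro a' h0 h1
    have h1s : (0:ℝ) < 1 - s := by linarith
    rw [segment_eq_image]
    refine ⟨(a' - s) / (1 - s), ⟨div_nonneg (by linarith) h1s.le,
      (div_le_one h1s).2 (by linarith)⟩, ?_⟩
    rw [hS, hD]
    simp only [Prod.smul_mk, Prod.mk_add_mk, smul_eq_mul, Prod.mk.injEq]
    constructor
    · ring
    · field_simp
      ring
  have memBR : ∀ b' : ℝ, 0 ≤ b' → b' ≤ t → ((1 - b' * (1 - α * β), b')) ∈ segment ℝ B R := by
    intro b' h0 h1
    rw [segment_eq_image]
    refine ⟨b' / t, ⟨div_nonneg h0 ht0.le, (div_le_one ht0).2 h1⟩, ?_⟩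
    rw [hB, hR]
    simp only [Prod.smul_mk, Prod.mk_add_mk, smul_eq_mul, Prod.mk.injEq]
    constructor
    · field_simp
      linear_combination b' * htd
    · field_simp; ring
  have memRC : ∀ b' : ℝ, t ≤ b' → b' ≤ 1 → ((1 - b' * (1 - α * β), b')) ∈ segment ℝ R C := by
    intro b' h0 h1
    have h1t : (0:ℝ) < 1 - t := by linarith
    rw [segment_eq_image]
    refine ⟨(b' - t) / (1 - t), ⟨div_nonneg (by linarith) h1t.le,
      (div_le_one h1t).2 (by linarith)⟩, ?_⟩
    rw [hR, hC]
    simp only [Prod.smul_mk, Prod.mk_add_mk, smul_eq_mul, Prod.mk.injEq]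
    have hne : (1:ℝ) - t ≠ 0 := ne_of_gt h1t
    constructor
    · rw [htdef] at hne ⊢
      have hne2 : α - α * β ≠ 0 := ne_of_gt (by nlinarith)
      have hne3 : 1 - β ≠ 0 := by linarith
      field_simp
      ring_nf
      field_simp
      ring
    · field_simp
      ring
  have hRBC : R ∈ segment ℝ B C := by
    rw [segment_eq_image]
    refine ⟨t, ⟨ht0.le, ht1.le⟩, ?_⟩
    rw [hB, hC, hR]
    simp only [Prod.smul_mk, Prod.mk_add_mk, smul_eq_mul, Prod.mk.injEq]
    constructor
    · linear_combination -htd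
    · ring
  have hSAD : S ∈ segment ℝ A D := by
    rw [segment_eq_image]
    refine ⟨s, ⟨hs0.le, hs1.le⟩, ?_⟩
    rw [hA, hD, hS]
    simp only [Prod.smul_mk, Prod.mk_add_mk, smul_eq_mul, Prod.mk.injEq]
    constructor <;> ring
  -- crossing lemma: any point of the trapezoid on the cut line lies on [S,R]
  have crossing : ∀ z : ℝ × ℝ, cutf α s t z = 0 → 0 ≤ z.1 →
      z.1 + (1 - α * β) * z.2 - 1 ≤ 0 → z ∈ segment ℝ S R := by
    intro z hf h0 hg
    simp only [cutf] at hf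
    have e1 : α * (z.1 + (1 - α * β) * z.2 - 1) ≤ 0 :=
      mul_nonpos_of_nonneg_of_nonpos hα.le hg
    have e2 : α * z.2 = (t - s) * z.1 + α * s := by linarith
    have e3 : (1 - α * β) * ((t - s) * z.1) = (β - α) * z.1 := by
      linear_combination z.1 * k1
    have e4 : (1 - α * β) * (α * s) = α * (1 - β) := by linear_combination α * hsd
    have hz1 : z.1 ≤ α := by nlinarith [hb0]
    rw [segment_eq_image]
    refine ⟨z.1 / α, ⟨div_nonneg h0 hα.le, (div_le_one hα).2 hz1⟩, ?_⟩
    rw [hS, hR, Prod.ext_iff]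
    constructor
    · show ((1 - z.1 / α) • ((0:ℝ), s) + (z.1 / α) • ((α:ℝ), t)).1 = z.1
      simp only [Prod.smul_mk, Prod.mk_add_mk, smul_eq_mul]
      field_simp; ring
    · show ((1 - z.1 / α) • ((0:ℝ), s) + (z.1 / α) • ((α:ℝ), t)).2 = z.2
      simp only [Prod.smul_mk, Prod.mk_add_mk, smul_eq_mul]
      field_simp
      linarith [e2]
  -- half-plane bounds for the two pieces
  have hP1f : convexHull ℝ {B, R, S, A} ⊆ {p : ℝ × ℝ | 0 ≤ cutf α s t p} := by
    apply convexHull_min _ (convex_cutf_ge α s t)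
    intro z hz
    simp only [mem_insert_iff, mem_singleton_iff] at hz
    rcases hz with h | h | h | h <;> subst h <;>
      simp only [hB, hR, hS, hA, cutf, mem_setOf_eq] <;> nlinarith [mul_pos hα hs0]
  have hP2f : convexHull ℝ {S, D, C, R} ⊆ {p : ℝ × ℝ | cutf α s t p ≤ 0} := by
    apply convexHull_min _ (convex_cutf_le α s t)
    intro z hz
    simp only [mem_insert_iff, mem_singleton_iff] at hz
    have key : ((t - s) * (α * β) - α * 1 + α * s) * (1 - α * β) = α * β * (β - 1) := by
      linear_combination (α * β) * k1 + α * hsd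
    rcases hz with h | h | h | h <;> subst h <;>
      simp only [hS, hD, hC, hR, cutf, mem_setOf_eq]
    · nlinarith
    · nlinarith [mul_pos hα (sub_pos.2 hs1)]
    · nlinarith [key, mul_pos (mul_pos hα hb0) h1b, h1g]
    · nlinarith
  -- ============ union ============
  refine ⟨convexHull ℝ {B, R, S, A}, convexHull ℝ {S, D, C, R}, ?_, ?_, ?_, ?_⟩
  · apply Subset.antisymm
    · apply union_subset
      · rw [hTg]
        apply convexHull_min _ (convex_convexHull ℝ _)
        intro z hz
        simp only [mem_insert_iff, mem_singleton_iff] at hz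
        rcases hz with h | h | h | h <;> subst h
        · exact subset_convexHull ℝ _ (by simp)
        · exact hsub (show B ∈ ({A, B, C, D} : Set (ℝ × ℝ)) by simp)
            (show C ∈ ({A, B, C, D} : Set (ℝ × ℝ)) by simp) hRBC
        · exact hsub (show A ∈ ({A, B, C, D} : Set (ℝ × ℝ)) by simp)
            (show D ∈ ({A, B, C, D} : Set (ℝ × ℝ)) by simp) hSAD
        · exact subset_convexHull ℝ _ (by simp)
      · rw [hTg]
        apply convexHull_min _ (convex_convexHull ℝ _)
        intro z hz
        simp only [mem_insert_iff, mem_singleton_iff] at hz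
        rcases hz with h | h | h | h <;> subst h
        · exact hsub (show A ∈ ({A, B, C, D} : Set (ℝ × ℝ)) by simp)
            (show D ∈ ({A, B, C, D} : Set (ℝ × ℝ)) by simp) hSAD
        · exact subset_convexHull ℝ _ (by simp)
        · exact subset_convexHull ℝ _ (by simp)
        · exact hsub (show B ∈ ({A, B, C, D} : Set (ℝ × ℝ)) by simp)
            (show C ∈ ({A, B, C, D} : Set (ℝ × ℝ)) by simp) hRBC
    · intro p hp
      rw [hTg] at hp
      have hset : ({A, B, C, D} : Set (ℝ × ℝ)) = {A, D, B, C} := by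
        ext w; simp only [mem_insert_iff, mem_singleton_iff]; tauto
      rw [hset, ← convexJoin_segments, mem_convexJoin] at hp
      obtain ⟨x, hx, y, hy, hpseg⟩ := hp
      rw [segment_eq_image] at hx hy
      obtain ⟨a, ⟨ha0, ha1⟩, hxa⟩ := hx
      obtain ⟨b, ⟨hb0', hb1⟩, hyb⟩ := hy
      have hxv : x = ((0 : ℝ), a) := by
        rw [← hxa, hA, hD]
        simp only [Prod.smul_mk, Prod.mk_add_mk, smul_eq_mul, Prod.mk.injEq]
        constructor <;> ring
      have hyv : y = (1 - b * (1 - α * β), b) := by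
        rw [← hyb, hB, hC]
        simp only [Prod.smul_mk, Prod.mk_add_mk, smul_eq_mul, Prod.mk.injEq]
        constructor <;> ring
      have hpseg' := hpseg
      rw [segment_eq_image] at hpseg'
      obtain ⟨c, ⟨hc0, hc1⟩, hpc⟩ := hpseg'
      have hpc' : (1 - c) • x + c • y = p := hpc
      have hfx : cutf α s t x = α * (s - a) := by rw [hxv]; simp only [cutf]; ring
      have hfy : cutf α s t y = β * (t - b) := by
        rw [hyv]; simp only [cutf]
        linear_combination (-b) * k1 + ((1 - β) / (1 - α * β)) * htd -
          ((1 - α) / (1 - α * β)) * hsd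
      have hxP1 : 0 ≤ cutf α s t x → x ∈ convexHull ℝ {B, R, S, A} := by
        intro h
        rw [hfx] at h
        have has : a ≤ s := by nlinarith
        refine hsub (show A ∈ ({B, R, S, A} : Set (ℝ × ℝ)) by simp)
          (show S ∈ ({B, R, S, A} : Set (ℝ × ℝ)) by simp) ?_
        rw [hxv]
        exact memAS a ha0 has
      have hxP2 : cutf α s t x ≤ 0 → x ∈ convexHull ℝ {S, D, C, R} := by
        intro h
        rw [hfx] at h
        have has : s ≤ a := by nlinarith
        refine hsub (show S ∈ ({S, D, C, R} : Set (ℝ × ℝ)) by simp)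
          (show D ∈ ({S, D, C, R} : Set (ℝ × ℝ)) by simp) ?_
        rw [hxv]
        exact memSD a has ha1
      have hyP1 : 0 ≤ cutf α s t y → y ∈ convexHull ℝ {B, R, S, A} := by
        intro h
        rw [hfy] at h
        have hbt : b ≤ t := by nlinarith
        refine hsub (show B ∈ ({B, R, S, A} : Set (ℝ × ℝ)) by simp)
          (show R ∈ ({B, R, S, A} : Set (ℝ × ℝ)) by simp) ?_
        rw [hyv]
        exact memBR b hb0' hbt
      have hyP2 : cutf α s t y ≤ 0 → y ∈ convexHull ℝ {S, D, C, R} := by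
        intro h
        rw [hfy] at h
        have hbt : t ≤ b := by nlinarith
        refine hsub (show R ∈ ({S, D, C, R} : Set (ℝ × ℝ)) by simp)
          (show C ∈ ({S, D, C, R} : Set (ℝ × ℝ)) by simp) ?_
        rw [hyv]
        exact memRC b hbt hb1
      have hSR1 : segment ℝ S R ⊆ convexHull ℝ {B, R, S, A} :=
        hsub (by simp) (by simp)
      have hSR2 : segment ℝ S R ⊆ convexHull ℝ {S, D, C, R} :=
        hsub (by simp) (by simp)
      rcases le_or_gt 0 (cutf α s t x) with hfx0 | hfx0 <;>
        rcases le_or_gt 0 (cutf α s t y) with hfy0 | hfy0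
      · left
        exact (convex_convexHull ℝ _).segment_subset (hxP1 hfx0) (hyP1 hfy0) hpseg
      · -- f x ≥ 0 > f y
        have hden : 0 < cutf α s t x - cutf α s t y := by linarith
        set c₀ : ℝ := cutf α s t x / (cutf α s t x - cutf α s t y) with hc₀
        have h00 : 0 ≤ c₀ := div_nonneg hfx0 hden.le
        have h01 : c₀ ≤ 1 := (div_le_one hden).2 (by linarith)
        have hz0 : cutf α s t ((1 - c₀) • x + c₀ • y) = 0 := by
          have hdne := ne_of_gt hden
          rw [cutf_comb, hc₀]
          field_simp
          ring
        have hzc : ((1 - c₀) • x + c₀ • y) ∈ segment ℝ S R := by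
          apply crossing _ hz0
          · rw [hxv, hyv]
            simp only [Prod.smul_mk, Prod.mk_add_mk, smul_eq_mul]
            nlinarith [mul_nonneg hb0' (mul_pos hα hb0).le]
          · rw [hxv, hyv]
            simp only [Prod.smul_mk, Prod.mk_add_mk, smul_eq_mul]
            nlinarith [mul_nonneg (mul_nonneg hb0' (mul_pos hα hb0).le) (sub_nonneg.2 h01),
              mul_nonneg ha0 (mul_pos hα hb0).le,
              mul_nonneg (mul_nonneg ha0 (mul_pos hα hb0).le) (sub_nonneg.2 h01),
              mul_nonneg (sub_nonneg.2 h01) (sub_nonneg.2 ha1)]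
        rcases seg_split (x := x) (y := y) hc0 hc1 h00 h01 with hseg | hseg
        · left
          have := (convex_convexHull ℝ _).segment_subset (hxP1 hfx0) (hSR1 hzc) hseg
          rwa [hpc'] at this
        · right
          have := (convex_convexHull ℝ _).segment_subset (hSR2 hzc) (hyP2 hfy0.le) hseg
          rwa [hpc'] at this
      · -- f x < 0 ≤ f y
        have hden : 0 < -(cutf α s t x) + cutf α s t y := by linarith
        set c₀ : ℝ := -(cutf α s t x) / (-(cutf α s t x) + cutf α s t y) with hc₀
        have h00 : 0 ≤ c₀ := div_nonneg (by linarith) hden.le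
        have h01 : c₀ ≤ 1 := (div_le_one hden).2 (by linarith)
        have hz0 : cutf α s t ((1 - c₀) • x + c₀ • y) = 0 := by
          have hdne := ne_of_gt hden
          rw [cutf_comb, hc₀]
          field_simp
          ring
        have hzc : ((1 - c₀) • x + c₀ • y) ∈ segment ℝ S R := by
          apply crossing _ hz0
          · rw [hxv, hyv]
            simp only [Prod.smul_mk, Prod.mk_add_mk, smul_eq_mul]
            nlinarith [mul_nonneg hb0' (mul_pos hα hb0).le]
          · rw [hxv, hyv]
            simp only [Prod.smul_mk, Prod.mk_add_mk, smul_eq_mul]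
            nlinarith [mul_nonneg (mul_nonneg hb0' (mul_pos hα hb0).le) (sub_nonneg.2 h01),
              mul_nonneg ha0 (mul_pos hα hb0).le,
              mul_nonneg (mul_nonneg ha0 (mul_pos hα hb0).le) (sub_nonneg.2 h01),
              mul_nonneg (sub_nonneg.2 h01) (sub_nonneg.2 ha1)]
        rcases seg_split (x := x) (y := y) hc0 hc1 h00 h01 with hseg | hseg
        · right
          have := (convex_convexHull ℝ _).segment_subset (hxP2 hfx0.le) (hSR2 hzc) hseg
          rwa [hpc'] at this
        · left
          have := (convex_convexHull ℝ _).segment_subset (hSR1 hzc) (hyP1 hfy0) hseg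
          rwa [hpc'] at this
      · right
        exact (convex_convexHull ℝ _).segment_subset (hxP2 hfx0.le) (hyP2 hfy0.le) hpseg
  -- ============ disjoint interiors ============
  · rw [Set.disjoint_left]
    intro p h1 h2
    have hf0 : cutf α s t p ≤ 0 := hP2f (interior_subset h2)
    obtain ⟨ε, hε, hball⟩ := Metric.isOpen_iff.1 isOpen_interior p h1
    have hq : ((p.1, p.2 + ε / 2) : ℝ × ℝ) ∈ Metric.ball p ε := by
      rw [Metric.mem_ball, Prod.dist_eq]
      simp only [Real.dist_eq]
      rw [max_lt_iff]
      constructor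
      · simpa using hε
      · rw [show p.2 + ε / 2 - p.2 = ε / 2 by ring, abs_of_pos (by linarith)]
        linarith
    have h3 : 0 ≤ cutf α s t (p.1, p.2 + ε / 2) := hP1f (interior_subset (hball hq))
    simp only [cutf] at h3 hf0
    nlinarith [mul_pos hα hε]
  · -- AffineCopy (Qab α β) P₁
    have hdet : (-1 : ℝ) * 0 - (-((1 - α) * β / (β - α))) * (1 / (1 - α * β)) ≠ 0 := by
      have h2 : (-1 : ℝ) * 0 - (-((1 - α) * β / (β - α))) * (1 / (1 - α * β))
          = (1 - α) * β / (β - α) * (1 / (1 - α * β)) := by ring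
      rw [h2]
      exact ne_of_gt (mul_pos (div_pos (mul_pos h1a hb0) hba) (div_pos one_pos h1g))
    refine ⟨aff2 (-1) (-((1 - α) * β / (β - α))) (1 / (1 - α * β)) 0 1 0 hdet, ?_⟩
    rw [Qab, show ⇑(aff2 (-1) (-((1 - α) * β / (β - α))) (1 / (1 - α * β)) 0 1 0 hdet)
        = ⇑((aff2 (-1) (-((1 - α) * β / (β - α))) (1 / (1 - α * β)) 0 1 0 hdet).toAffineMap)
        from rfl,
      AffineMap.image_convexHull]
    congr 1
    have e1 : (aff2 (-1) (-((1 - α) * β / (β - α))) (1 / (1 - α * β)) 0 1 0 hdet).toAffineMap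
        ((0 : ℝ), (0 : ℝ)) = B := by
      show aff2 _ _ _ _ _ _ hdet _ = B
      rw [aff2_apply, hB, Prod.mk.injEq]; norm_num
    have e2 : (aff2 (-1) (-((1 - α) * β / (β - α))) (1 / (1 - α * β)) 0 1 0 hdet).toAffineMap
        ((1 - α : ℝ), (0 : ℝ)) = R := by
      show aff2 _ _ _ _ _ _ hdet _ = R
      rw [aff2_apply, hR, htdef, Prod.mk.injEq]
      constructor
      · norm_num
      · field_simp; ring
    have e3 : (aff2 (-1) (-((1 - α) * β / (β - α))) (1 / (1 - α * β)) 0 1 0 hdet).toAffineMap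
        ((1 - β : ℝ), 1 - (1 - β) / (1 - α)) = S := by
      show aff2 _ _ _ _ _ _ hdet _ = S
      rw [aff2_apply, hS, hsdef, Prod.mk.injEq]
      constructor
      · field_simp
        ring
      · field_simp; ring
    have e4 : (aff2 (-1) (-((1 - α) * β / (β - α))) (1 / (1 - α * β)) 0 1 0 hdet).toAffineMap
        ((0 : ℝ), 1 - α * (1 - β) / ((1 - α) * β)) = A := by
      show aff2 _ _ _ _ _ _ hdet _ = A
      rw [aff2_apply, hA, Prod.mk.injEq]
      constructor
      · field_simp
        ring
      · norm_num
    rw [Set.image_insert_eq, Set.image_insert_eq, Set.image_insert_eq, Set.image_singleton,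
      e1, e2, e3, e4]
  · -- AffineCopy (Qab α β) P₂
    have hdet : (0 : ℝ) * ((1 - α) * β / (1 - α * β))
        - (α * (1 - α) * β / (β - α)) * (β / (1 - α * β)) ≠ 0 := by
      have h2 : (0 : ℝ) * ((1 - α) * β / (1 - α * β))
          - (α * (1 - α) * β / (β - α)) * (β / (1 - α * β))
          = -((α * (1 - α) * β / (β - α)) * (β / (1 - α * β))) := by ring
      rw [h2, neg_ne_zero]
      exact ne_of_gt (mul_pos (div_pos (mul_pos (mul_pos hα h1a) hb0) hba)
        (div_pos hb0 h1g))
    refine ⟨aff2 0 (α * (1 - α) * β / (β - α)) (β / (1 - α * β)) ((1 - α) * β / (1 - α * β))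
      0 s hdet, ?_⟩
    rw [Qab, show ⇑(aff2 0 (α * (1 - α) * β / (β - α)) (β / (1 - α * β))
        ((1 - α) * β / (1 - α * β)) 0 s hdet)
        = ⇑((aff2 0 (α * (1 - α) * β / (β - α)) (β / (1 - α * β))
        ((1 - α) * β / (1 - α * β)) 0 s hdet).toAffineMap) from rfl,
      AffineMap.image_convexHull]
    congr 1
    have e1 : (aff2 0 (α * (1 - α) * β / (β - α)) (β / (1 - α * β))
        ((1 - α) * β / (1 - α * β)) 0 s hdet).toAffineMap ((0 : ℝ), (0 : ℝ)) = S := by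
      show aff2 _ _ _ _ _ _ hdet _ = S
      rw [aff2_apply, hS, Prod.mk.injEq]; norm_num
    have e2 : (aff2 0 (α * (1 - α) * β / (β - α)) (β / (1 - α * β))
        ((1 - α) * β / (1 - α * β)) 0 s hdet).toAffineMap ((1 - α : ℝ), (0 : ℝ)) = D := by
      show aff2 _ _ _ _ _ _ hdet _ = D
      rw [aff2_apply, hD, hsdef, Prod.mk.injEq]
      constructor
      · norm_num
      · have : 1 - β * α ≠ 0 := by rw [mul_comm]; exact h1g.ne'
        field_simp
        ring
    have e3 : (aff2 0 (α * (1 - α) * β / (β - α)) (β / (1 - α * β))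
        ((1 - α) * β / (1 - α * β)) 0 s hdet).toAffineMap
        ((1 - β : ℝ), 1 - (1 - β) / (1 - α)) = C := by
      show aff2 _ _ _ _ _ _ hdet _ = C
      rw [aff2_apply, hC, hsdef, Prod.mk.injEq]
      constructor
      · field_simp
        ring
      · have : 1 - β * α ≠ 0 := by rw [mul_comm]; exact h1g.ne'
        field_simp
        ring
    have e4 : (aff2 0 (α * (1 - α) * β / (β - α)) (β / (1 - α * β))
        ((1 - α) * β / (1 - α * β)) 0 s hdet).toAffineMap
        ((0 : ℝ), 1 - α * (1 - β) / ((1 - α) * β)) = R := by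
      show aff2 _ _ _ _ _ _ hdet _ = R
      rw [aff2_apply, hR, htdef, hsdef, Prod.mk.injEq]
      constructor
      · field_simp
        ring
      · field_simp
        ring
    rw [Set.image_insert_eq, Set.image_insert_eq, Set.image_insert_eq, Set.image_singleton,
      e1, e2, e3, e4]
end

section
/- Let 0 < α < β < 1ve real numbers, let γ satisfy αβ·min{(1−β)/((1−α)β), 1} ≤ γ < 1, and let k ≥ 4 be an even integer. Then the trapezoid T(γ) admits a dissection into k pieces, each affinely equivalent to Q(α, β). -/
open Set

noncomputable section

/-- twice the signed area of triangle `p q r`. -/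
def cr (p q r : ℝ × ℝ) : ℝ :=
  (q.1 - p.1) * (r.2 - p.2) - (q.2 - p.2) * (r.1 - p.1)

lemma cr_cyc (p q r : ℝ × ℝ) : cr p q r = cr q r p := by unfold cr; ring
lemma cr_self_left (p q : ℝ × ℝ) : cr p q p = 0 := by unfold cr; ring
lemma cr_self_right (p q : ℝ × ℝ) : cr p q q = 0 := by unfold cr; ring
lemma cr_swap (p q r : ℝ × ℝ) : cr q p r = - cr p q r := by unfold cr; ring

/-- closed halfplane -/
def hp (a b c : ℝ) : Set (ℝ × ℝ) := {p | a * p.1 + b * p.2 ≤ c}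

lemma convex_hp (a b c : ℝ) : Convex ℝ (hp a b c) := by
  intro x hx y hy s t hs ht hst
  simp only [hp, mem_setOf_eq] at *
  have h1 : (s • x + t • y).1 = s * x.1 + t * y.1 := rfl
  have h2 : (s • x + t • y).2 = s * x.2 + t * y.2 := rfl
  rw [h1, h2]
  calc a * (s * x.1 + t * y.1) + b * (s * x.2 + t * y.2)
      = s * (a * x.1 + b * x.2) + t * (a * y.2 * 0 + (a * y.1 + b * y.2)) := by ring
    _ ≤ s * c + t * c := by
        apply add_le_add
        · exact mul_le_mul_of_nonneg_left hx hs
        · have : a * y.2 * 0 + (a * y.1 + b * y.2) = a * y.1 + b * y.2 := by ring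
          rw [this]; exact mul_le_mul_of_nonneg_left hy ht
    _ = c := by rw [← add_mul, hst, one_mul]

lemma crSet_eq_hp (a b : ℝ × ℝ) :
    {p : ℝ × ℝ | 0 ≤ cr a b p} = hp (b.2 - a.2) (a.1 - b.1) (a.1 * b.2 - a.2 * b.1) := by
  ext p; simp only [hp, cr, mem_setOf_eq]; constructor <;> intro h <;> nlinarith

lemma convex_crSet (a b : ℝ × ℝ) : Convex ℝ {p : ℝ × ℝ | 0 ≤ cr a b p} := by
  rw [crSet_eq_hp]; exact convex_hp _ _ _

lemma interior_hp_subset (a b c : ℝ) (hab : ¬ (a = 0 ∧ b = 0)) :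
    interior (hp a b c) ⊆ {p : ℝ × ℝ | a * p.1 + b * p.2 < c} := by
  intro p hp'
  rcases Metric.isOpen_iff.1 isOpen_interior p hp' with ⟨ε, hε, hball⟩
  have hmem : p ∈ hp a b c := interior_subset hp'
  set n : ℝ := |a| + |b| with hn
  have hn0 : 0 < n := by
    rcases not_and_or.1 hab with h | h
    · have := abs_pos.2 h; positivity
    · have := abs_pos.2 h; positivity
  set q : ℝ × ℝ := (p.1 + ε / (2 * n) * a, p.2 + ε / (2 * n) * b) with hq
  have hqball : q ∈ Metric.ball p ε := by
    rw [Metric.mem_ball, Prod.dist_eq]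
    refine ?_
    have ha' : dist q.1 p.1 < ε := by
      rw [Real.dist_eq]
      have : q.1 - p.1 = ε / (2 * n) * a := by rw [hq]; ring
      rw [this, abs_mul, abs_of_pos (by positivity : (0:ℝ) < ε / (2*n))]
      have : |a| ≤ n := by rw [hn]; have := abs_nonneg b; linarith
      calc ε / (2 * n) * |a| ≤ ε / (2 * n) * n :=
            mul_le_mul_of_nonneg_left this (by positivity)
        _ = ε / 2 := by field_simp
        _ < ε := by linarith
    have hb' : dist q.2 p.2 < ε := by
      rw [Real.dist_eq]
      have : q.2 - p.2 = ε / (2 * n) * b := by rw [hq]; ring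
      rw [this, abs_mul, abs_of_pos (by positivity : (0:ℝ) < ε / (2*n))]
      have : |b| ≤ n := by rw [hn]; have := abs_nonneg a; linarith
      calc ε / (2 * n) * |b| ≤ ε / (2 * n) * n :=
            mul_le_mul_of_nonneg_left this (by positivity)
        _ = ε / 2 := by field_simp
        _ < ε := by linarith
    exact max_lt ha' hb'
  have hqmem : q ∈ hp a b c := interior_subset (hball hqball)
  simp only [hp, mem_setOf_eq] at hqmem hmem ⊢
  have hq1 : a * q.1 + b * q.2 = a * p.1 + b * p.2 + ε / (2 * n) * (a ^ 2 + b ^ 2) := by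
    rw [hq]; ring
  have hab2 : 0 < a ^ 2 + b ^ 2 := by
    rcases not_and_or.1 hab with h | h
    · positivity
    · positivity
  have hpos : 0 < ε / (2 * n) * (a ^ 2 + b ^ 2) := by positivity
  nlinarith [hqmem]

lemma mem_tri (u v w p : ℝ × ℝ) (hd : 0 < cr u v w)
    (h1 : 0 ≤ cr u v p) (h2 : 0 ≤ cr v w p) (h3 : 0 ≤ cr w u p) :
    p ∈ convexHull ℝ ({u, v, w} : Set (ℝ × ℝ)) := by
  have hsum : cr v w p + cr w u p + cr u v p = cr u v w := by unfold cr; ring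
  have hmem := Finset.centerMass_mem_convexHull (Finset.univ : Finset (Fin 3))
    (w := ![cr v w p, cr w u p, cr u v p]) (z := ![u, v, w])
    (s := ({u, v, w} : Set (ℝ × ℝ)))
    (by intro i _; fin_cases i <;> simpa using ‹_›)
    (by rw [Fin.sum_univ_three]; simp only [Matrix.cons_val_zero, Matrix.cons_val_one,
        Matrix.head_cons, Matrix.cons_val_two, Matrix.tail_cons]; rw [hsum]; exact hd)
    (by intro i _; fin_cases i <;> simp)
  have hcm : (Finset.univ : Finset (Fin 3)).centerMass
      ![cr v w p, cr w u p, cr u v p] ![u, v, w] = p := by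
    rw [Finset.centerMass, Fin.sum_univ_three, Fin.sum_univ_three]
    have hΔ : cr v w p + cr w u p + cr u v p ≠ 0 := by rw [hsum]; exact ne_of_gt hd
    simp only [Matrix.cons_val_zero, Matrix.cons_val_one, Matrix.head_cons,
      Matrix.cons_val_two, Matrix.tail_cons]
    rw [inv_smul_eq_iff₀ hΔ]
    apply Prod.ext
    · simp only [Prod.smul_fst, Prod.fst_add, smul_eq_mul]
      unfold cr; ring
    · simp only [Prod.smul_snd, Prod.snd_add, smul_eq_mul]
      unfold cr; ring
  rwa [hcm] at hmem

lemma hull3_subset_hull4 (v1 v2 v3 v4 : ℝ × ℝ) :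
    convexHull ℝ ({v1, v2, v3} : Set (ℝ × ℝ)) ⊆ convexHull ℝ ({v1, v2, v3, v4} : Set (ℝ × ℝ)) := by
  apply convexHull_mono; intro x hx; simp at hx ⊢; tauto

lemma mem_quad (v1 v2 v3 v4 p : ℝ × ℝ)
    (c1 : 0 < cr v1 v2 v3) (c3 : 0 < cr v3 v4 v1)
    (h1 : 0 ≤ cr v1 v2 p) (h2 : 0 ≤ cr v2 v3 p) (h3 : 0 ≤ cr v3 v4 p) (h4 : 0 ≤ cr v4 v1 p) :
    p ∈ convexHull ℝ ({v1, v2, v3, v4} : Set (ℝ × ℝ)) := by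
  rcases le_total 0 (cr v1 v3 p) with hc | hc
  · have : p ∈ convexHull ℝ ({v1, v3, v4} : Set (ℝ × ℝ)) := by
      apply mem_tri v1 v3 v4 p _ hc h3 h4
      rw [← cr_cyc] at c3; exact c3
    apply convexHull_mono _ this
    intro x hx; simp at hx ⊢; tauto
  · have hc' : 0 ≤ cr v3 v1 p := by rw [cr_swap]; linarith
    have : p ∈ convexHull ℝ ({v1, v2, v3} : Set (ℝ × ℝ)) :=
      mem_tri v1 v2 v3 p c1 h1 h2 hc'
    exact hull3_subset_hull4 v1 v2 v3 v4 this

lemma hull4_subset_crSet (v1 v2 v3 v4 a b : ℝ × ℝ)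
    (h1 : 0 ≤ cr a b v1) (h2 : 0 ≤ cr a b v2) (h3 : 0 ≤ cr a b v3) (h4 : 0 ≤ cr a b v4) :
    convexHull ℝ ({v1, v2, v3, v4} : Set (ℝ × ℝ)) ⊆ {p : ℝ × ℝ | 0 ≤ cr a b p} := by
  apply convexHull_min _ (convex_crSet a b)
  intro x hx
  simp only [mem_insert_iff, mem_singleton_iff] at hx
  rcases hx with h | h | h | h <;> (subst h; assumption)

lemma hull4_subset_hp (v1 v2 v3 v4 : ℝ × ℝ) (a b c : ℝ)
    (h1 : v1 ∈ hp a b c) (h2 : v2 ∈ hp a b c) (h3 : v3 ∈ hp a b c) (h4 : v4 ∈ hp a b c) :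
    convexHull ℝ ({v1, v2, v3, v4} : Set (ℝ × ℝ)) ⊆ hp a b c := by
  apply convexHull_min _ (convex_hp a b c)
  intro x hx
  simp only [mem_insert_iff, mem_singleton_iff] at hx
  rcases hx with h | h | h | h <;> (subst h; assumption)

/-- a convex quadrangle is the intersection of the four edge halfplanes. -/
lemma quad_repr (v1 v2 v3 v4 : ℝ × ℝ)
    (c1 : 0 < cr v1 v2 v3) (c2 : 0 < cr v2 v3 v4) (c3 : 0 < cr v3 v4 v1) (c4 : 0 < cr v4 v1 v2) :
    convexHull ℝ ({v1, v2, v3, v4} : Set (ℝ × ℝ)) =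
      {p : ℝ × ℝ | 0 ≤ cr v1 v2 p ∧ 0 ≤ cr v2 v3 p ∧ 0 ≤ cr v3 v4 p ∧ 0 ≤ cr v4 v1 p} := by
  apply Subset.antisymm
  · intro x hx
    refine ⟨hull4_subset_crSet v1 v2 v3 v4 v1 v2 ?_ ?_ ?_ ?_ hx,
      hull4_subset_crSet v1 v2 v3 v4 v2 v3 ?_ ?_ ?_ ?_ hx,
      hull4_subset_crSet v1 v2 v3 v4 v3 v4 ?_ ?_ ?_ ?_ hx,
      hull4_subset_crSet v1 v2 v3 v4 v4 v1 ?_ ?_ ?_ ?_ hx⟩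
    · simp [cr_self_left]
    · simp [cr_self_right]
    · exact le_of_lt c1
    · rw [cr_cyc] at c4; exact le_of_lt c4
    · rw [cr_cyc] at c1; exact le_of_lt c1
    · simp [cr_self_left]
    · simp [cr_self_right]
    · exact le_of_lt c2
    · exact le_of_lt c3
    · rw [cr_cyc] at c2; exact le_of_lt c2
    · simp [cr_self_left]
    · simp [cr_self_right]
    · simp [cr_self_right]
    · exact le_of_lt c4
    · rw [cr_cyc] at c3; exact le_of_lt c3
    · simp [cr_self_left]
  · rintro p ⟨h1, h2, h3, h4⟩
    exact mem_quad v1 v2 v3 v4 p c1 c3 h1 h2 h3 h4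

/-- explicit linear map from a `2 × 2` matrix. -/
def L2 (a b c d : ℝ) : (ℝ × ℝ) →ₗ[ℝ] (ℝ × ℝ) where
  toFun p := (a * p.1 + b * p.2, c * p.1 + d * p.2)
  map_add' p q := by
    simp only [Prod.fst_add, Prod.snd_add, Prod.mk_add_mk]
    apply Prod.ext <;> dsimp <;> ring
  map_smul' r p := by
    simp only [Prod.smul_fst, Prod.smul_snd, RingHom.id_apply, Prod.smul_mk, smul_eq_mul]
    apply Prod.ext <;> dsimp <;> ring

/-- explicit linear equivalence from an invertible `2 × 2` matrix. -/
def E2 (a b c d : ℝ) (h : a * d - b * c ≠ 0) : (ℝ × ℝ) ≃ₗ[ℝ] (ℝ × ℝ) :=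
  LinearEquiv.ofLinear (L2 a b c d)
    (L2 (d / (a * d - b * c)) (-b / (a * d - b * c)) (-c / (a * d - b * c)) (a / (a * d - b * c)))
    (by apply LinearMap.ext; intro p; simp only [LinearMap.comp_apply, L2,
          LinearMap.coe_mk, AddHom.coe_mk, LinearMap.id_apply]
        apply Prod.ext
        · simp only []; linear_combination p.1 * mul_inv_cancel₀ h
        · simp only []; linear_combination p.2 * mul_inv_cancel₀ h)
    (by apply LinearMap.ext; intro p; simp only [LinearMap.comp_apply, L2,
          LinearMap.coe_mk, AddHom.coe_mk, LinearMap.id_apply]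
        apply Prod.ext
        · simp only []; linear_combination p.1 * mul_inv_cancel₀ h
        · simp only []; linear_combination p.2 * mul_inv_cancel₀ h)

/-- explicit affine equivalence `p ↦ M p + (e, f)`. -/
def A2 (a b c d e f : ℝ) (h : a * d - b * c ≠ 0) : (ℝ × ℝ) ≃ᵃ[ℝ] (ℝ × ℝ) :=
  (E2 a b c d h).toAffineEquiv.trans (AffineEquiv.constVAdd ℝ (ℝ × ℝ) (e, f))

lemma A2_apply (a b c d e f : ℝ) (h : a * d - b * c ≠ 0) (p : ℝ × ℝ) :
    A2 a b c d e f h p = (a * p.1 + b * p.2 + e, c * p.1 + d * p.2 + f) := by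
  simp only [A2, E2, L2, AffineEquiv.trans_apply, LinearEquiv.coe_toAffineEquiv,
    LinearEquiv.ofLinear_apply, LinearMap.coe_mk, AddHom.coe_mk,
    AffineEquiv.constVAdd_apply, vadd_eq_add, Prod.mk_add_mk]
  apply Prod.ext <;> dsimp <;> ring

lemma image_hull4 (φ : (ℝ × ℝ) ≃ᵃ[ℝ] (ℝ × ℝ)) (p1 p2 p3 p4 : ℝ × ℝ) :
    φ '' convexHull ℝ ({p1, p2, p3, p4} : Set (ℝ × ℝ)) =
      convexHull ℝ ({φ p1, φ p2, φ p3, φ p4} : Set (ℝ × ℝ)) := by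
  have : (φ : (ℝ × ℝ) → (ℝ × ℝ)) '' convexHull ℝ ({p1, p2, p3, p4} : Set (ℝ × ℝ))
      = φ.toAffineMap '' convexHull ℝ ({p1, p2, p3, p4} : Set (ℝ × ℝ)) := rfl
  rw [this, AffineMap.image_convexHull]
  congr 1
  simp [Set.image_insert_eq]

lemma AffineCopy.trans' {A B C : Set (ℝ × ℝ)} (h1 : AffineCopy A B) (h2 : AffineCopy B C) :
    AffineCopy A C := by
  obtain ⟨φ, hφ⟩ := h1; obtain ⟨ψ, hψ⟩ := h2
  exact ⟨φ.trans ψ, by rw [← hψ, ← hφ, ← Set.image_comp]; rfl⟩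

lemma AffineCopy.of_image {A B : Set (ℝ × ℝ)} (h : AffineCopy A B) (φ : (ℝ × ℝ) ≃ᵃ[ℝ] (ℝ × ℝ)) :
    AffineCopy A (φ '' B) := h.trans' ⟨φ, rfl⟩

lemma image_interior_eq (φ : (ℝ × ℝ) ≃ᵃ[ℝ] (ℝ × ℝ)) (S : Set (ℝ × ℝ)) :
    φ '' interior S = interior (φ '' S) := by
  have := (φ.toHomeomorphOfFiniteDimensional).image_interior S
  simpa using this

lemma disjoint_of_separating (S1 S2 : Set (ℝ × ℝ)) (a b : ℝ × ℝ) (hab : a ≠ b)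
    (h1 : S1 ⊆ {p : ℝ × ℝ | 0 ≤ cr a b p}) (h2 : S2 ⊆ {p : ℝ × ℝ | 0 ≤ cr b a p}) :
    Disjoint (interior S1) (interior S2) := by
  have hco : ¬ ((b.2 - a.2 = 0) ∧ (a.1 - b.1 = 0)) := by
    rintro ⟨h1', h2'⟩
    exact hab (Prod.ext (by linarith) (by linarith))
  have hco' : ¬ ((a.2 - b.2 = 0) ∧ (b.1 - a.1 = 0)) := by
    rintro ⟨h1', h2'⟩
    exact hco ⟨by linarith, by linarith⟩
  have k1 : interior S1 ⊆ {p : ℝ × ℝ | 0 < cr a b p} := by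
    intro p hp'
    have hsub := interior_mono h1
    rw [crSet_eq_hp] at hsub
    have h3 := interior_hp_subset _ _ _ hco (hsub hp')
    simp only [mem_setOf_eq] at h3 ⊢
    unfold cr; nlinarith [h3]
  have k2 : interior S2 ⊆ {p : ℝ × ℝ | 0 < cr b a p} := by
    intro p hp'
    have hsub := interior_mono h2
    rw [crSet_eq_hp] at hsub
    have h3 := interior_hp_subset _ _ _ hco' (hsub hp')
    simp only [mem_setOf_eq] at h3 ⊢
    unfold cr; nlinarith [h3]
  rw [Set.disjoint_left]
  intro p hp1 hp2
  have e1 := k1 hp1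
  have e2 := k2 hp2
  simp only [mem_setOf_eq] at e1 e2
  rw [cr_swap] at e2
  linarith

lemma Tg_repr (γ : ℝ) (hγ : 0 < γ) :
    Tg γ = {p : ℝ × ℝ | 0 ≤ p.2 ∧ 0 ≤ 1 - p.1 - (1 - γ) * p.2 ∧ p.2 ≤ 1 ∧ 0 ≤ p.1} := by
  unfold Tg
  rw [quad_repr ((0 : ℝ), (0 : ℝ)) (1, 0) (γ, 1) (0, 1)
    (by unfold cr; dsimp only; nlinarith) (by unfold cr; dsimp only; nlinarith)
    (by unfold cr; dsimp only; nlinarith) (by unfold cr; dsimp only; nlinarith)]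
  ext p
  simp only [mem_setOf_eq, cr]
  constructor
  · rintro ⟨h1, h2, h3, h4⟩
    exact ⟨by nlinarith, by nlinarith, by nlinarith, by nlinarith⟩
  · rintro ⟨h1, h2, h3, h4⟩
    exact ⟨by nlinarith, by nlinarith, by nlinarith, by nlinarith⟩

section Model

variable (s t l δ : ℝ)

/-- normalized model of `Q(α,β)`. -/
def Kst : Set (ℝ × ℝ) := convexHull ℝ {((0:ℝ), (0:ℝ)), (1, 0), (s, t), (0, 1)}

/-- lower piece of the two-piece dissection of `Tg δ`. -/
def PieceOne : Set (ℝ × ℝ) :=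
  convexHull ℝ {((0:ℝ), (0:ℝ)), (1, 0), (1 - l * (1 - δ), l), (0, s * l)}

/-- upper piece of the two-piece dissection of `Tg δ`. -/
def PieceTwo : Set (ℝ × ℝ) :=
  convexHull ℝ {((0:ℝ), s * l), (1 - l * (1 - δ), l), (δ, 1), (0, 1)}

variable {s t l δ}
variable (hs0 : 0 < s) (hs1 : s < 1)
  (hδ0 : 0 < δ) (hδ1 : δ < 1) (hl0 : 0 < l) (hl1 : l < 1) (hsl : s * l < 1)
  (hS0 : 0 < 1 - l * (1 - δ))
  (hc1 : 0 < (1 - l * (1 - δ)) * (1 - s * l) - δ * l * (1 - s))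

set_option linter.unusedSectionVars false

include hs0 hs1 hδ0 hδ1 hl0 hl1 hsl hS0 hc1

lemma pieces_union : PieceOne s l δ ∪ PieceTwo s l δ = Tg δ := by
  have hTg_conv : Convex ℝ (Tg δ) := convex_convexHull ℝ _
  have hT : ∀ q : ℝ × ℝ, (0 ≤ q.2 ∧ 0 ≤ 1 - q.1 - (1 - δ) * q.2 ∧ q.2 ≤ 1 ∧ 0 ≤ q.1)
      → q ∈ Tg δ := by
    intro q hq; rw [Tg_repr δ hδ0]; exact hq
  apply Subset.antisymm
  · apply Set.union_subset
    · unfold PieceOne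
      apply convexHull_min _ hTg_conv
      intro q hq
      simp only [mem_insert_iff, mem_singleton_iff] at hq
      rcases hq with rfl | rfl | rfl | rfl <;>
        exact hT _ ⟨by dsimp only; nlinarith, by dsimp only; nlinarith,
          by dsimp only; nlinarith, by dsimp only; nlinarith⟩
    · unfold PieceTwo
      apply convexHull_min _ hTg_conv
      intro q hq
      simp only [mem_insert_iff, mem_singleton_iff] at hq
      rcases hq with rfl | rfl | rfl | rfl <;>
        exact hT _ ⟨by dsimp only; nlinarith, by dsimp only; nlinarith,
          by dsimp only; nlinarith, by dsimp only; nlinarith⟩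
  · intro p hp'
    rw [Tg_repr δ hδ0] at hp'
    obtain ⟨h1, h2, h3, h4⟩ := hp'
    rcases le_total 0 (cr (0, s * l) (1 - l * (1 - δ), l) p) with hcut | hcut
    · right
      unfold PieceTwo
      apply mem_quad
      · unfold cr; dsimp only; nlinarith
      · unfold cr; dsimp only; nlinarith [mul_pos hδ0 (by nlinarith : (0:ℝ) < 1 - s * l)]
      · exact hcut
      · unfold cr at hcut ⊢; dsimp only at hcut ⊢
        nlinarith [mul_nonneg (by linarith : (0:ℝ) ≤ 1 - l) h2]
      · unfold cr; dsimp only; nlinarith [mul_nonneg hδ0.le (by linarith : (0:ℝ) ≤ 1 - p.2)]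
      · unfold cr; dsimp only; nlinarith [mul_nonneg (by nlinarith : (0:ℝ) ≤ 1 - s * l) h4]
    · left
      unfold PieceOne
      apply mem_quad
      · unfold cr; dsimp only; nlinarith
      · unfold cr; dsimp only; nlinarith [mul_pos (mul_pos hS0 hl0) hs0]
      · unfold cr; dsimp only; nlinarith
      · unfold cr; dsimp only; nlinarith [mul_nonneg hl0.le h2]
      · rw [cr_swap]; linarith
      · unfold cr; dsimp only; nlinarith [mul_nonneg (mul_nonneg hs0.le hl0.le) h4]

lemma pieces_disjoint :
    Disjoint (interior (PieceOne s l δ)) (interior (PieceTwo s l δ)) := by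
  have hne : ((1 - l * (1 - δ), l) : ℝ × ℝ) ≠ (0, s * l) := by
    intro hEq
    have h' := congrArg Prod.fst hEq
    dsimp only at h'
    linarith
  apply disjoint_of_separating _ _ (1 - l * (1 - δ), l) (0, s * l) hne
  · unfold PieceOne
    apply hull4_subset_crSet
    · unfold cr; dsimp only; nlinarith [mul_pos (mul_pos hS0 hl0) hs0]
    · unfold cr; dsimp only
      nlinarith [mul_pos hl0 hS0, mul_pos (mul_pos hl0 (by linarith : (0:ℝ) < 1 - s)) hS0]
    · unfold cr; dsimp only; nlinarith
    · unfold cr; dsimp only; nlinarith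
  · unfold PieceTwo
    apply hull4_subset_crSet
    · unfold cr; dsimp only; nlinarith
    · unfold cr; dsimp only; nlinarith
    · unfold cr; dsimp only; nlinarith [hc1]
    · unfold cr; dsimp only; nlinarith [mul_pos hS0 (by nlinarith : (0:ℝ) < 1 - s * l)]

end Model

lemma A2_image_hull4 (a b c d e f : ℝ) (h : a * d - b * c ≠ 0)
    (p1 p2 p3 p4 q1 q2 q3 q4 : ℝ × ℝ)
    (h1 : (a * p1.1 + b * p1.2 + e, c * p1.1 + d * p1.2 + f) = q1)
    (h2 : (a * p2.1 + b * p2.2 + e, c * p2.1 + d * p2.2 + f) = q2)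
    (h3 : (a * p3.1 + b * p3.2 + e, c * p3.1 + d * p3.2 + f) = q3)
    (h4 : (a * p4.1 + b * p4.2 + e, c * p4.1 + d * p4.2 + f) = q4) :
    A2 a b c d e f h '' convexHull ℝ ({p1, p2, p3, p4} : Set (ℝ × ℝ)) =
      convexHull ℝ ({q1, q2, q3, q4} : Set (ℝ × ℝ)) := by
  rw [image_hull4]
  rw [show (A2 a b c d e f h) p1 = q1 from by rw [A2_apply]; exact h1]
  rw [show (A2 a b c d e f h) p2 = q2 from by rw [A2_apply]; exact h2]
  rw [show (A2 a b c d e f h) p3 = q3 from by rw [A2_apply]; exact h3]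
  rw [show (A2 a b c d e f h) p4 = q4 from by rw [A2_apply]; exact h4]

section Copies

lemma copy_K (α β : ℝ) (hα : 0 < α) (hαβ : α < β) (hβ : β < 1) :
    AffineCopy (Qab α β) (Kst ((1 - β) / (1 - α)) β) := by
  have hα1 : (0:ℝ) < 1 - α := by linarith
  have hβ0 : (0:ℝ) < β := by linarith
  have hβ1 : (0:ℝ) < 1 - β := by linarith
  have hdy : 1 - α * (1 - β) / ((1 - α) * β) = (β - α) / ((1 - α) * β) := by
    field_simp; ring
  have hdy0 : (0:ℝ) < 1 - α * (1 - β) / ((1 - α) * β) := by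
    rw [hdy]; exact div_pos (by linarith) (mul_pos hα1 hβ0)
  have hpos : (0:ℝ) < (1 / (1 - α)) * (1 / (1 - α * (1 - β) / ((1 - α) * β))) :=
    mul_pos (one_div_pos.mpr hα1) (one_div_pos.mpr hdy0)
  have hdet : (1 / (1 - α)) * (1 / (1 - α * (1 - β) / ((1 - α) * β))) - 0 * 0 ≠ 0 := by
    intro h; rw [mul_zero, sub_zero] at h; rw [h] at hpos; exact lt_irrefl 0 hpos
  refine ⟨A2 _ _ _ _ 0 0 hdet, ?_⟩
  unfold Qab Kst
  have hne : β - α ≠ 0 := sub_ne_zero.2 (ne_of_gt hαβ)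
  have hne2 : (1 - α) * β - α * (1 - β) ≠ 0 := by
    intro h; apply hne; linear_combination h
  apply A2_image_hull4
  · apply Prod.ext <;> dsimp only <;> norm_num
  · apply Prod.ext <;> dsimp only
    · field_simp; ring
    · norm_num
  · apply Prod.ext <;> dsimp only
    · field_simp; ring
    · rw [hdy]; field_simp; ring
  · apply Prod.ext <;> dsimp only
    · norm_num
    · rw [hdy]; field_simp; ring

lemma copy_one {s t l δ : ℝ} (hl0 : 0 < l) (hkey : l * (1 - δ) * s = 1 - t) :
    AffineCopy (Kst s t) (PieceOne s l δ) := by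
  have hdet : l * (δ - 1) * 0 - (-1) * l ≠ 0 := by
    intro h; rw [mul_zero, neg_one_mul, zero_sub, neg_neg] at h; exact (ne_of_gt hl0) h
  refine ⟨A2 _ _ _ _ 1 0 hdet, ?_⟩
  unfold Kst PieceOne
  rw [A2_image_hull4 _ _ _ _ _ _ hdet _ _ _ _
    ((1:ℝ), (0:ℝ)) (1 - l * (1 - δ), l) ((0:ℝ), s * l) ((0:ℝ), (0:ℝ))
    (by apply Prod.ext <;> dsimp only <;> ring)
    (by apply Prod.ext <;> dsimp only <;> ring)
    (by apply Prod.ext <;> dsimp only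
        · linear_combination -hkey
        · ring)
    (by apply Prod.ext <;> dsimp only <;> ring)]
  congr 1
  ext q
  simp only [mem_insert_iff, mem_singleton_iff]
  tauto

lemma copy_two_I {s t l δ : ℝ} (hS0 : 0 < 1 - l * (1 - δ)) (hsl : s * l < 1)
    (hkey : l * (1 - δ) * s = 1 - t) (hδI : δ = s + t - 1) :
    AffineCopy (Kst s t) (PieceTwo s l δ) := by
  have hpos : (0:ℝ) < (1 - l * (1 - δ)) * (1 - s * l) := mul_pos hS0 (by linarith)
  have hdet : (1 - l * (1 - δ)) * (1 - s * l) - 0 * (l * (1 - s)) ≠ 0 := by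
    intro h; rw [zero_mul, sub_zero] at h; rw [h] at hpos; exact lt_irrefl 0 hpos
  refine ⟨A2 _ _ _ _ 0 (s * l) hdet, ?_⟩
  unfold Kst PieceTwo
  rw [A2_image_hull4 _ _ _ _ _ _ hdet _ _ _ _
    ((0:ℝ), s * l) (1 - l * (1 - δ), l) (δ, 1) ((0:ℝ), (1:ℝ))
    (by apply Prod.ext <;> dsimp only <;> ring)
    (by apply Prod.ext <;> dsimp only <;> ring)
    (by apply Prod.ext <;> dsimp only
        · linear_combination -hkey - hδI
        · linear_combination hkey + l * s * hδI)
    (by apply Prod.ext <;> dsimp only <;> ring)]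

lemma copy_two_II {s t l δ : ℝ} (hs0 : 0 < s) (hS0 : 0 < 1 - l * (1 - δ)) (hsl : s * l < 1)
    (hkey : l * (1 - δ) * s = 1 - t) (hδII : δ * s = t * (s + t - 1))
    (hlst : l * (s + t) = 1) :
    AffineCopy (Kst s t) (PieceTwo s l δ) := by
  have hpos : (0:ℝ) < (1 - l * (1 - δ)) * (1 - s * l) := mul_pos hS0 (by linarith)
  have hdet : 0 * (l * (1 - s)) - (1 - l * (1 - δ)) * (1 - s * l) ≠ 0 := by
    intro h; rw [zero_mul, zero_sub, neg_eq_zero] at h; rw [h] at hpos; exact lt_irrefl 0 hpos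
  refine ⟨A2 _ _ _ _ 0 (s * l) hdet, ?_⟩
  unfold Kst PieceTwo
  rw [A2_image_hull4 _ _ _ _ _ _ hdet _ _ _ _
    ((0:ℝ), s * l) ((0:ℝ), (1:ℝ)) (δ, 1) (1 - l * (1 - δ), l)
    (by apply Prod.ext <;> dsimp only <;> ring)
    (by apply Prod.ext <;> dsimp only <;> ring)
    (by apply Prod.ext <;> dsimp only
        · have h2 : (0 + (1 - l * (1 - δ)) * t + 0 - δ) * s = 0 := by
            linear_combination (-t) * hkey - hδII
          rcases mul_eq_zero.1 h2 with h3 | h3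
          · linarith
          · exact absurd h3 (ne_of_gt hs0)
        · linear_combination (1 - s) * hlst)
    (by apply Prod.ext <;> dsimp only <;> ring)]
  congr 1
  ext q
  simp only [mem_insert_iff, mem_singleton_iff]
  tauto

end Copies

set_option maxHeartbeats 1000000 in
lemma model_dissect (α β δ : ℝ) (hα : 0 < α) (hαβ : α < β) (hβ : β < 1)
    (hδ : δ = α * (1 - β) / (1 - α) ∨ δ = α * β) :
    ∃ P₁ P₂ : Set (ℝ × ℝ), P₁ ∪ P₂ = Tg δ ∧ Disjoint (interior P₁) (interior P₂) ∧
      AffineCopy (Qab α β) P₁ ∧ AffineCopy (Qab α β) P₂ := by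
  have hα1 : (0:ℝ) < 1 - α := by linarith
  have hβ0 : (0:ℝ) < β := by linarith
  have hβ1 : (0:ℝ) < 1 - β := by linarith
  obtain ⟨s, hs⟩ : ∃ x : ℝ, x = (1 - β) / (1 - α) := ⟨_, rfl⟩
  obtain ⟨t, ht⟩ : ∃ x : ℝ, x = β := ⟨_, rfl⟩
  have hcopyK : AffineCopy (Qab α β) (Kst s t) := by
    rw [hs, ht]; exact copy_K α β hα hαβ hβ
  have hs0 : 0 < s := by rw [hs]; exact div_pos hβ1 hα1
  have hs1 : s < 1 := by rw [hs]; exact (div_lt_one hα1).2 (by linarith)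
  have ht0 : 0 < t := by rw [ht]; exact hβ0
  have ht1 : t < 1 := by rw [ht]; exact hβ
  have hst : 1 - t < s := by
    rw [hs, ht, lt_div_iff₀ hα1]; nlinarith
  rcases hδ with hδc | hδc
  · -- case I : δ = s + t - 1
    have hδI : δ = s + t - 1 := by rw [hδc, hs, ht]; field_simp; ring
    have hδ0 : 0 < δ := by rw [hδI]; linarith
    have hδ1 : δ < 1 := by rw [hδI]; linarith
    have hδ1' : (0:ℝ) < 1 - δ := by linarith
    obtain ⟨l, hl⟩ : ∃ x : ℝ, x = (1 - t) / (s * (1 - δ)) := ⟨_, rfl⟩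
    have hkey : l * (1 - δ) * s = 1 - t := by
      rw [hl]; field_simp
    have hl0 : 0 < l := by rw [hl]; exact div_pos (by linarith) (mul_pos hs0 hδ1')
    have hl1 : l < 1 := by
      rw [hl, div_lt_one (mul_pos hs0 hδ1')]
      nlinarith [hδI]
    have hsl : s * l < 1 := by
      nlinarith [hkey, hδI]
    have hS0 : 0 < 1 - l * (1 - δ) := by
      nlinarith [hkey]
    have hc1 : 0 < (1 - l * (1 - δ)) * (1 - s * l) - δ * l * (1 - s) := by
      have hmul : ((1 - l * (1 - δ)) * (1 - s * l) - δ * l * (1 - s)) * (s * (1 - δ))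
          = (s + t - 1) * (1 - s) * t := by
        linear_combination (l * (1 - δ) * s + (1 - t) - 1 - s * (1 - δ)) * hkey
          + (-(t * s)) * hδI
      have hP : 0 < s * (1 - δ) := mul_pos hs0 hδ1'
      have hR : 0 < (s + t - 1) * (1 - s) * t :=
        mul_pos (mul_pos (by linarith) (by linarith)) ht0
      by_contra hcon
      push_neg at hcon
      nlinarith [hmul, hP, hR, mul_nonneg (neg_nonneg.2 hcon) hP.le]
    exact ⟨PieceOne s l δ, PieceTwo s l δ,
      pieces_union hs0 hs1 hδ0 hδ1 hl0 hl1 hsl hS0 hc1,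
      pieces_disjoint hs0 hs1 hδ0 hδ1 hl0 hl1 hsl hS0 hc1,
      hcopyK.trans' (copy_one hl0 hkey),
      hcopyK.trans' (copy_two_I hS0 hsl hkey hδI)⟩
  · -- case II : δ = α β,  δ s = t (s + t - 1)
    have hδeq : δ * s = t * (s + t - 1) := by
      rw [hδc, hs, ht]; field_simp; ring
    have hδ0 : 0 < δ := by rw [hδc]; positivity
    have hδ1 : δ < 1 := by rw [hδc]; nlinarith
    have hδ1' : (0:ℝ) < 1 - δ := by linarith
    obtain ⟨l, hl⟩ : ∃ x : ℝ, x = (1 - t) / (s * (1 - δ)) := ⟨_, rfl⟩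
    have hkey : l * (1 - δ) * s = 1 - t := by
      rw [hl]; field_simp
    have hsd : s * (1 - δ) = (1 - t) * (s + t) := by
      linear_combination - hδeq
    have hlst : l * (s + t) = 1 := by
      have hne : (1 - t) * (s + t) ≠ 0 :=
        ne_of_gt (mul_pos (by linarith) (by linarith))
      rw [hl, hsd, div_mul_eq_mul_div, div_eq_one_iff_eq hne]
    have hl0 : 0 < l := by rw [hl]; exact div_pos (by linarith) (mul_pos hs0 hδ1')
    have hl1 : l < 1 := by nlinarith [hlst]
    have hsl : s * l < 1 := by nlinarith [hlst, hl0]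
    have hS0 : 0 < 1 - l * (1 - δ) := by nlinarith [hkey]
    have hc1 : 0 < (1 - l * (1 - δ)) * (1 - s * l) - δ * l * (1 - s) := by
      have hmul : ((1 - l * (1 - δ)) * (1 - s * l) - δ * l * (1 - s)) * (s * (1 - δ))
          = (s + t - 1) * t * (1 - t) := by
        linear_combination (l * (1 - δ) * s + (1 - t) - 1 - s * (1 - δ)) * hkey
          + (-t) * hδeq
      have hP : 0 < s * (1 - δ) := mul_pos hs0 hδ1'
      have hR : 0 < (s + t - 1) * t * (1 - t) :=
        mul_pos (mul_pos (by linarith) ht0) (by linarith)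
      by_contra hcon
      push_neg at hcon
      nlinarith [hmul, hP, hR, mul_nonneg (neg_nonneg.2 hcon) hP.le]
    exact ⟨PieceOne s l δ, PieceTwo s l δ,
      pieces_union hs0 hs1 hδ0 hδ1 hl0 hl1 hsl hS0 hc1,
      pieces_disjoint hs0 hs1 hδ0 hδ1 hl0 hl1 hsl hS0 hc1,
      hcopyK.trans' (copy_one hl0 hkey),
      hcopyK.trans' (copy_two_II hs0 hS0 hsl hkey hδeq hlst)⟩

lemma AffineCopy_def {A B : Set (ℝ × ℝ)} (φ : (ℝ × ℝ) ≃ᵃ[ℝ] (ℝ × ℝ)) (h : φ '' A = B) :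
    AffineCopy A B := ⟨φ, h⟩

lemma strip_dissect (α β δ : ℝ) (X1 X2 Y1 Y2 : ℝ) (hX : X1 < X2) (hY : Y1 < Y2)
    (hr : Y2 - Y1 = δ * (X2 - X1) ∨ X2 - X1 = δ * (Y2 - Y1))
    (hmodel : ∃ P₁ P₂ : Set (ℝ × ℝ), P₁ ∪ P₂ = Tg δ ∧ Disjoint (interior P₁) (interior P₂) ∧
      AffineCopy (Qab α β) P₁ ∧ AffineCopy (Qab α β) P₂) :
    ∃ S₁ S₂ : Set (ℝ × ℝ),
      S₁ ∪ S₂ = convexHull ℝ ({(X1, 0), (X2, 0), (Y2, 1), (Y1, 1)} : Set (ℝ × ℝ)) ∧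
      Disjoint (interior S₁) (interior S₂) ∧
      AffineCopy (Qab α β) S₁ ∧ AffineCopy (Qab α β) S₂ := by
  obtain ⟨P₁, P₂, hun, hdis, hco1, hco2⟩ := hmodel
  have hψ : ∃ ψ : (ℝ × ℝ) ≃ᵃ[ℝ] (ℝ × ℝ),
      ψ '' Tg δ = convexHull ℝ ({(X1, 0), (X2, 0), (Y2, 1), (Y1, 1)} : Set (ℝ × ℝ)) := by
    rcases hr with hr | hr
    · have hdet : (X2 - X1) * 1 - (Y1 - X1) * 0 ≠ 0 := by
        intro h; rw [mul_zero, sub_zero, mul_one] at h; linarith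
      refine ⟨A2 _ _ _ _ X1 0 hdet, ?_⟩
      unfold Tg
      rw [A2_image_hull4 _ _ _ _ _ _ hdet _ _ _ _
        ((X1 : ℝ), (0:ℝ)) ((X2 : ℝ), (0:ℝ)) ((Y2 : ℝ), (1:ℝ)) ((Y1 : ℝ), (1:ℝ))
        (by apply Prod.ext <;> dsimp only <;> ring)
        (by apply Prod.ext <;> dsimp only <;> ring)
        (by apply Prod.ext <;> dsimp only
            · linear_combination -hr
            · ring)
        (by apply Prod.ext <;> dsimp only <;> ring)]
    · have hdet : (Y1 - Y2) * (-1) - (X2 - Y2) * 0 ≠ 0 := by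
        intro h; rw [mul_zero, sub_zero, mul_neg_one, neg_sub] at h; linarith
      refine ⟨A2 _ _ _ _ Y2 1 hdet, ?_⟩
      unfold Tg
      rw [A2_image_hull4 _ _ _ _ _ _ hdet _ _ _ _
        ((Y2 : ℝ), (1:ℝ)) ((Y1 : ℝ), (1:ℝ)) ((X1 : ℝ), (0:ℝ)) ((X2 : ℝ), (0:ℝ))
        (by apply Prod.ext <;> dsimp only <;> ring)
        (by apply Prod.ext <;> dsimp only <;> ring)
        (by apply Prod.ext <;> dsimp only
            · linear_combination hr
            · ring)
        (by apply Prod.ext <;> dsimp only <;> ring)]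
      congr 1
      ext q
      simp only [mem_insert_iff, mem_singleton_iff]
      tauto
  obtain ⟨ψ, hψ⟩ := hψ
  refine ⟨ψ '' P₁, ψ '' P₂, ?_, ?_, hco1.of_image ψ, hco2.of_image ψ⟩
  · rw [← Set.image_union, hun, hψ]
  · rw [← image_interior_eq, ← image_interior_eq]
    exact Set.disjoint_image_of_injective ψ.toEquiv.injective hdis

lemma seq_mono (X : ℕ → ℝ) (m : ℕ) (h : ∀ i, i < m → X i < X (i + 1)) :
    ∀ a b, a ≤ b → b ≤ m → X a ≤ X b := by
  intro a b hab hbm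
  induction b with
  | zero => simp_all
  | succ n ih =>
    rcases Nat.lt_or_ge a (n + 1) with h' | h'
    · have h1 : X a ≤ X n := ih (by omega) (by omega)
      have h2 : X n < X (n + 1) := h n (by omega)
      linarith
    · have : a = n + 1 := by omega
      rw [this]

lemma strips_disjoint_aux (X1 Y1 X2 Y2 : ℝ) (S1 S2 : Set (ℝ × ℝ))
    (hle1 : X1 ≤ X2) (hle2 : Y1 ≤ Y2)
    (h1 : S1 ⊆ hp 1 (X1 - Y1) X1) (h2 : S2 ⊆ hp (-1) (Y2 - X2) (-X2))
    (h2y0 : S2 ⊆ hp 0 (-1) 0) (h2y1 : S2 ⊆ hp 0 1 1) :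
    Disjoint (interior S1) (interior S2) := by
  rw [Set.disjoint_left]
  intro p hp1 hp2
  have e1 := interior_hp_subset 1 (X1 - Y1) X1 (by simp) (interior_mono h1 hp1)
  have e2 := interior_hp_subset (-1) (Y2 - X2) (-X2) (by simp) (interior_mono h2 hp2)
  have ey0 : 0 ≤ p.2 := by
    have := h2y0 (interior_subset hp2); simp only [hp, mem_setOf_eq] at this; linarith
  have ey1 : p.2 ≤ 1 := by
    have := h2y1 (interior_subset hp2); simp only [hp, mem_setOf_eq] at this; linarith
  simp only [mem_setOf_eq] at e1 e2
  nlinarith [mul_nonneg (sub_nonneg.2 hle1) (by linarith : (0:ℝ) ≤ 1 - p.2),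
    mul_nonneg (sub_nonneg.2 hle2) ey0]

/-- the `i`-th strip determined by cut positions `X` (bottom) and `Y` (top). -/
def stripSet (X Y : ℕ → ℝ) (i : ℕ) : Set (ℝ × ℝ) :=
  convexHull ℝ ({(X i, 0), (X (i+1), 0), (Y (i+1), 1), (Y i, 1)} : Set (ℝ × ℝ))

lemma stripSet_disjoint (X Y : ℕ → ℝ) (i i' : ℕ)
    (hXi : X i ≤ X (i+1)) (hYi : Y i ≤ Y (i+1))
    (hXi' : X i' ≤ X (i'+1)) (hYi' : Y i' ≤ Y (i'+1))
    (hXX : X (i+1) ≤ X i') (hYY : Y (i+1) ≤ Y i') :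
    Disjoint (interior (stripSet X Y i)) (interior (stripSet X Y i')) := by
  apply strips_disjoint_aux (X (i+1)) (Y (i+1)) (X i') (Y i') _ _ hXX hYY
  · unfold stripSet
    apply hull4_subset_hp <;> simp only [hp, mem_setOf_eq] <;> linarith
  · unfold stripSet
    apply hull4_subset_hp <;> simp only [hp, mem_setOf_eq] <;> linarith
  · unfold stripSet
    apply hull4_subset_hp <;> simp only [hp, mem_setOf_eq] <;> linarith
  · unfold stripSet
    apply hull4_subset_hp <;> simp only [hp, mem_setOf_eq] <;> linarith

lemma discrete_ivt (g : ℕ → ℝ) (m : ℕ) (hm : 1 ≤ m) (x : ℝ)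
    (hmono : ∀ a b, a ≤ b → b ≤ m → g a ≤ g b) (h0 : g 0 ≤ x) (hx : x ≤ g m) :
    ∃ i, i < m ∧ g i ≤ x ∧ x ≤ g (i+1) := by
  induction m with
  | zero => omega
  | succ n ih =>
    rcases Nat.eq_zero_or_pos n with hn | hn
    · subst hn; exact ⟨0, by omega, h0, hx⟩
    · by_cases h : x ≤ g n
      · obtain ⟨i, h1, h2, h3⟩ := ih hn (fun a b hab hbm => hmono a b hab (by omega)) h
        exact ⟨i, by omega, h2, h3⟩
      · exact ⟨n, by omega, le_of_not_ge h, hx⟩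

set_option maxHeartbeats 2000000 in
lemma master (α β γ δ : ℝ) (k m : ℕ) (hk : k = m + m) (hm : 1 ≤ m)
    (X Y : ℕ → ℝ) (hX0 : X 0 = 0) (hY0 : Y 0 = 0) (hXm : X m = 1) (hYm : Y m = γ)
    (hincX : ∀ i, i < m → X i < X (i + 1))
    (hincY : ∀ i, i < m → Y i < Y (i + 1))
    (hrat : ∀ i, i < m →
      (Y (i+1) - Y i = δ * (X (i+1) - X i) ∨ X (i+1) - X i = δ * (Y (i+1) - Y i)))
    (hmodel : ∃ P₁ P₂ : Set (ℝ × ℝ), P₁ ∪ P₂ = Tg δ ∧ Disjoint (interior P₁) (interior P₂) ∧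
      AffineCopy (Qab α β) P₁ ∧ AffineCopy (Qab α β) P₂) :
    ∃ f : Fin k → Set (ℝ × ℝ), (⋃ i, f i) = Tg γ ∧
      (Pairwise fun i j => Disjoint (interior (f i)) (interior (f j))) ∧
      ∀ i, AffineCopy (Qab α β) (f i) := by
  have mX := seq_mono X m hincX
  have mY := seq_mono Y m hincY
  have hγ0 : 0 < γ := by
    have h1 : Y 0 < Y 1 := hincY 0 (by omega)
    have h2 : Y 1 ≤ Y m := mY 1 m hm le_rfl
    rw [← hYm]; linarith [hY0 ▸ h1]
  have hexists : ∀ i : Fin m, ∃ S₁ S₂ : Set (ℝ × ℝ),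
      S₁ ∪ S₂ = stripSet X Y i ∧ Disjoint (interior S₁) (interior S₂) ∧
      AffineCopy (Qab α β) S₁ ∧ AffineCopy (Qab α β) S₂ := fun i =>
    strip_dissect α β δ _ _ _ _ (hincX i i.2) (hincY i i.2) (hrat i i.2) hmodel
  choose S1 S2 hSun hSdis hSc1 hSc2 using hexists
  have hsub1 : ∀ i : Fin m, S1 i ⊆ stripSet X Y i := fun i => by
    rw [← hSun i]; exact Set.subset_union_left
  have hsub2 : ∀ i : Fin m, S2 i ⊆ stripSet X Y i := fun i => by
    rw [← hSun i]; exact Set.subset_union_right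
  have hstripTg : ∀ i : Fin m, stripSet X Y i ⊆ Tg γ := by
    intro i
    have hTgconv : Convex ℝ (Tg γ) := convex_convexHull ℝ _
    have hb1 : 0 ≤ X (i : ℕ) := hX0 ▸ mX 0 i (by omega) (by omega)
    have hb2 : X ((i : ℕ) + 1) ≤ 1 := hXm ▸ mX ((i:ℕ)+1) m (by omega) le_rfl
    have hb3 : 0 ≤ Y (i : ℕ) := hY0 ▸ mY 0 i (by omega) (by omega)
    have hb4 : Y ((i : ℕ) + 1) ≤ γ := hYm ▸ mY ((i:ℕ)+1) m (by omega) le_rfl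
    have hb5 : X (i : ℕ) ≤ X ((i:ℕ)+1) := le_of_lt (hincX i i.2)
    have hb6 : Y (i : ℕ) ≤ Y ((i:ℕ)+1) := le_of_lt (hincY i i.2)
    unfold stripSet
    apply convexHull_min _ hTgconv
    intro q hq
    rw [Tg_repr γ hγ0]
    simp only [mem_insert_iff, mem_singleton_iff] at hq
    rcases hq with rfl | rfl | rfl | rfl <;>
      exact ⟨by dsimp only; linarith, by dsimp only; linarith,
        by dsimp only; linarith, by dsimp only; linarith⟩
  refine ⟨fun j => if h : (j : ℕ) < m then S1 ⟨j, h⟩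
    else S2 ⟨(j : ℕ) - m, by have := j.isLt; omega⟩, ?_, ?_, ?_⟩
  · -- union
    apply Subset.antisymm
    · apply Set.iUnion_subset
      intro j
      by_cases h : (j : ℕ) < m
      · rw [dif_pos h]
        exact (hsub1 _).trans (hstripTg _)
      · rw [dif_neg h]
        exact (hsub2 _).trans (hstripTg _)
    · intro x hx
      rw [Tg_repr γ hγ0] at hx
      obtain ⟨h1, h2, h3, h4⟩ := hx
      obtain ⟨i, him, hgi, hgi1⟩ := discrete_ivt (fun i => (1 - x.2) * X i + x.2 * Y i)
        m hm x.1
        (by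
          intro a b hab hbm
          have := mX a b hab hbm
          have := mY a b hab hbm
          nlinarith)
        (by rw [hX0, hY0]; linarith)
        (by rw [hXm, hYm]; nlinarith)
      try dsimp only at hgi hgi1
      have hxin : x ∈ stripSet X Y i := by
        unfold stripSet
        apply mem_quad
        · unfold cr; dsimp only; nlinarith [hincX i him]
        · unfold cr; dsimp only; nlinarith [hincY i him]
        · unfold cr; dsimp only; nlinarith [mul_nonneg (by linarith [hincX i him] : (0:ℝ) ≤ X (i+1) - X i) h1,
            hincX i him]
        · unfold cr; dsimp only; nlinarith
        · unfold cr; dsimp only; nlinarith [hincY i him]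
        · unfold cr; dsimp only; nlinarith
      rw [← hSun ⟨i, him⟩] at hxin
      rcases hxin with hxin | hxin
      · refine mem_iUnion.2 ⟨⟨i, by omega⟩, ?_⟩
        dsimp only
        rw [dif_pos him]
        exact hxin
      · refine mem_iUnion.2 ⟨⟨i + m, by omega⟩, ?_⟩
        dsimp only
        rw [dif_neg (by omega : ¬ i + m < m)]
        have hidx : (⟨i + m - m, by omega⟩ : Fin m) = ⟨i, him⟩ := by
          apply Fin.ext
          show i + m - m = i
          omega
        rw [hidx]
        exact hxin
  · -- pairwise disjoint
    have hcross : ∀ (a b : ℕ), a < m → b < m → a < b → ∀ (T T' : Set (ℝ × ℝ)),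
        T ⊆ stripSet X Y a → T' ⊆ stripSet X Y b →
        Disjoint (interior T) (interior T') := by
      intro a b ha hb hab T T' hT hT'
      have hd : Disjoint (interior (stripSet X Y a)) (interior (stripSet X Y b)) := by
        apply stripSet_disjoint
        · exact le_of_lt (hincX a ha)
        · exact le_of_lt (hincY a ha)
        · exact le_of_lt (hincX b hb)
        · exact le_of_lt (hincY b hb)
        · exact mX (a + 1) b (by omega) (by omega)
        · exact mY (a + 1) b (by omega) (by omega)
      exact hd.mono (interior_mono hT) (interior_mono hT')
    intro j j' hne
    dsimp only
    have hjk := j.isLt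
    have hjk' := j'.isLt
    by_cases h : (j : ℕ) < m <;> by_cases h' : (j' : ℕ) < m
    · rw [dif_pos h, dif_pos h']
      have hne' : (j : ℕ) ≠ (j' : ℕ) := fun hc => hne (Fin.ext hc)
      rcases Nat.lt_or_ge (j : ℕ) (j' : ℕ) with hlt | hge
      · exact hcross _ _ h h' hlt _ _ (hsub1 _) (hsub1 _)
      · exact (hcross _ _ h' h (by omega) _ _ (hsub1 _) (hsub1 _)).symm
    · rw [dif_pos h, dif_neg h']
      rcases Nat.lt_trichotomy (j : ℕ) ((j' : ℕ) - m) with hlt | heq | hgt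
      · exact hcross _ _ h (by omega) hlt _ _ (hsub1 _) (hsub2 _)
      · have : (⟨(j : ℕ), h⟩ : Fin m) = ⟨(j' : ℕ) - m, by omega⟩ := by
          apply Fin.ext; show (j : ℕ) = (j' : ℕ) - m; omega
        rw [this]
        exact hSdis _
      · exact (hcross _ _ (by omega) h hgt _ _ (hsub2 _) (hsub1 _)).symm
    · rw [dif_neg h, dif_pos h']
      rcases Nat.lt_trichotomy ((j : ℕ) - m) (j' : ℕ) with hlt | heq | hgt
      · exact hcross _ _ (by omega) h' hlt _ _ (hsub2 _) (hsub1 _)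
      · have : (⟨(j : ℕ) - m, by omega⟩ : Fin m) = ⟨(j' : ℕ), h'⟩ := by
          apply Fin.ext; show (j : ℕ) - m = (j' : ℕ); omega
        rw [this]
        exact (hSdis _).symm
      · exact (hcross _ _ h' (by omega) hgt _ _ (hsub1 _) (hsub2 _)).symm
    · rw [dif_neg h, dif_neg h']
      have hne' : (j : ℕ) - m ≠ (j' : ℕ) - m := by
        intro hc; apply hne; apply Fin.ext; omega
      rcases Nat.lt_or_ge ((j : ℕ) - m) ((j' : ℕ) - m) with hlt | hge
      · exact hcross _ _ (by omega) (by omega) hlt _ _ (hsub2 _) (hsub2 _)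
      · exact (hcross ((j' : ℕ) - m) ((j : ℕ) - m) (by omega) (by omega) (by omega)
          _ _ (hsub2 _) (hsub2 _)).symm
  · -- affine copies
    intro j
    dsimp only
    by_cases h : (j : ℕ) < m
    · rw [dif_pos h]; exact hSc1 _
    · rw [dif_neg h]; exact hSc2 _

end

set_option maxHeartbeats 2000000 in
/-- For `αβ·min{(1−β)/((1−α)β), 1} ≤ γ < 1` and every even `k ≥ 4`, the trapezoid
`T(γ)` has a dissection into `k` pieces, each affinely equivalent to `Q(α,β)`. -/
theorem Tg_into_k_Qab (α β γ : ℝ) (k : ℕ)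
    (hα : 0 < α) (hαβ : α < β) (hβ : β < 1)
    (hγ₁ : α * β * min ((1 - β) / ((1 - α) * β)) 1 ≤ γ) (hγ₂ : γ < 1)
    (hk : 4 ≤ k) (hke : Even k) :
    ∃ f : Fin k → Set (ℝ × ℝ),
      (⋃ i, f i) = Tg γ ∧
      (Pairwise fun i j => Disjoint (interior (f i)) (interior (f j))) ∧
      ∀ i, AffineCopy (Qab α β) (f i) := by
  obtain ⟨m, hmk⟩ := hke
  have hm1 : 1 ≤ m := by omega
  have hα1 : (0:ℝ) < 1 - α := by linarith
  have hβ0 : (0:ℝ) < β := by linarith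
  have hβ1 : (0:ℝ) < 1 - β := by linarith
  have hkey : α * β * ((1 - β) / ((1 - α) * β)) = α * (1 - β) / (1 - α) := by
    field_simp
  have hmin : α * β * min ((1 - β) / ((1 - α) * β)) 1
      = min (α * (1 - β) / (1 - α)) (α * β) := by
    rcases le_total ((1 - β) / ((1 - α) * β)) 1 with h | h
    · rw [min_eq_left h, hkey, min_eq_left]
      rw [← hkey]
      nlinarith [mul_le_mul_of_nonneg_left h (mul_pos hα hβ0).le]
    · rw [min_eq_right h, mul_one, min_eq_right]
      rw [← hkey]
      nlinarith [mul_le_mul_of_nonneg_left h (mul_pos hα hβ0).le]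
  rw [hmin] at hγ₁
  obtain ⟨δ, hδeq⟩ : ∃ x : ℝ, x = min (α * (1 - β) / (1 - α)) (α * β) := ⟨_, rfl⟩
  have hδle : δ ≤ γ := hδeq ▸ hγ₁
  have hδcase : δ = α * (1 - β) / (1 - α) ∨ δ = α * β := by
    rw [hδeq]; exact min_choice _ _
  have hδ0 : 0 < δ := by
    rw [hδeq]; exact lt_min (div_pos (mul_pos hα hβ1) hα1) (mul_pos hα hβ0)
  have hδ1 : δ < 1 := by
    rw [hδeq]; exact lt_of_le_of_lt (min_le_right _ _) (by nlinarith)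
  have hmodel := model_dissect α β δ hα hαβ hβ hδcase
  have hm0 : (0:ℝ) < (m:ℝ) := by exact_mod_cast Nat.pos_of_ne_zero (by omega)
  rcases eq_or_lt_of_le hδle with hEq | hLt
  · -- γ = δ : m equal strips of ratio δ
    have hγ0 : 0 < γ := hEq ▸ hδ0
    apply master α β γ δ k m hmk hm1
      (fun i => (i:ℝ)/(m:ℝ)) (fun i => γ*(i:ℝ)/(m:ℝ))
      (by simp) (by simp) (by field_simp) (by field_simp)
      ?_ ?_ ?_ hmodel
    · intro i hi
      rw [div_lt_div_iff₀ hm0 hm0]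
      push_cast
      nlinarith
    · intro i hi
      rw [div_lt_div_iff₀ hm0 hm0]
      push_cast
      nlinarith
    · intro i hi
      left
      rw [← hEq]
      push_cast
      ring
  · -- δ < γ : m - 1 strips of ratio δ and one flipped strip
    obtain ⟨v, hv⟩ : ∃ x : ℝ, x = δ*(γ-δ)/(1-δ^2) := ⟨_, rfl⟩
    have hd2 : (0:ℝ) < 1 - δ^2 := by nlinarith
    have hv0 : 0 < v := by rw [hv]; exact div_pos (mul_pos hδ0 (by linarith)) hd2
    have hv1 : v < 1 := by rw [hv, div_lt_one hd2]; nlinarith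
    have hvkey : v * (1 - δ^2) = δ*(γ-δ) := by rw [hv]; field_simp
    have hm2 : 2 ≤ m := by omega
    have hm1' : (0:ℝ) < (m:ℝ) - 1 := by
      have : (2:ℝ) ≤ (m:ℝ) := by exact_mod_cast hm2
      linarith
    obtain ⟨u, hu⟩ : ∃ x : ℝ, x = (1 - v)/((m:ℝ) - 1) := ⟨_, rfl⟩
    have hu0 : 0 < u := by rw [hu]; exact div_pos (by linarith) hm1'
    have hukey : u * ((m:ℝ) - 1) = 1 - v := by rw [hu]; field_simp
    apply master α β γ δ k m hmk hm1
      (fun i => if i < m then (i:ℝ)*u else 1)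
      (fun i => if i < m then δ*((i:ℝ)*u) else γ)
      (by simp [Nat.pos_of_ne_zero (by omega : m ≠ 0)])
      (by simp [Nat.pos_of_ne_zero (by omega : m ≠ 0)])
      (by simp) (by simp)
      ?_ ?_ ?_ hmodel
    · intro i hi
      by_cases h2 : i + 1 < m
      · rw [if_pos hi, if_pos h2]
        push_cast
        nlinarith
      · rw [if_pos hi, if_neg h2]
        have hc : (i:ℝ) = (m:ℝ) - 1 := by
          have h3 : i + 1 = m := by omega
          have h4 : ((i:ℕ):ℝ) + 1 = ((m:ℕ):ℝ) := by exact_mod_cast congrArg Nat.cast h3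
          linarith
        rw [hc, mul_comm, hukey]
        linarith
    · intro i hi
      by_cases h2 : i + 1 < m
      · rw [if_pos hi, if_pos h2]
        push_cast
        nlinarith
      · rw [if_pos hi, if_neg h2]
        have hc : (i:ℝ) = (m:ℝ) - 1 := by
          have h3 : i + 1 = m := by omega
          have h4 : ((i:ℕ):ℝ) + 1 = ((m:ℕ):ℝ) := by exact_mod_cast congrArg Nat.cast h3
          linarith
        rw [hc, mul_comm ((m:ℝ) - 1) u, hukey]
        nlinarith [mul_pos hδ0 hv0]
    · intro i hi
      by_cases h2 : i + 1 < m
      · left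
        simp only [if_pos hi, if_pos h2]
        push_cast
        ring
      · right
        simp only [if_pos hi, if_neg h2]
        have hc : (i:ℝ) = (m:ℝ) - 1 := by
          have h3 : i + 1 = m := by omega
          have h4 : ((i:ℕ):ℝ) + 1 = ((m:ℕ):ℝ) := by exact_mod_cast congrArg Nat.cast h3
          linarith
        rw [hc, mul_comm ((m:ℝ) - 1) u, hukey]
        linear_combination hvkey
end

section
/- For all real numbers α, β, γ with 0 < α < β < 1 and 0 < γ < 1, the quadrangle Q(αγ, βγ) admits a dissection into two pieces, one affinely equivalent to Q(α, β) and the other affinely equivalent to the trapezoid T(γ). -/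
open Set

noncomputable def lmap2 (p q r s : ℝ) : (ℝ × ℝ) →ₗ[ℝ] (ℝ × ℝ) where
  toFun v := (p * v.1 + q * v.2, r * v.1 + s * v.2)
  map_add' u v := by simp [Prod.ext_iff]; constructor <;> ring
  map_smul' c v := by simp [Prod.ext_iff, smul_eq_mul]; constructor <;> ring

noncomputable def linEqv2 (p q r s : ℝ) (h : p * s - q * r ≠ 0) : (ℝ × ℝ) ≃ₗ[ℝ] (ℝ × ℝ) :=
  LinearEquiv.ofLinear (lmap2 p q r s)
    (lmap2 (s / (p * s - q * r)) (-q / (p * s - q * r))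
      (-r / (p * s - q * r)) (p / (p * s - q * r)))
    (by
      apply LinearMap.ext; intro v
      simp [lmap2, Prod.ext_iff]
      have h1 : -(r * q) + s * p ≠ 0 := by intro e; apply h; linarith
      constructor
      · field_simp; ring
      · field_simp
        rw [div_eq_iff (by intro e; apply h; linarith)]; ring)
    (by
      apply LinearMap.ext; intro v
      simp [lmap2, Prod.ext_iff]
      constructor <;> (rw [div_mul_eq_mul_div, div_mul_eq_mul_div, ← add_div, div_eq_iff h]; ring))

lemma linEqv2_apply (p q r s : ℝ) (h : p * s - q * r ≠ 0) (v : ℝ × ℝ) :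
    linEqv2 p q r s h v = (p * v.1 + q * v.2, r * v.1 + s * v.2) := rfl

lemma seg_split_s8 {E : Type*} [AddCommGroup E] [Module ℝ E] {z w m x : E}
    (hm : m ∈ segment ℝ z w) (hx : x ∈ segment ℝ z w) :
    x ∈ segment ℝ z m ∪ segment ℝ m w := by
  obtain ⟨a, b, ha, hb, hab, rfl⟩ := hm
  obtain ⟨c, d, hc, hd, hcd, rfl⟩ := hx
  by_cases hdb : d ≤ b
  · left
    rcases eq_or_lt_of_le hb with hb0 | hb0
    · have hd0 : d = 0 := le_antisymm (hb0 ▸ hdb) hd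
      have hc1 : c = 1 := by linarith
      refine ⟨1, 0, zero_le_one, le_refl 0, by ring, ?_⟩
      rw [hd0, hc1]; module
    · refine ⟨1 - d / b, d / b, by
        have : d / b ≤ 1 := (div_le_one hb0).2 hdb
        linarith, by positivity, by ring, ?_⟩
      have hbne : b ≠ 0 := ne_of_gt hb0
      have ha1 : a = 1 - b := by linarith
      have hc1 : c = 1 - d := by linarith
      rw [ha1, hc1]
      match_scalars <;> (field_simp; try ring)
  · right
    push_neg at hdb
    have ha0 : 0 < a := by nlinarith
    have hca : c ≤ a := by linarith
    refine ⟨c / a, 1 - c / a, by positivity, by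
        have : c / a ≤ 1 := (div_le_one ha0).2 hca
        linarith, by ring, ?_⟩
    have hane : a ≠ 0 := ne_of_gt ha0
    have hb1 : b = 1 - a := by linarith
    have hd1 : d = 1 - c := by linarith
    rw [hb1, hd1]
    match_scalars <;> (field_simp; try ring)

lemma affEquiv_image_convexHull (e : (ℝ × ℝ) ≃ᵃ[ℝ] (ℝ × ℝ)) (S : Set (ℝ × ℝ)) :
    e '' (convexHull ℝ S) = convexHull ℝ (e '' S) := by
  rw [← AffineEquiv.coe_toAffineMap]
  exact AffineMap.image_convexHull e.toAffineMap S


set_option maxHeartbeats 2000000 in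
/-- The quadrangle `Q(αγ, βγ)` admits a dissection into two pieces, one affinely
equivalent to `Q(α,β)` and the other affinely equivalent to the trapezoid `T(γ)`. -/
theorem Qab_dot_Tg (α β γ : ℝ)
    (hα : 0 < α) (hαβ : α < β) (hβ : β < 1) (hγ₀ : 0 < γ) (hγ₁ : γ < 1) :
    ∃ P₁ P₂ : Set (ℝ × ℝ),
      P₁ ∪ P₂ = Qab (α * γ) (β * γ) ∧
      Disjoint (interior P₁) (interior P₂) ∧
      AffineCopy (Qab α β) P₁ ∧ AffineCopy (Tg γ) P₂ := by
  have hα1 : (0:ℝ) < 1 - α := by linarith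
  have hβ0 : (0:ℝ) < β := lt_trans hα hαβ
  have hu : (0:ℝ) < 1 - α * γ := by nlinarith
  have hw : (0:ℝ) < 1 - β * γ := by nlinarith
  have hq : (0:ℝ) < 1 - γ := by linarith
  have hbgg : β * γ ≤ γ := by nlinarith
  have hagg : α * γ ≤ γ := by nlinarith
  have hba : (0:ℝ) < β - α := by linarith
  set d2 : ℝ := 1 - α * γ * (1 - β * γ) / ((1 - α * γ) * (β * γ)) with hd2def
  have hune : (1 : ℝ) - α * γ ≠ 0 := ne_of_gt hu
  have hd2 : d2 = (β - α) / ((1 - α * γ) * β) := by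
    rw [hd2def]; field_simp; ring
  have hd2pos : 0 < d2 := by rw [hd2]; positivity
  have hune' : (1 : ℝ) - γ * α ≠ 0 := by rw [mul_comm]; exact hune
  have hw' : (1 : ℝ) - γ * β ≠ 0 := by rw [mul_comm]; exact ne_of_gt hw
  set c2 : ℝ := 1 - (1 - β * γ) / (1 - α * γ) with hc2def
  have hkey : c2 = β * γ * d2 := by
    rw [hc2def, hd2]; field_simp; ring
  have hc2nn : 0 ≤ c2 := by rw [hkey]; positivity
  set A : ℝ × ℝ := (0, 0) with hA
  set Bp : ℝ × ℝ := (1 - α * γ, 0) with hB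
  set Cp : ℝ × ℝ := (1 - β * γ, c2) with hC
  set Dp : ℝ × ℝ := (0, d2) with hD
  set Qp : ℝ × ℝ := (1 - γ, 0) with hQ
  set Pp : ℝ × ℝ := (1 - γ, γ * d2) with hP
  have hQab : Qab (α * γ) (β * γ) = convexHull ℝ {A, Bp, Cp, Dp} := by
    rw [hA, hB, hC, hD, hc2def, hd2def]; rfl
  have hQpseg : Qp ∈ segment ℝ A Bp := by
    refine ⟨1 - (1 - γ) / (1 - α * γ), (1 - γ) / (1 - α * γ), ?_, by positivity, by ring, ?_⟩
    · have h1 : (1 - γ) / (1 - α * γ) ≤ 1 := by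
        rw [div_le_one hu]; linarith
      linarith
    · rw [hA, hB, hQ, Prod.ext_iff]
      constructor
      · simp [smul_eq_mul]; field_simp
      · simp
  have hPpseg : Pp ∈ segment ℝ Dp Cp := by
    refine ⟨1 - (1 - γ) / (1 - β * γ), (1 - γ) / (1 - β * γ), ?_, by positivity, by ring, ?_⟩
    · have h1 : (1 - γ) / (1 - β * γ) ≤ 1 := by
        rw [div_le_one hw]; linarith
      linarith
    · rw [hD, hC, hP, hkey, Prod.ext_iff]
      constructor
      · simp [smul_eq_mul]; field_simp
      · simp [smul_eq_mul]; field_simp; ring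
  refine ⟨convexHull ℝ {Qp, Bp, Cp, Pp}, convexHull ℝ {A, Dp, Pp, Qp}, ?_, ?_, ?_, ?_⟩
  · -- union is the big quadrangle
    apply Subset.antisymm
    · rw [hQab]
      have hsub := subset_convexHull ℝ ({A, Bp, Cp, Dp} : Set (ℝ × ℝ))
      have hconv := convex_convexHull ℝ ({A, Bp, Cp, Dp} : Set (ℝ × ℝ))
      apply union_subset
      · apply convexHull_min _ hconv
        intro p hp
        simp only [Set.mem_insert_iff, Set.mem_singleton_iff] at hp
        rcases hp with rfl | rfl | rfl | rfl
        · exact hconv.segment_subset (hsub (by simp)) (hsub (by simp)) hQpseg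
        · exact hsub (by simp)
        · exact hsub (by simp)
        · exact hconv.segment_subset (hsub (by simp)) (hsub (by simp)) hPpseg
      · apply convexHull_min _ hconv
        intro p hp
        simp only [Set.mem_insert_iff, Set.mem_singleton_iff] at hp
        rcases hp with rfl | rfl | rfl | rfl
        · exact hsub (by simp)
        · exact hsub (by simp)
        · exact hconv.segment_subset (hsub (by simp)) (hsub (by simp)) hPpseg
        · exact hconv.segment_subset (hsub (by simp)) (hsub (by simp)) hQpseg
    · rw [hQab]
      have hsets : ({A, Bp, Cp, Dp} : Set (ℝ × ℝ)) = {A, Dp} ∪ {Bp, Cp} := by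
        ext p; simp only [Set.mem_insert_iff, Set.mem_singleton_iff, Set.mem_union]; tauto
      rw [hsets, convexHull_union (insert_nonempty _ _) (insert_nonempty _ _),
        convexHull_pair, convexHull_pair]
      intro x hx
      rw [mem_convexJoin] at hx
      obtain ⟨z, hz, w, hw, hxzw⟩ := hx
      obtain ⟨u1, u2, hu1, hu2, hus, hzeq⟩ := hz
      obtain ⟨s1, s2, hs1, hs2, hss, hweq⟩ := hw
      have hz1 : z.1 = 0 := by rw [← hzeq, hA, hD]; simp
      have hz2 : z.2 = u2 * d2 := by rw [← hzeq, hA, hD]; simp [smul_eq_mul]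
      have hw1 : w.1 = s1 * (1 - α * γ) + s2 * (1 - β * γ) := by
        rw [← hweq, hB, hC]; simp [smul_eq_mul]
      have hw2 : w.2 = s2 * c2 := by rw [← hweq, hB, hC]; simp [smul_eq_mul]
      have hw1q : 1 - γ ≤ w.1 := by rw [hw1]; nlinarith
      have hw1pos : 0 < w.1 := lt_of_lt_of_le hq hw1q
      set r : ℝ := (1 - γ) / w.1 with hr
      have hr0 : 0 ≤ r := by positivity
      have hr1 : r ≤ 1 := by rw [hr, div_le_one hw1pos]; exact hw1q
      set m : ℝ × ℝ := (1 - r) • z + r • w with hm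
      have hmseg : m ∈ segment ℝ z w := ⟨1 - r, r, by linarith, hr0, by ring, rfl⟩
      have hm1 : m.1 = 1 - γ := by
        rw [hm]; simp only [Prod.fst_add, Prod.smul_fst, smul_eq_mul]
        rw [hz1, hr]; field_simp; ring
      have hm2eq : m.2 = (1 - r) * z.2 + r * w.2 := by
        rw [hm]; simp [smul_eq_mul]
      have hm2nn : 0 ≤ m.2 := by
        rw [hm2eq, hz2, hw2]
        have h1 : 0 ≤ u2 * d2 := by positivity
        have h2 : 0 ≤ s2 * c2 := mul_nonneg hs2 hc2nn
        nlinarith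
      have hzl : z.2 + d2 * z.1 ≤ d2 := by
        rw [hz1, hz2]; nlinarith
      have hwl : w.2 + d2 * w.1 ≤ d2 := by
        rw [hw1, hw2, hkey]
        have h1 : 0 ≤ s1 * (d2 * (α * γ)) := by positivity
        nlinarith
      have hml : m.2 + d2 * m.1 ≤ d2 := by
        have hm1eq : m.1 = (1 - r) * z.1 + r * w.1 := by
          rw [hm]; simp [smul_eq_mul]
        rw [hm2eq, hm1eq]
        nlinarith
      have hm2le : m.2 ≤ γ * d2 := by
        rw [hm1] at hml; nlinarith
      have hmQP : m ∈ segment ℝ Qp Pp := by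
        refine ⟨1 - m.2 / (γ * d2), m.2 / (γ * d2), ?_, by positivity, by ring, ?_⟩
        · have h1 : m.2 / (γ * d2) ≤ 1 := by
            rw [div_le_one (by positivity)]; exact hm2le
          linarith
        · rw [hQ, hP, Prod.ext_iff]
          constructor
          · simp only [Prod.fst_add, Prod.smul_fst, smul_eq_mul]
            rw [← hm1]; ring
          · simp only [Prod.snd_add, Prod.smul_snd, smul_eq_mul]
            field_simp; ring
      have pairsub : ∀ (p₁ p₂ : ℝ × ℝ) (S : Set (ℝ × ℝ)), p₁ ∈ S → p₂ ∈ S →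
          segment ℝ p₁ p₂ ⊆ convexHull ℝ S := fun p₁ p₂ S h1 h2 =>
        (convex_convexHull ℝ S).segment_subset (subset_convexHull ℝ S h1)
          (subset_convexHull ℝ S h2)
      rcases seg_split_s8 hmseg hxzw with hxl | hxr
      · right
        have hzmem : z ∈ convexHull ℝ ({A, Dp, Pp, Qp} : Set (ℝ × ℝ)) := by
          rw [← hzeq]
          exact (convex_convexHull ℝ _) (subset_convexHull ℝ _ (by simp))
            (subset_convexHull ℝ _ (by simp)) hu1 hu2 hus
        have hmmem : m ∈ convexHull ℝ ({A, Dp, Pp, Qp} : Set (ℝ × ℝ)) :=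
          pairsub Qp Pp _ (by simp) (by simp) hmQP
        exact (convex_convexHull ℝ _).segment_subset hzmem hmmem hxl
      · left
        have hmmem : m ∈ convexHull ℝ ({Qp, Bp, Cp, Pp} : Set (ℝ × ℝ)) :=
          pairsub Qp Pp _ (by simp) (by simp) hmQP
        have hwmem : w ∈ convexHull ℝ ({Qp, Bp, Cp, Pp} : Set (ℝ × ℝ)) := by
          rw [← hweq]
          exact (convex_convexHull ℝ _) (subset_convexHull ℝ _ (by simp))
            (subset_convexHull ℝ _ (by simp)) hs1 hs2 hss
        exact (convex_convexHull ℝ _).segment_subset hmmem hwmem hxr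
  · -- disjoint interiors
    have hP1sub : convexHull ℝ ({Qp, Bp, Cp, Pp} : Set (ℝ × ℝ)) ⊆ {p : ℝ × ℝ | 1 - γ ≤ p.1} := by
      apply convexHull_min
      · intro p hp
        simp only [Set.mem_insert_iff, Set.mem_singleton_iff] at hp
        rcases hp with rfl | rfl | rfl | rfl
        · rw [hQ]; show (1:ℝ) - γ ≤ 1 - γ; exact le_refl _
        · rw [hB]; show (1:ℝ) - γ ≤ 1 - α * γ; linarith
        · rw [hC]; show (1:ℝ) - γ ≤ 1 - β * γ; linarith
        · rw [hP]; show (1:ℝ) - γ ≤ 1 - γ; exact le_refl _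
      · exact (convex_Ici (1 - γ)).linear_preimage (LinearMap.fst ℝ ℝ ℝ)
    have hP2sub : convexHull ℝ ({A, Dp, Pp, Qp} : Set (ℝ × ℝ)) ⊆ {p : ℝ × ℝ | p.1 ≤ 1 - γ} := by
      apply convexHull_min
      · intro p hp
        simp only [Set.mem_insert_iff, Set.mem_singleton_iff] at hp
        rcases hp with rfl | rfl | rfl | rfl
        · rw [hA]; show (0:ℝ) ≤ 1 - γ; linarith
        · rw [hD]; show (0:ℝ) ≤ 1 - γ; linarith
        · rw [hP]; show (1:ℝ) - γ ≤ 1 - γ; exact le_refl _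
        · rw [hQ]; show (1:ℝ) - γ ≤ 1 - γ; exact le_refl _
      · exact (convex_Iic (1 - γ)).linear_preimage (LinearMap.fst ℝ ℝ ℝ)
    have hint : interior {p : ℝ × ℝ | p.1 ≤ 1 - γ} = {p : ℝ × ℝ | p.1 < 1 - γ} := by
      have h1 : {p : ℝ × ℝ | p.1 ≤ 1 - γ} = Prod.fst ⁻¹' Iic (1 - γ) := rfl
      rw [h1, ← isOpenMap_fst.preimage_interior_eq_interior_preimage continuous_fst,
        interior_Iic]
      rfl
    rw [Set.disjoint_left]
    intro p hp1 hp2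
    have h1 : 1 - γ ≤ p.1 := hP1sub (interior_subset hp1)
    have h2 : p.1 < 1 - γ := by
      have h3 := interior_mono hP2sub hp2
      rw [hint] at h3; exact h3
    linarith
  · -- AffineCopy (Qab α β)
    set k : ℝ := γ * (1 - α) / (1 - α * γ) with hk
    have hkpos : 0 < k := by rw [hk]; positivity
    have hdet : γ * k - 0 * 0 ≠ 0 :=
      ne_of_gt (by nlinarith [mul_pos hγ₀ hkpos] : (0:ℝ) < γ * k - 0 * 0)
    obtain ⟨φ, hφ⟩ : ∃ φ : (ℝ × ℝ) ≃ᵃ[ℝ] (ℝ × ℝ),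
        ∀ v : ℝ × ℝ, φ v = (γ * v.1 + (1 - γ), k * v.2) := by
      refine ⟨(linEqv2 γ 0 0 k hdet).toAffineEquiv.trans
        (AffineEquiv.constVAdd ℝ (ℝ × ℝ) ((1 - γ, 0) : ℝ × ℝ)), fun v => ?_⟩
      simp [AffineEquiv.trans_apply, linEqv2_apply, Prod.ext_iff]
      ring
    refine ⟨φ, ?_⟩
    have h1 : φ ((0:ℝ), (0:ℝ)) = Qp := by
      rw [hφ, hQ, Prod.mk.injEq]; norm_num
    have h2 : φ ((1 - α : ℝ), (0:ℝ)) = Bp := by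
      rw [hφ, hB, Prod.mk.injEq]; constructor
      · show γ * (1 - α) + (1 - γ) = 1 - α * γ; ring
      · show k * 0 = 0; ring
    have h3 : φ ((1 - β : ℝ), (1 - (1 - β) / (1 - α) : ℝ)) = Cp := by
      rw [hφ, hC, hc2def, Prod.mk.injEq]; constructor
      · show γ * (1 - β) + (1 - γ) = 1 - β * γ; ring
      · show k * (1 - (1 - β) / (1 - α)) = 1 - (1 - β * γ) / (1 - α * γ)
        rw [hk]; field_simp; ring
    have h4 : φ ((0:ℝ), (1 - α * (1 - β) / ((1 - α) * β) : ℝ)) = Pp := by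
      rw [hφ, hP, hd2, Prod.mk.injEq]; constructor
      · show γ * 0 + (1 - γ) = 1 - γ; ring
      · show k * (1 - α * (1 - β) / ((1 - α) * β)) = γ * ((β - α) / ((1 - α * γ) * β))
        rw [hk]; field_simp; ring
    rw [show Qab α β = convexHull ℝ {((0:ℝ), (0:ℝ)), (1 - α, 0),
        (1 - β, 1 - (1 - β) / (1 - α)), (0, 1 - α * (1 - β) / ((1 - α) * β))} from rfl]
    rw [affEquiv_image_convexHull, image_insert_eq, image_insert_eq, image_insert_eq,
      image_singleton, h1, h2, h3, h4]
  · -- AffineCopy (Tg γ)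
    have hdet2 : (0:ℝ) * 0 - (1 - γ) * d2 ≠ 0 := by
      have h0 := mul_pos hq hd2pos
      intro hcon; nlinarith
    obtain ⟨ψ, hψ⟩ : ∃ ψ : (ℝ × ℝ) ≃ᵃ[ℝ] (ℝ × ℝ),
        ∀ v : ℝ × ℝ, ψ v = ((1 - γ) * v.2, d2 * v.1) := by
      refine ⟨(linEqv2 0 (1 - γ) d2 0 hdet2).toAffineEquiv, fun v => ?_⟩
      simp [linEqv2_apply, Prod.ext_iff]
    refine ⟨ψ, ?_⟩
    have g1 : ψ ((0:ℝ), (0:ℝ)) = A := by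
      rw [hψ, hA, Prod.mk.injEq]; norm_num
    have g2 : ψ ((1:ℝ), (0:ℝ)) = Dp := by
      rw [hψ, hD, Prod.mk.injEq]; constructor
      · show (1 - γ) * 0 = 0; ring
      · show d2 * 1 = d2; ring
    have g3 : ψ (γ, (1:ℝ)) = Pp := by
      rw [hψ, hP, Prod.mk.injEq]; constructor
      · show (1 - γ) * 1 = 1 - γ; ring
      · show d2 * γ = γ * d2; ring
    have g4 : ψ ((0:ℝ), (1:ℝ)) = Qp := by
      rw [hψ, hQ, Prod.mk.injEq]; constructor
      · show (1 - γ) * 1 = 1 - γ; ring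
      · show d2 * 0 = 0; ring
    rw [show Tg γ = convexHull ℝ {((0:ℝ), (0:ℝ)), (1, 0), (γ, 1), (0, 1)} from rfl]
    rw [affEquiv_image_convexHull, image_insert_eq, image_insert_eq, image_insert_eq,
      image_singleton, g1, g2, g3, g4]
end

section
/- Let 0 < γ₁ < 1 and 0 < γ₂ < 1 be real numbers. Then: (a) the trapezoid T(γ₁γ₂) admits a dissection into two pieces, one affinely equivalent to T(γ₁) and the other affinely equivalent to T(γ₂); (b) for every γ with min{γ₁, γ₂} < γ < 1, the trapezoid T(γ) admits a dissection into two pieces, one affinely equivalent to T(γ₁) and the other affinely equivalent to T(γ₂); (c) the unit square [0,1]² admits a dissection into two pieces, one affinely equivalent to T(γ₁) and the other affinely equivalent to T(γ₂). -/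
open Set

/- ### Auxiliary material -/

lemma trap_hull (c d p P q Q : ℝ) (hcd : c < d) (hpP : p ≤ P) (hqQ : q ≤ Q) :
    convexHull ℝ {((p : ℝ), c), (P, c), (Q, d), (q, d)} =
      {z : ℝ × ℝ | c ≤ z.2 ∧ z.2 ≤ d ∧ (d - z.2)*p + (z.2 - c)*q ≤ (d-c)*z.1 ∧
        (d-c)*z.1 ≤ (d - z.2)*P + (z.2 - c)*Q} := by
  have hdc : (0:ℝ) < d - c := by linarith
  apply Subset.antisymm
  · apply convexHull_min
    · rintro z hz
      simp only [mem_insert_iff, mem_singleton_iff] at hz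
      rcases hz with h | h | h | h <;> subst h <;>
        refine ⟨by nlinarith, by nlinarith, by nlinarith, by nlinarith⟩
    · rintro z hz w hw a b ha hb hab
      have hb1 : b = 1 - a := by linarith
      subst hb1
      simp only [mem_setOf_eq] at hz hw ⊢
      obtain ⟨hz1, hz2, hz3, hz4⟩ := hz
      obtain ⟨hw1, hw2, hw3, hw4⟩ := hw
      have ha1 : a ≤ 1 := by linarith
      have e1 : (a • z + (1-a) • w).1 = a * z.1 + (1-a) * w.1 := rfl
      have e2 : (a • z + (1-a) • w).2 = a * z.2 + (1-a) * w.2 := rfl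
      rw [e1, e2]
      refine ⟨by nlinarith, by nlinarith, ?_, ?_⟩
      · nlinarith [mul_le_mul_of_nonneg_left hz3 ha,
          mul_le_mul_of_nonneg_left hw3 (by linarith : (0:ℝ) ≤ 1 - a)]
      · nlinarith [mul_le_mul_of_nonneg_left hz4 ha,
          mul_le_mul_of_nonneg_left hw4 (by linarith : (0:ℝ) ≤ 1 - a)]
  · rintro ⟨x, y⟩ ⟨hy1, hy2, hx1, hx2⟩
    simp only at hy1 hy2 hx1 hx2
    set S : Set (ℝ×ℝ) := {((p : ℝ), c), (P, c), (Q, d), (q, d)} with hS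
    set μ : ℝ := (y - c)/(d - c) with hμdef
    have hμ0 : 0 ≤ μ := div_nonneg (by linarith) hdc.le
    have hμ1 : μ ≤ 1 := by rw [hμdef, div_le_one hdc]; linarith
    have hμy : (1-μ)*c + μ*d = y := by rw [hμdef]; field_simp; ring
    set L : ℝ := (1-μ)*p + μ*q with hLdef
    set R : ℝ := (1-μ)*P + μ*Q with hRdef
    have hLeq : (d-c)*L = (d - y)*p + (y - c)*q := by
      rw [hLdef, hμdef]; field_simp; try ring
    have hReq : (d-c)*R = (d - y)*P + (y - c)*Q := by
      rw [hRdef, hμdef]; field_simp; try ring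
    have hLx : L ≤ x := by nlinarith
    have hxR : x ≤ R := by nlinarith
    have hLmem : ((L, y) : ℝ×ℝ) ∈ convexHull ℝ S := by
      have h1 : ((p, c) : ℝ×ℝ) ∈ convexHull ℝ S := subset_convexHull ℝ _ (by simp [hS])
      have h2 : ((q, d) : ℝ×ℝ) ∈ convexHull ℝ S := subset_convexHull ℝ _ (by simp [hS])
      have hmem := (convex_convexHull ℝ S) h1 h2
        (by linarith : (0:ℝ) ≤ 1 - μ) hμ0 (by ring)
      have heq : ((L, y) : ℝ×ℝ) = (1-μ) • ((p, c) : ℝ×ℝ) + μ • ((q, d) : ℝ×ℝ) := by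
        show ((L, y) : ℝ×ℝ) = ((1-μ)*p + μ*q, (1-μ)*c + μ*d)
        rw [hμy]
      rw [heq]; exact hmem
    have hRmem : ((R, y) : ℝ×ℝ) ∈ convexHull ℝ S := by
      have h1 : ((P, c) : ℝ×ℝ) ∈ convexHull ℝ S := subset_convexHull ℝ _ (by simp [hS])
      have h2 : ((Q, d) : ℝ×ℝ) ∈ convexHull ℝ S := subset_convexHull ℝ _ (by simp [hS])
      have hmem := (convex_convexHull ℝ S) h1 h2
        (by linarith : (0:ℝ) ≤ 1 - μ) hμ0 (by ring)
      have heq : ((R, y) : ℝ×ℝ) = (1-μ) • ((P, c) : ℝ×ℝ) + μ • ((Q, d) : ℝ×ℝ) := by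
        show ((R, y) : ℝ×ℝ) = ((1-μ)*P + μ*Q, (1-μ)*c + μ*d)
        rw [hμy]
      rw [heq]; exact hmem
    by_cases hRL : R ≤ L
    · have hx : x = L := le_antisymm (by linarith) hLx
      subst hx
      exact hLmem
    · set θ : ℝ := (x - L)/(R - L) with hθdef
      have hRL' : (0:ℝ) < R - L := by push_neg at hRL; linarith
      have hθ0 : 0 ≤ θ := div_nonneg (by linarith) hRL'.le
      have hθ1 : θ ≤ 1 := by rw [hθdef, div_le_one hRL']; linarith
      have hmem := (convex_convexHull ℝ S) hLmem hRmem
        (by linarith : (0:ℝ) ≤ 1 - θ) hθ0 (by ring)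
      have hxe : (1-θ)*L + θ*R = x := by
        rw [hθdef]; field_simp; ring
      have heq : ((x, y) : ℝ×ℝ) = (1-θ) • ((L, y) : ℝ×ℝ) + θ • ((R, y) : ℝ×ℝ) := by
        show ((x, y) : ℝ×ℝ) = ((1-θ)*L + θ*R, (1-θ)*y + θ*y)
        rw [hxe]
        have : (1-θ)*y + θ*y = y := by ring
        rw [this]
      rw [heq]; exact hmem

noncomputable def lmap (a b c d : ℝ) : (ℝ×ℝ) →ₗ[ℝ] (ℝ×ℝ) where
  toFun := fun z => (a*z.1 + b*z.2, c*z.1 + d*z.2)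
  map_add' := by intro z w; simp [Prod.ext_iff]; constructor <;> ring
  map_smul' := by intro m z; simp [Prod.ext_iff, smul_eq_mul]; constructor <;> ring

noncomputable def lequiv (u v : ℝ×ℝ) (h : u.1*v.2 - u.2*v.1 ≠ 0) : (ℝ×ℝ) ≃ₗ[ℝ] (ℝ×ℝ) :=
  LinearEquiv.ofLinear (lmap u.1 v.1 u.2 v.2)
    (lmap (v.2/(u.1*v.2 - u.2*v.1)) (-v.1/(u.1*v.2 - u.2*v.1))
      (-u.2/(u.1*v.2 - u.2*v.1)) (u.1/(u.1*v.2 - u.2*v.1)))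
    (by ext z <;> simp [lmap] <;> field_simp <;> ring)
    (by have h' : v.2 * u.1 - u.2 * v.1 ≠ 0 := fun h0 => h (by linarith)
        ext z <;> simp [lmap] <;> field_simp <;> ring)

noncomputable def amap (a u v : ℝ×ℝ) (h : u.1*v.2 - u.2*v.1 ≠ 0) : (ℝ×ℝ) ≃ᵃ[ℝ] (ℝ×ℝ) :=
  ((lequiv u v h).toAffineEquiv).trans (AffineEquiv.constVAdd ℝ (ℝ×ℝ) a)

lemma affineCopy_hull (r : ℝ) (a u v : ℝ×ℝ) (h : u.1*v.2 - u.2*v.1 ≠ 0) :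
    AffineCopy (Tg r) (convexHull ℝ {a, a + u, a + r • u + v, a + v}) := by
  refine ⟨amap a u v h, ?_⟩
  rw [show (amap a u v h) '' Tg r
      = convexHull ℝ (((amap a u v h : (ℝ×ℝ) →ᵃ[ℝ] (ℝ×ℝ))) ''
        {((0 : ℝ), (0 : ℝ)), (1, 0), (r, 1), (0, 1)}) from by
    rw [Tg, ← AffineMap.image_convexHull]; rfl]
  congr 1
  rw [Set.image_insert_eq, Set.image_insert_eq, Set.image_insert_eq, Set.image_singleton]
  have key : ∀ z : ℝ×ℝ, (amap a u v h : (ℝ×ℝ) →ᵃ[ℝ] (ℝ×ℝ)) z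
      = a + (u.1*z.1 + v.1*z.2, u.2*z.1 + v.2*z.2) := fun z => rfl
  rw [key, key, key, key]
  have e0 : a + (u.1*(0:ℝ) + v.1*(0:ℝ), u.2*(0:ℝ) + v.2*(0:ℝ)) = a := by simp
  have e1 : a + (u.1*(1:ℝ) + v.1*(0:ℝ), u.2*(1:ℝ) + v.2*(0:ℝ)) = a + u := by simp
  have e2 : a + (u.1*r + v.1*(1:ℝ), u.2*r + v.2*(1:ℝ)) = a + r • u + v := by
    simp [Prod.ext_iff]
    constructor <;> ring
  have e3 : a + (u.1*(0:ℝ) + v.1*(1:ℝ), u.2*(0:ℝ) + v.2*(1:ℝ)) = a + v := by simp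
  rw [e0, e1, e2, e3]

lemma line_interior_empty (a b k : ℝ) (hab : a ≠ 0 ∨ b ≠ 0) :
    interior {z : ℝ×ℝ | a*z.1 + b*z.2 = k} = ∅ := by
  ext z
  simp only [mem_empty_iff_false, iff_false]
  intro hz
  have hz0 : a*z.1 + b*z.2 = k := by have := interior_subset hz; simpa using this
  rw [mem_interior_iff_mem_nhds, Metric.mem_nhds_iff] at hz
  obtain ⟨ε, hε, hball⟩ := hz
  have hM : (0:ℝ) < max |a| |b| + 1 := by positivity
  set δ : ℝ := ε / (2 * (max |a| |b| + 1)) with hδ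
  have hδ0 : 0 < δ := by positivity
  have hmem : z + δ • ((a, b) : ℝ×ℝ) ∈ Metric.ball z ε := by
    rw [Metric.mem_ball]
    have : dist (z + δ • ((a, b) : ℝ×ℝ)) z = ‖δ • ((a, b) : ℝ×ℝ)‖ := dist_self_add_left _ z
    rw [this, norm_smul, Prod.norm_def]
    simp only [Real.norm_eq_abs, abs_of_pos hδ0]
    have h1 : max |a| |b| ≤ max |a| |b| + 1 := by linarith
    calc δ * max ‖a‖ ‖b‖ ≤ δ * (max |a| |b| + 1) := by
          apply mul_le_mul_of_nonneg_left _ hδ0.le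
          simp only [Real.norm_eq_abs]; linarith
      _ = ε / 2 := by rw [hδ]; field_simp
      _ < ε := by linarith
  have hline := hball hmem
  simp only [mem_setOf_eq] at hline
  have hcoord : (z + δ • ((a, b) : ℝ×ℝ)).1 = z.1 + δ*a ∧
      (z + δ • ((a, b) : ℝ×ℝ)).2 = z.2 + δ*b := ⟨rfl, rfl⟩
  rw [hcoord.1, hcoord.2] at hline
  have hzero : δ * (a^2 + b^2) = 0 := by nlinarith
  have habs : a^2 + b^2 = 0 := by
    rcases mul_eq_zero.mp hzero with h | h
    · exact absurd h hδ0.ne'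
    · exact h
  have ha0 : a = 0 := by nlinarith [sq_nonneg a, sq_nonneg b]
  have hb0 : b = 0 := by nlinarith [sq_nonneg a, sq_nonneg b]
  rcases hab with h | h <;> [exact h ha0; exact h hb0]

lemma slant_split (γ₁ γ₂ γ : ℝ)
    (h₁ : 0 < γ₁) (h₂ : γ₁ < 1) (h₃ : 0 < γ₂) (h₄ : γ₂ < 1) (h5 : γ₁ < γ) (h6 : γ ≤ 1) :
    ∃ P₁ P₂ : Set (ℝ × ℝ),
      P₁ ∪ P₂ = convexHull ℝ {((0 : ℝ), (0 : ℝ)), (1, 0), (γ, 1), (0, 1)} ∧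
      Disjoint (interior P₁) (interior P₂) ∧
      AffineCopy (Tg γ₁) P₁ ∧ AffineCopy (Tg γ₂) P₂ := by
  have hγ0 : 0 < γ := lt_trans h₁ h5
  have hd : (0:ℝ) < 1 - γ₁*γ₂ := by nlinarith
  obtain ⟨p, hpdef⟩ : ∃ p : ℝ, p = (1-γ₂*γ)/(1-γ₁*γ₂) := ⟨_, rfl⟩
  obtain ⟨q, hqdef⟩ : ∃ q : ℝ, q = γ₁*p := ⟨_, rfl⟩
  have hpe : p*(1-γ₁*γ₂) = 1-γ₂*γ := by rw [hpdef]; exact div_mul_cancel₀ _ hd.ne'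
  have hp0 : 0 < p := by
    rw [hpdef]; apply div_pos _ hd; nlinarith
  have hp1 : p < 1 := by nlinarith [mul_pos h₃ (sub_pos.mpr h5)]
  have hq0 : 0 < q := by rw [hqdef]; positivity
  have hkey : γ₂*(γ - q) = 1 - p := by rw [hqdef]; linarith [hpe]
  have hqγ : q < γ := by nlinarith
  refine ⟨convexHull ℝ {((0:ℝ),(0:ℝ)), (p,0), (q,1), (0,1)},
    convexHull ℝ {((p:ℝ),(0:ℝ)), (1,0), (γ,1), (q,1)}, ?_, ?_, ?_, ?_⟩
  · rw [trap_hull 0 1 0 p 0 q one_pos hp0.le hq0.le,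
      trap_hull 0 1 p 1 q γ one_pos hp1.le hqγ.le,
      trap_hull 0 1 0 1 0 γ one_pos zero_le_one hγ0.le]
    ext z
    simp only [mem_union, mem_setOf_eq]
    constructor
    · rintro (⟨hy1, hy2, hx1, hx2⟩ | ⟨hy1, hy2, hx1, hx2⟩)
      · refine ⟨hy1, hy2, by nlinarith, ?_⟩
        nlinarith [mul_nonneg (by linarith : (0:ℝ) ≤ 1 - z.2) (by linarith : (0:ℝ) ≤ 1 - p),
          mul_nonneg hy1 (by linarith : (0:ℝ) ≤ γ - q)]
      · refine ⟨hy1, hy2, ?_, by nlinarith⟩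
        nlinarith [mul_nonneg (by linarith : (0:ℝ) ≤ 1 - z.2) hp0.le,
          mul_nonneg hy1 hq0.le]
    · rintro ⟨hy1, hy2, hx1, hx2⟩
      by_cases hc : z.1 ≤ (1 - z.2)*p + (z.2 - 0)*q
      · exact Or.inl ⟨hy1, hy2, by nlinarith, by nlinarith⟩
      · push_neg at hc
        exact Or.inr ⟨hy1, hy2, by nlinarith, by nlinarith⟩
  · rw [Set.disjoint_iff_inter_eq_empty, ← interior_inter]
    apply eq_empty_of_subset_empty
    have hsub : convexHull ℝ {((0:ℝ),(0:ℝ)), (p,0), (q,1), (0,1)} ∩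
        convexHull ℝ {((p:ℝ),(0:ℝ)), (1,0), (γ,1), (q,1)} ⊆
        {z : ℝ×ℝ | 1*z.1 + (p-q)*z.2 = p} := by
      rw [trap_hull 0 1 0 p 0 q one_pos hp0.le hq0.le,
        trap_hull 0 1 p 1 q γ one_pos hp1.le hqγ.le]
      rintro z ⟨⟨_, _, _, hA⟩, ⟨_, _, hB, _⟩⟩
      simp only [mem_setOf_eq]
      nlinarith
    calc interior _ ⊆ interior {z : ℝ×ℝ | 1*z.1 + (p-q)*z.2 = p} := interior_mono hsub
      _ = ∅ := line_interior_empty 1 (p-q) p (Or.inl one_ne_zero)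
  · have hdet : ((p:ℝ),(0:ℝ)).1*((0:ℝ),(1:ℝ)).2 - ((p:ℝ),(0:ℝ)).2*((0:ℝ),(1:ℝ)).1 ≠ 0 := by
      simp; exact hp0.ne'
    obtain ⟨φ, hφ⟩ := affineCopy_hull γ₁ ((0:ℝ),(0:ℝ)) ((p:ℝ),(0:ℝ)) ((0:ℝ),(1:ℝ)) hdet
    refine ⟨φ, ?_⟩
    rw [hφ]
    apply congrArg
    have ea : ((0:ℝ),(0:ℝ)) + ((p:ℝ),(0:ℝ)) = ((p:ℝ),(0:ℝ)) := by simp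
    have eb : ((0:ℝ),(0:ℝ)) + γ₁ • ((p:ℝ),(0:ℝ)) + ((0:ℝ),(1:ℝ)) = ((q:ℝ),(1:ℝ)) := by
      simp [Prod.ext_iff, hqdef]
    have ec : ((0:ℝ),(0:ℝ)) + ((0:ℝ),(1:ℝ)) = ((0:ℝ),(1:ℝ)) := by simp
    rw [ea, eb, ec]
  · have hdet : ((q-γ:ℝ),(0:ℝ)).1*((1-γ:ℝ),(-1:ℝ)).2 - ((q-γ:ℝ),(0:ℝ)).2*((1-γ:ℝ),(-1:ℝ)).1 ≠ 0 := by
      simp; intro hcon; linarith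
    obtain ⟨φ, hφ⟩ := affineCopy_hull γ₂ ((γ:ℝ),(1:ℝ)) ((q-γ:ℝ),(0:ℝ)) ((1-γ:ℝ),(-1:ℝ)) hdet
    refine ⟨φ, ?_⟩
    rw [hφ]
    apply congrArg
    have ea : ((γ:ℝ),(1:ℝ)) + ((q-γ:ℝ),(0:ℝ)) = ((q:ℝ),(1:ℝ)) := by
      simp [Prod.ext_iff]
    have eb : ((γ:ℝ),(1:ℝ)) + γ₂ • ((q-γ:ℝ),(0:ℝ)) + ((1-γ:ℝ),(-1:ℝ)) = ((p:ℝ),(0:ℝ)) := by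
      have h2c : (1:ℝ) + γ₂ * 0 + -1 = 0 := by ring
      have h1c : γ + γ₂ * (q-γ) + (1-γ) = p := by linarith [hkey]
      simp only [Prod.mk_add_mk, Prod.smul_mk, smul_eq_mul, h1c, h2c]
    have ec : ((γ:ℝ),(1:ℝ)) + ((1-γ:ℝ),(-1:ℝ)) = ((1:ℝ),(0:ℝ)) := by
      simp [Prod.ext_iff]
    rw [ea, eb, ec]
    ext z
    simp only [mem_insert_iff, mem_singleton_iff]
    tauto

/-- Combining `T(γ₁)` with `T(γ₂)`: (a) `T(γ₁γ₂)` splits into an affine copy of `T(γ₁)`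
and an affine copy of `T(γ₂)`; (b) so does `T(γ)` for every `min{γ₁,γ₂} < γ < 1`;
(c) so does the unit square `[0,1]²`. -/
theorem Tg_combinations (γ₁ γ₂ : ℝ)
    (h₁ : 0 < γ₁) (h₂ : γ₁ < 1) (h₃ : 0 < γ₂) (h₄ : γ₂ < 1) :
    (∃ P₁ P₂ : Set (ℝ × ℝ),
      P₁ ∪ P₂ = Tg (γ₁ * γ₂) ∧ Disjoint (interior P₁) (interior P₂) ∧
      AffineCopy (Tg γ₁) P₁ ∧ AffineCopy (Tg γ₂) P₂) ∧
    (∀ γ : ℝ, min γ₁ γ₂ < γ → γ < 1 →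
      ∃ P₁ P₂ : Set (ℝ × ℝ),
        P₁ ∪ P₂ = Tg γ ∧ Disjoint (interior P₁) (interior P₂) ∧
        AffineCopy (Tg γ₁) P₁ ∧ AffineCopy (Tg γ₂) P₂) ∧
    (∃ P₁ P₂ : Set (ℝ × ℝ),
      P₁ ∪ P₂ = Icc ((0 : ℝ), (0 : ℝ)) (1, 1) ∧ Disjoint (interior P₁) (interior P₂) ∧
      AffineCopy (Tg γ₁) P₁ ∧ AffineCopy (Tg γ₂) P₂) := by
  refine ⟨?_, ?_, ?_⟩
  · -- part (a): horizontal cut of T(γ₁γ₂)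
    have hg : (0:ℝ) < γ₁*γ₂ := by positivity
    have hg1 : γ₁*γ₂ < 1 := by nlinarith
    have hd : (0:ℝ) < 1 - γ₁*γ₂ := by linarith
    obtain ⟨t, htdef⟩ : ∃ t : ℝ, t = (1-γ₁)/(1-γ₁*γ₂) := ⟨_, rfl⟩
    have hte : t*(1-γ₁*γ₂) = 1-γ₁ := by rw [htdef]; field_simp
    have ht0 : 0 < t := by rw [htdef]; apply div_pos (by linarith) hd
    have ht1 : t < 1 := by nlinarith
    have ht1' : (0:ℝ) < 1 - t := by linarith
    refine ⟨convexHull ℝ {((0:ℝ),(0:ℝ)), (1,0), (γ₁,t), (0,t)},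
      convexHull ℝ {((0:ℝ),(t:ℝ)), (γ₁,t), (γ₁*γ₂,1), (0,1)}, ?_, ?_, ?_, ?_⟩
    · rw [Tg, trap_hull 0 t 0 1 0 γ₁ ht0 zero_le_one h₁.le,
        trap_hull t 1 0 γ₁ 0 (γ₁*γ₂) ht1 h₁.le hg.le,
        trap_hull 0 1 0 1 0 (γ₁*γ₂) one_pos zero_le_one hg.le]
      have key1 : ∀ y : ℝ, (t - y)*1 + (y - 0)*γ₁ = t*((1-y)*1 + (y-0)*(γ₁*γ₂)) := by
        intro y; linear_combination y * hte
      have key2 : ∀ y : ℝ, (1-y)*γ₁ + (y-t)*(γ₁*γ₂) = (1-t)*((1-y)*1 + (y-0)*(γ₁*γ₂)) := by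
        intro y; linear_combination (1-y) * hte
      ext z
      simp only [mem_union, mem_setOf_eq]
      constructor
      · rintro (⟨hy1, hy2, hx1, hx2⟩ | ⟨hy1, hy2, hx1, hx2⟩)
        · have hz0 : 0 ≤ z.1 := by nlinarith
          have h' : t*z.1 ≤ t*((1-z.2)*1 + (z.2-0)*(γ₁*γ₂)) := by
            rw [← key1 z.2]; linarith
          have := le_of_mul_le_mul_left h' ht0
          exact ⟨hy1, by linarith, by linarith, by linarith⟩
        · have hz0 : 0 ≤ z.1 := by nlinarith
          have h' : (1-t)*z.1 ≤ (1-t)*((1-z.2)*1 + (z.2-0)*(γ₁*γ₂)) := by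
            rw [← key2 z.2]; linarith
          have := le_of_mul_le_mul_left h' ht1'
          exact ⟨by linarith, hy2, by linarith, by linarith⟩
      · rintro ⟨hy1, hy2, hx1, hx2⟩
        have hz0 : 0 ≤ z.1 := by linarith
        have hzb : z.1 ≤ (1-z.2)*1 + (z.2-0)*(γ₁*γ₂) := by linarith
        by_cases hc : z.2 ≤ t
        · left
          refine ⟨hy1, hc, by nlinarith, ?_⟩
          have := mul_le_mul_of_nonneg_left hzb ht0.le
          rw [← key1 z.2] at this
          linarith
        · right
          push_neg at hc
          refine ⟨hc.le, hy2, by nlinarith, ?_⟩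
          have := mul_le_mul_of_nonneg_left hzb ht1'.le
          rw [← key2 z.2] at this
          linarith
    · rw [Set.disjoint_iff_inter_eq_empty, ← interior_inter]
      apply eq_empty_of_subset_empty
      have hsub : convexHull ℝ {((0:ℝ),(0:ℝ)), (1,0), (γ₁,t), (0,t)} ∩
          convexHull ℝ {((0:ℝ),(t:ℝ)), (γ₁,t), (γ₁*γ₂,1), (0,1)} ⊆
          {z : ℝ×ℝ | 0*z.1 + 1*z.2 = t} := by
        rw [trap_hull 0 t 0 1 0 γ₁ ht0 zero_le_one h₁.le,
          trap_hull t 1 0 γ₁ 0 (γ₁*γ₂) ht1 h₁.le hg.le]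
        rintro z ⟨⟨_, hA, _, _⟩, ⟨hB, _, _, _⟩⟩
        simp only [mem_setOf_eq]
        linarith
      calc interior _ ⊆ interior {z : ℝ×ℝ | 0*z.1 + 1*z.2 = t} := interior_mono hsub
        _ = ∅ := line_interior_empty 0 1 t (Or.inr one_ne_zero)
    · have hdet : ((1:ℝ),(0:ℝ)).1*((0:ℝ),(t:ℝ)).2 - ((1:ℝ),(0:ℝ)).2*((0:ℝ),(t:ℝ)).1 ≠ 0 := by
        simp; exact ht0.ne'
      obtain ⟨φ, hφ⟩ := affineCopy_hull γ₁ ((0:ℝ),(0:ℝ)) ((1:ℝ),(0:ℝ)) ((0:ℝ),(t:ℝ)) hdet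
      refine ⟨φ, ?_⟩
      rw [hφ]
      apply congrArg
      have ea : ((0:ℝ),(0:ℝ)) + ((1:ℝ),(0:ℝ)) = ((1:ℝ),(0:ℝ)) := by simp
      have eb : ((0:ℝ),(0:ℝ)) + γ₁ • ((1:ℝ),(0:ℝ)) + ((0:ℝ),(t:ℝ)) = ((γ₁:ℝ),(t:ℝ)) := by
        simp [Prod.ext_iff]
      have ec : ((0:ℝ),(0:ℝ)) + ((0:ℝ),(t:ℝ)) = ((0:ℝ),(t:ℝ)) := by simp
      rw [ea, eb, ec]
    · have hdet : ((γ₁:ℝ),(0:ℝ)).1*((0:ℝ),(1-t:ℝ)).2 - ((γ₁:ℝ),(0:ℝ)).2*((0:ℝ),(1-t:ℝ)).1 ≠ 0 := by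
        simpa using (mul_pos h₁ ht1').ne'
      obtain ⟨φ, hφ⟩ := affineCopy_hull γ₂ ((0:ℝ),(t:ℝ)) ((γ₁:ℝ),(0:ℝ)) ((0:ℝ),(1-t:ℝ)) hdet
      refine ⟨φ, ?_⟩
      rw [hφ]
      apply congrArg
      have ea : ((0:ℝ),(t:ℝ)) + ((γ₁:ℝ),(0:ℝ)) = ((γ₁:ℝ),(t:ℝ)) := by
        simp [Prod.ext_iff]
      have eb : ((0:ℝ),(t:ℝ)) + γ₂ • ((γ₁:ℝ),(0:ℝ)) + ((0:ℝ),(1-t:ℝ)) = ((γ₁*γ₂:ℝ),(1:ℝ)) := by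
        have h1c : (0:ℝ) + γ₂ * γ₁ + 0 = γ₁*γ₂ := by ring
        have h2c : t + γ₂ * 0 + (1-t) = 1 := by ring
        simp only [Prod.mk_add_mk, Prod.smul_mk, smul_eq_mul, h1c, h2c]
      have ec : ((0:ℝ),(t:ℝ)) + ((0:ℝ),(1-t:ℝ)) = ((0:ℝ),(1:ℝ)) := by
        have h2c : t + (1-t) = (1:ℝ) := by ring
        simp only [Prod.mk_add_mk, add_zero, h2c]
      rw [ea, eb, ec]
  · -- part (b)
    intro γ hγmin hγ1
    rcases le_total γ₁ γ₂ with hle | hle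
    · have h5 : γ₁ < γ := by rw [min_eq_left hle] at hγmin; exact hγmin
      obtain ⟨P₁, P₂, hu, hdis, hc1, hc2⟩ := slant_split γ₁ γ₂ γ h₁ h₂ h₃ h₄ h5 hγ1.le
      exact ⟨P₁, P₂, by rw [hu, Tg], hdis, hc1, hc2⟩
    · have h5 : γ₂ < γ := by rw [min_eq_right hle] at hγmin; exact hγmin
      obtain ⟨P₁, P₂, hu, hdis, hc2, hc1⟩ := slant_split γ₂ γ₁ γ h₃ h₄ h₁ h₂ h5 hγ1.le
      exact ⟨P₂, P₁, by rw [union_comm, hu, Tg], hdis.symm, hc1, hc2⟩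
  · -- part (c)
    obtain ⟨P₁, P₂, hu, hdis, hc1, hc2⟩ := slant_split γ₁ γ₂ 1 h₁ h₂ h₃ h₄ h₂ le_rfl
    refine ⟨P₁, P₂, ?_, hdis, hc1, hc2⟩
    rw [hu, trap_hull 0 1 0 1 0 1 one_pos zero_le_one zero_le_one]
    ext z
    simp only [mem_setOf_eq, mem_Icc, Prod.le_def]
    constructor
    · rintro ⟨hy1, hy2, hx1, hx2⟩
      exact ⟨⟨by linarith, hy1⟩, ⟨by nlinarith, hy2⟩⟩
    · rintro ⟨⟨hx0, hy0⟩, ⟨hx1, hy1⟩⟩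
      exact ⟨hy0, hy1, by linarith, by nlinarith⟩
end
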